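/- arXiv:2011.06631 — 4 statements merged into one kernel-verified Lean document; each statement's English description precedes it below -/
import Mathlib

section
/- In an episodic learning process, every policy π has a unique stationary distribution ρ_π satisfying ρ_π = ρ_π M_π, supported on the reachable states S_π. -/
open scoped ENNReal Classical
open Filter Topology

noncomputable section

set_option maxHeartbeats 1000000

def chainOf {σ A : Type} (P : σ → A → σ → ℝ≥0∞) (π : σ → A → ℝ≥0∞) (s s' : σ) : ℝ≥0∞ :=
  ∑' a, π s a * P s a s'

def stepProb {σ : Type} (M : σ → σ → ℝ≥0∞) : ℕ → σ → σ → ℝ≥0∞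
  | 0, s, s' => if s = s' then 1 else 0
  | t + 1, s, s' => ∑' u, stepProb M t s u * M u s'

def epiStep {σ : Type} (M : σ → σ → ℝ≥0∞) (T : Set σ) (s : σ) : ℕ → σ → ℝ≥0∞
  | 0, u => M s u
  | t + 1, u => ∑' v, if v ∈ T then 0 else epiStep M T s t v * M v u

def termHit {σ : Type} (M : σ → σ → ℝ≥0∞) (T : Set σ) (s : σ) (t : ℕ) : ℝ≥0∞ :=
  ∑' u, if u ∈ T then epiStep M T s t u else 0

def meanEpiLen {σ : Type} (M : σ → σ → ℝ≥0∞) (T : Set σ) (s : σ) : ℝ≥0∞ :=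
  ∑' t : ℕ, ((t : ℝ≥0∞) + 1) * termHit M T s t

def TermSet {S A : Type} (P : S → A → S → ℝ≥0∞) (ρ0 : S → ℝ≥0∞) : Set S :=
  {s | ∀ s₀, 0 < ρ0 s₀ → ∀ a a', P s a = P s₀ a'}

def ReachSet {σ : Type} (M : σ → σ → ℝ≥0∞) (ρ0 : σ → ℝ≥0∞) : Set σ :=
  {s | ∃ t : ℕ, 0 < ∑' s₀, ρ0 s₀ * stepProb M t s₀ s}

structure ELP (S A : Type) where
  P : S → A → S → ℝ≥0∞
  R : S → ℝ
  ρ0 : S → ℝ≥0∞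
  P_sum : ∀ s a, ∑' s', P s a s' = 1
  ρ0_sum : ∑' s, ρ0 s = 1
  homog : ∀ s s', 0 < ρ0 s → 0 < ρ0 s' → ∀ a a', P s a = P s' a'
  epi_fin : ∀ π : S → A → ℝ≥0∞, (∀ s, ∑' a, π s a = 1) → ∀ s ∈ TermSet P ρ0,
      (∑' t, termHit (chainOf P π) (TermSet P ρ0) s t) = 1 ∧
      meanEpiLen (chainOf P π) (TermSet P ρ0) s < ⊤

namespace Stmt5Aux

variable {S : Type}

def NN (M : S → S → ℝ≥0∞) (T : Set S) : ℕ → S → ℝ≥0∞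
  | 0, _ => 1
  | n+1, s => ∑' v, if v ∈ T then 0 else epiStep M T s n v

def BB (M : S → S → ℝ≥0∞) (T : Set S) (ρ : S → ℝ≥0∞) : ℕ → S → ℝ≥0∞
  | 0 => ρ
  | n+1 => fun u => if u ∈ T then 0 else ∑' v, BB M T ρ n v * M v u

lemma ite_tsum {α : Type} {c : Prop} [Decidable c] (f : α → ℝ≥0∞) :
    (if c then 0 else ∑' v, f v) = ∑' v, if c then 0 else f v := by
  split_ifs with h
  · simp
  · rfl

lemma ite_tsum_mul {α : Type} {c : Prop} [Decidable c] (f : α → ℝ≥0∞) (b : ℝ≥0∞) :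
    (if c then 0 else (∑' v, f v) * b) = ∑' v, if c then 0 else f v * b := by
  split_ifs with h
  · simp
  · exact ENNReal.tsum_mul_right.symm

lemma ite_mul_tsum {α : Type} {c : Prop} [Decidable c] (a : ℝ≥0∞) (f : α → ℝ≥0∞) :
    (if c then 0 else a * ∑' v, f v) = ∑' v, if c then 0 else a * f v := by
  split_ifs with h
  · simp
  · exact ENNReal.tsum_mul_left.symm

lemma tsum_ite_zero_mul_left {α : Type} (p : α → Prop) (a : ℝ≥0∞) (g : α → ℝ≥0∞) :
    (∑' v, if p v then 0 else a * g v) = a * ∑' v, if p v then 0 else g v := by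
  rw [← ENNReal.tsum_mul_left]
  exact tsum_congr fun v => by by_cases h : p v <;> simp [h]

variable {M : S → S → ℝ≥0∞} {T : Set S} {s₀ : S}

lemma epiStep_zero (s u : S) : epiStep M T s 0 u = M s u := rfl

lemma epiStep_succ (s : S) (t : ℕ) (u : S) :
    epiStep M T s (t+1) u = ∑' v, if v ∈ T then 0 else epiStep M T s t v * M v u := rfl

lemma epiStep_T (hT : ∀ s ∈ T, ∀ u, M s u = M s₀ u) {s : S} (hs : s ∈ T) (t : ℕ) :
    epiStep M T s t = epiStep M T s₀ t := by
  induction t with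
  | zero => funext u; exact hT s hs u
  | succ t ih => funext u; simp only [epiStep_succ, ih]

lemma NN_T (hT : ∀ s ∈ T, ∀ u, M s u = M s₀ u) {s : S} (hs : s ∈ T) (n : ℕ) :
    NN M T n s = NN M T n s₀ := by
  cases n with
  | zero => rfl
  | succ n => simp only [NN, epiStep_T hT hs]

lemma epiStep_front (n : ℕ) (s u : S) :
    epiStep M T s (n+1) u = ∑' v, if v ∈ T then 0 else M s v * epiStep M T v n u := by
  induction n generalizing u with
  | zero => rfl
  | succ n ih =>
    rw [epiStep_succ]
    calc ∑' v, (if v ∈ T then 0 else epiStep M T s (n+1) v * M v u)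
        = ∑' v, ∑' w, (if v ∈ T then 0 else
            (if w ∈ T then 0 else M s w * epiStep M T w n v) * M v u) := by
          refine tsum_congr fun v => ?_
          rw [ih v]
          exact ite_tsum_mul _ _
      _ = ∑' w, ∑' v, (if v ∈ T then 0 else
            (if w ∈ T then 0 else M s w * epiStep M T w n v) * M v u) := ENNReal.tsum_comm
      _ = ∑' w, (if w ∈ T then 0 else M s w * epiStep M T w (n+1) u) := by
          refine tsum_congr fun w => ?_
          by_cases hw : w ∈ T
          · simp [hw]
          · simp only [hw, if_false, epiStep_succ]
            rw [← ENNReal.tsum_mul_left]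
            refine tsum_congr fun v => ?_
            by_cases hv : v ∈ T <;> simp [hv, mul_assoc]

lemma sum_epiStep (hrow : ∀ s, ∑' u, M s u = 1) (s : S) (t : ℕ) :
    ∑' u, epiStep M T s t u = NN M T t s := by
  cases t with
  | zero => simp only [epiStep_zero, hrow s]; rfl
  | succ t =>
    rw [show (∑' u, epiStep M T s (t+1) u)
        = ∑' u, ∑' v, (if v ∈ T then 0 else epiStep M T s t v * M v u) from rfl,
      ENNReal.tsum_comm]
    refine tsum_congr fun v => ?_
    by_cases hv : v ∈ T
    · simp [hv]
    · simp only [hv, if_false]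
      rw [ENNReal.tsum_mul_left, hrow v, mul_one]


lemma NN_zero (s : S) : NN M T 0 s = 1 := rfl

lemma NN_succ (n : ℕ) (s : S) :
    NN M T (n+1) s = ∑' v, if v ∈ T then 0 else epiStep M T s n v := rfl

lemma NN_front (n : ℕ) (s : S) :
    NN M T (n+1) s = ∑' v, if v ∈ T then 0 else M s v * NN M T n v := by
  cases n with
  | zero =>
    simp only [NN, epiStep_zero, mul_one]
  | succ n =>
    rw [NN_succ]
    calc ∑' w, (if w ∈ T then 0 else epiStep M T s (n+1) w)
        = ∑' w, ∑' v, (if w ∈ T then 0 else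
            if v ∈ T then 0 else M s v * epiStep M T v n w) := by
          refine tsum_congr fun w => ?_
          rw [epiStep_front, ite_tsum]
      _ = ∑' v, ∑' w, (if w ∈ T then 0 else
            if v ∈ T then 0 else M s v * epiStep M T v n w) := ENNReal.tsum_comm
      _ = ∑' v, (if v ∈ T then 0 else M s v * NN M T (n+1) v) := by
          refine tsum_congr fun v => ?_
          by_cases hv : v ∈ T
          · simp [hv]
          · simp only [hv, if_false, NN_succ]
            rw [← ENNReal.tsum_mul_left]
            refine tsum_congr fun w => ?_
            by_cases hw : w ∈ T <;> simp [hw]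

lemma NN_succ_le (hrow : ∀ s, ∑' u, M s u = 1) :
    ∀ n s, NN M T (n+1) s ≤ NN M T n s := by
  intro n
  induction n with
  | zero =>
    intro s
    rw [NN_front, NN_zero]
    calc (∑' v, if v ∈ T then 0 else M s v * NN M T 0 v)
        ≤ ∑' v, M s v := by
          refine ENNReal.tsum_le_tsum fun v => ?_
          split_ifs with h
          · exact zero_le
          · rw [NN_zero, mul_one]
      _ = 1 := hrow s
  | succ n ih =>
    intro s
    rw [NN_front, NN_front]
    refine ENNReal.tsum_le_tsum fun v => ?_
    split_ifs with h
    · exact le_rfl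
    · exact mul_le_mul_right (ih v) _

lemma NN_antitone (hrow : ∀ s, ∑' u, M s u = 1) (s : S) :
    Antitone (fun n => NN M T n s) :=
  antitone_nat_of_succ_le fun n => NN_succ_le hrow n s

lemma NN_le_one (hrow : ∀ s, ∑' u, M s u = 1) (n : ℕ) (s : S) : NN M T n s ≤ 1 :=
  (NN_antitone hrow s (Nat.zero_le n)).trans_eq (NN_zero s)

lemma NN_rec (hrow : ∀ s, ∑' u, M s u = 1) (t : ℕ) :
    NN M T t s₀ = termHit M T s₀ t + NN M T (t+1) s₀ := by
  rw [← sum_epiStep hrow s₀ t, termHit, NN_succ, ← ENNReal.tsum_add]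
  refine tsum_congr fun u => ?_
  by_cases hu : u ∈ T <;> simp [hu]

lemma termHit_le_one (hrow : ∀ s, ∑' u, M s u = 1) (hΘ : ∑' t, termHit M T s₀ t = 1) (t : ℕ) :
    termHit M T s₀ t ≤ 1 := by
  rw [← hΘ]; exact ENNReal.le_tsum t

lemma NN_eq_tail (hrow : ∀ s, ∑' u, M s u = 1) (hΘ : ∑' t, termHit M T s₀ t = 1) (t : ℕ) :
    NN M T t s₀ = ∑' j, termHit M T s₀ (t + j) := by
  induction t with
  | zero => simpa [NN_zero] using hΘ.symm
  | succ t ih =>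
    have h1 : (∑' j, termHit M T s₀ (t + j))
        = termHit M T s₀ t + ∑' j, termHit M T s₀ (t + 1 + j) := by
      rw [tsum_eq_zero_add' (f := fun j => termHit M T s₀ (t + j)) ENNReal.summable, add_zero]
      exact congrArg (fun x => termHit M T s₀ t + x)
        (tsum_congr fun j => by rw [show t + (j + 1) = t + 1 + j by omega])
    have hne : termHit M T s₀ t ≠ ∞ :=
      ((termHit_le_one hrow hΘ t).trans_lt ENNReal.one_lt_top).ne
    have h2 : termHit M T s₀ t + NN M T (t+1) s₀
        = termHit M T s₀ t + ∑' j, termHit M T s₀ (t + 1 + j) := by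
      rw [← NN_rec hrow t, ih, h1]
    exact (ENNReal.add_right_inj hne).mp h2

lemma NN_s₀_tendsto (hrow : ∀ s, ∑' u, M s u = 1) (hΘ : ∑' t, termHit M T s₀ t = 1) :
    Tendsto (fun t => NN M T t s₀) atTop (𝓝 0) := by
  have h := ENNReal.tendsto_sum_nat_add (fun t => termHit M T s₀ t)
    (by rw [hΘ]; exact ENNReal.one_ne_top)
  refine h.congr fun i => ?_
  rw [NN_eq_tail hrow hΘ i]
  exact tsum_congr fun k => by rw [add_comm]

lemma iInf_NN_s₀ (hrow : ∀ s, ∑' u, M s u = 1) (hΘ : ∑' t, termHit M T s₀ t = 1) :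
    ⨅ t, NN M T t s₀ = 0 := by
  refine le_antisymm ?_ (zero_le)
  exact ge_of_tendsto (NN_s₀_tendsto hrow hΘ)
    (Eventually.of_forall fun n => iInf_le (fun t => NN M T t s₀) n)

lemma tail_eq (hrow : ∀ s, ∑' u, M s u = 1) (hΘ : ∑' t, termHit M T s₀ t = 1) (t : ℕ) :
    (∑' n, if t ≤ n then termHit M T s₀ n else 0) = NN M T t s₀ := by
  induction t with
  | zero => simpa [NN_zero] using hΘ
  | succ t ih =>
    have hsplit : ∀ n, (if t ≤ n then termHit M T s₀ n else 0)
        = (if n = t then termHit M T s₀ t else 0)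
          + (if t + 1 ≤ n then termHit M T s₀ n else 0) := by
      intro n
      rcases lt_trichotomy n t with h | h | h
      · rw [if_neg (by omega), if_neg (by omega), if_neg (by omega), add_zero]
      · subst h
        rw [if_pos le_rfl, if_pos rfl, if_neg (by omega), add_zero]
      · rw [if_pos (by omega), if_neg (by omega), if_pos (by omega), zero_add]
    have h1 : (∑' n, if t ≤ n then termHit M T s₀ n else 0)
        = termHit M T s₀ t + ∑' n, (if t + 1 ≤ n then termHit M T s₀ n else 0) := by
      calc (∑' n, if t ≤ n then termHit M T s₀ n else 0)
          = ∑' n, ((if n = t then termHit M T s₀ t else 0)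
              + (if t + 1 ≤ n then termHit M T s₀ n else 0)) := tsum_congr hsplit
        _ = termHit M T s₀ t + ∑' n, (if t + 1 ≤ n then termHit M T s₀ n else 0) := by
            rw [ENNReal.tsum_add, tsum_ite_eq t (fun _ => termHit M T s₀ t)]
    have hne : termHit M T s₀ t ≠ ∞ :=
      ((termHit_le_one hrow hΘ t).trans_lt ENNReal.one_lt_top).ne
    have h2 : termHit M T s₀ t + ∑' n, (if t + 1 ≤ n then termHit M T s₀ n else 0)
        = termHit M T s₀ t + NN M T (t+1) s₀ := by
      rw [← h1, ih, NN_rec hrow t]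
    exact (ENNReal.add_right_inj hne).mp h2

lemma nu_mass (hrow : ∀ s, ∑' u, M s u = 1) (hΘ : ∑' t, termHit M T s₀ t = 1) :
    ∑' u, (∑' t, epiStep M T s₀ t u) = meanEpiLen M T s₀ := by
  rw [ENNReal.tsum_comm]
  calc ∑' t, (∑' u, epiStep M T s₀ t u)
      = ∑' t, ∑' n, (if t ≤ n then termHit M T s₀ n else 0) := by
        refine tsum_congr fun t => ?_
        rw [sum_epiStep hrow s₀ t, tail_eq hrow hΘ t]
    _ = ∑' n, ∑' t, (if t ≤ n then termHit M T s₀ n else 0) := ENNReal.tsum_comm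
    _ = meanEpiLen M T s₀ := by
        refine tsum_congr fun n => ?_
        rw [tsum_eq_sum (s := Finset.range (n+1))
          (fun t ht => if_neg (by simp only [Finset.mem_range] at ht; omega))]
        rw [Finset.sum_congr rfl (fun t ht => if_pos (by
          simp only [Finset.mem_range] at ht; omega))]
        rw [Finset.sum_const, Finset.card_range, nsmul_eq_mul]
        congr 1
        push_cast
        ring

lemma step1 (hrow : ∀ s, ∑' u, M s u = 1) (hT : ∀ s ∈ T, ∀ u, M s u = M s₀ u) (t : ℕ) (u : S) :
    ∑' s, epiStep M T s₀ t s * M s u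
      = termHit M T s₀ t * M s₀ u + epiStep M T s₀ (t+1) u := by
  calc ∑' s, epiStep M T s₀ t s * M s u
      = ∑' s, ((if s ∈ T then epiStep M T s₀ t s * M s₀ u else 0)
          + (if s ∈ T then 0 else epiStep M T s₀ t s * M s u)) := by
        refine tsum_congr fun s => ?_
        by_cases hs : s ∈ T
        · rw [if_pos hs, if_pos hs, add_zero, hT s hs u]
        · rw [if_neg hs, if_neg hs, zero_add]
    _ = termHit M T s₀ t * M s₀ u + epiStep M T s₀ (t+1) u := by
        rw [ENNReal.tsum_add, epiStep_succ]
        congr 1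
        rw [termHit, ← ENNReal.tsum_mul_right]
        refine tsum_congr fun s => ?_
        by_cases hs : s ∈ T <;> simp [hs]

lemma nu_stat (hrow : ∀ s, ∑' u, M s u = 1) (hT : ∀ s ∈ T, ∀ u, M s u = M s₀ u)
    (hΘ : ∑' t, termHit M T s₀ t = 1) (u : S) :
    ∑' s, (∑' t, epiStep M T s₀ t s) * M s u = ∑' t, epiStep M T s₀ t u := by
  calc ∑' s, (∑' t, epiStep M T s₀ t s) * M s u
      = ∑' s, ∑' t, epiStep M T s₀ t s * M s u := by
        exact tsum_congr fun s => ENNReal.tsum_mul_right.symm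
    _ = ∑' t, ∑' s, epiStep M T s₀ t s * M s u := ENNReal.tsum_comm
    _ = ∑' t, (termHit M T s₀ t * M s₀ u + epiStep M T s₀ (t+1) u) :=
        tsum_congr fun t => step1 hrow hT t u
    _ = (∑' t, termHit M T s₀ t) * M s₀ u + ∑' t, epiStep M T s₀ (t+1) u := by
        rw [ENNReal.tsum_add, ENNReal.tsum_mul_right]
    _ = ∑' t, epiStep M T s₀ t u := by
        rw [hΘ, one_mul,
          tsum_eq_zero_add' (f := fun t => epiStep M T s₀ t u) ENNReal.summable]
        rfl

lemma nu_split (u : S) :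
    (∑' t, epiStep M T s₀ t u)
      = M s₀ u + ∑' v, (if v ∈ T then 0
          else (∑' t, epiStep M T s₀ t v) * M v u) := by
  rw [tsum_eq_zero_add' (f := fun t => epiStep M T s₀ t u) ENNReal.summable]
  congr 1
  calc ∑' t, epiStep M T s₀ (t+1) u
      = ∑' t, ∑' v, (if v ∈ T then 0 else epiStep M T s₀ t v * M v u) :=
        tsum_congr fun t => epiStep_succ s₀ t u
    _ = ∑' v, ∑' t, (if v ∈ T then 0 else epiStep M T s₀ t v * M v u) := ENNReal.tsum_comm
    _ = ∑' v, (if v ∈ T then 0 else (∑' t, epiStep M T s₀ t v) * M v u) := by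
        refine tsum_congr fun v => ?_
        by_cases hv : v ∈ T
        · simp [hv]
        · simp only [hv, if_false]
          exact ENNReal.tsum_mul_right

lemma stepProb_zero (s u : S) : stepProb M 0 s u = if s = u then 1 else 0 := rfl

lemma stepProb_succ (k : ℕ) (s u : S) :
    stepProb M (k+1) s u = ∑' v, stepProb M k s v * M v u := rfl

lemma stepProb_one (s u : S) : stepProb M 1 s u = M s u := by
  rw [stepProb_succ]
  calc ∑' v, stepProb M 0 s v * M v u
      = ∑' v, (if v = s then M s u else 0) := by
        refine tsum_congr fun v => ?_
        rw [stepProb_zero]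
        by_cases h : s = v
        · subst h; simp
        · rw [if_neg h, if_neg (fun hh => h hh.symm), zero_mul]
    _ = M s u := tsum_ite_eq s (fun _ => M s u)

lemma stepProb_row (hrow : ∀ s, ∑' u, M s u = 1) (k : ℕ) (s : S) :
    ∑' u, stepProb M k s u = 1 := by
  induction k with
  | zero =>
    calc ∑' u, stepProb M 0 s u = ∑' u, (if u = s then (1:ℝ≥0∞) else 0) := by
          refine tsum_congr fun u => ?_
          rw [stepProb_zero]
          by_cases h : s = u
          · subst h; simp
          · rw [if_neg h, if_neg (fun hh => h hh.symm)]
      _ = 1 := tsum_ite_eq s 1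
  | succ k ih =>
    calc ∑' u, stepProb M (k+1) s u
        = ∑' v, ∑' u, stepProb M k s v * M v u := by
          rw [← ENNReal.tsum_comm]
          exact tsum_congr fun u => stepProb_succ k s u
      _ = ∑' v, stepProb M k s v * (∑' u, M v u) :=
          tsum_congr fun v => ENNReal.tsum_mul_left
      _ = 1 := by
          simp only [hrow, mul_one]
          exact ih

lemma stepProb_front (k : ℕ) (s u : S) :
    stepProb M (k+1) s u = ∑' v, M s v * stepProb M k v u := by
  induction k generalizing u with
  | zero =>
    rw [stepProb_one]
    calc M s u = ∑' v, (if v = u then M s u else 0) := (tsum_ite_eq u (fun _ => M s u)).symm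
      _ = ∑' v, M s v * stepProb M 0 v u := by
          refine tsum_congr fun v => ?_
          rw [stepProb_zero]
          by_cases h : v = u
          · subst h; simp
          · rw [if_neg h, if_neg h, mul_zero]
  | succ k ih =>
    calc stepProb M (k+2) s u
        = ∑' w, stepProb M (k+1) s w * M w u := stepProb_succ (k+1) s u
      _ = ∑' w, ∑' v, M s v * stepProb M k v w * M w u := by
          refine tsum_congr fun w => ?_
          rw [ih w, ← ENNReal.tsum_mul_right]
      _ = ∑' v, ∑' w, M s v * (stepProb M k v w * M w u) := by
          rw [ENNReal.tsum_comm]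
          exact tsum_congr fun w => tsum_congr fun v => by rw [mul_assoc]
      _ = ∑' v, M s v * stepProb M (k+1) v u := by
          refine tsum_congr fun v => ?_
          rw [ENNReal.tsum_mul_left, stepProb_succ]

lemma stepProb_T (hT : ∀ s ∈ T, ∀ u, M s u = M s₀ u) {s : S} (hs : s ∈ T) (k : ℕ) (u : S) :
    stepProb M (k+1) s u = stepProb M (k+1) s₀ u := by
  rw [stepProb_front, stepProb_front]
  exact tsum_congr fun v => by rw [hT s hs v]

lemma epiStep_le_stepProb (t : ℕ) (u : S) :
    epiStep M T s₀ t u ≤ stepProb M (t+1) s₀ u := by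
  induction t generalizing u with
  | zero => rw [epiStep_zero, stepProb_one]
  | succ t ih =>
    rw [epiStep_succ, stepProb_succ]
    refine ENNReal.tsum_le_tsum fun v => ?_
    split_ifs with hv
    · exact zero_le
    · exact mul_le_mul_left (ih v) _

lemma Dbound (hrow : ∀ s, ∑' u, M s u = 1) (hT : ∀ s ∈ T, ∀ u, M s u = M s₀ u) (k n : ℕ) :
    ∑' u, stepProb M k s₀ u * NN M T n u ≤ ((k:ℝ≥0∞)+1) * NN M T n s₀ := by
  induction k generalizing n with
  | zero =>
    calc ∑' u, stepProb M 0 s₀ u * NN M T n u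
        = ∑' u, (if u = s₀ then NN M T n s₀ else 0) := by
          refine tsum_congr fun u => ?_
          rw [stepProb_zero]
          by_cases h : s₀ = u
          · subst h; simp
          · rw [if_neg h, if_neg (fun hh => h hh.symm), zero_mul]
      _ = NN M T n s₀ := tsum_ite_eq s₀ _
      _ ≤ ((0:ℕ):ℝ≥0∞) * NN M T n s₀ + NN M T n s₀ := by simp
      _ ≤ (((0:ℕ):ℝ≥0∞)+1) * NN M T n s₀ := by rw [add_mul, one_mul]
  | succ k ih =>
    have inner : ∀ v, (∑' u, M v u * NN M T n u) ≤ NN M T n s₀ + NN M T (n+1) v := by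
      intro v
      calc ∑' u, M v u * NN M T n u
          = ∑' u, ((if u ∈ T then M v u * NN M T n s₀ else 0)
              + (if u ∈ T then 0 else M v u * NN M T n u)) := by
            refine tsum_congr fun u => ?_
            by_cases hu : u ∈ T
            · rw [if_pos hu, if_pos hu, add_zero, NN_T hT hu]
            · rw [if_neg hu, if_neg hu, zero_add]
        _ = (∑' u, (if u ∈ T then M v u * NN M T n s₀ else 0)) + NN M T (n+1) v := by
            rw [ENNReal.tsum_add, NN_front]
        _ ≤ NN M T n s₀ + NN M T (n+1) v := by
            refine add_le_add_left ?_ _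
            calc (∑' u, (if u ∈ T then M v u * NN M T n s₀ else 0))
                ≤ ∑' u, M v u * NN M T n s₀ := by
                  refine ENNReal.tsum_le_tsum fun u => ?_
                  split_ifs
                  · exact le_rfl
                  · exact zero_le
              _ = 1 * NN M T n s₀ := by rw [ENNReal.tsum_mul_right, hrow v]
              _ = NN M T n s₀ := one_mul _
    calc ∑' u, stepProb M (k+1) s₀ u * NN M T n u
        = ∑' u, ∑' v, stepProb M k s₀ v * M v u * NN M T n u := by
          refine tsum_congr fun u => ?_
          rw [stepProb_succ, ← ENNReal.tsum_mul_right]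
      _ = ∑' v, stepProb M k s₀ v * (∑' u, M v u * NN M T n u) := by
          rw [ENNReal.tsum_comm]
          refine tsum_congr fun v => ?_
          rw [← ENNReal.tsum_mul_left]
          exact tsum_congr fun u => by rw [mul_assoc]
      _ ≤ ∑' v, stepProb M k s₀ v * (NN M T n s₀ + NN M T (n+1) v) :=
          ENNReal.tsum_le_tsum fun v => mul_le_mul_right (inner v) _
      _ = (∑' v, stepProb M k s₀ v) * NN M T n s₀
            + ∑' v, stepProb M k s₀ v * NN M T (n+1) v := by
          simp only [mul_add]
          rw [ENNReal.tsum_add, ENNReal.tsum_mul_right]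
      _ ≤ 1 * NN M T n s₀ + ((k:ℝ≥0∞)+1) * NN M T (n+1) s₀ := by
          refine add_le_add (by rw [stepProb_row hrow]) (ih (n+1))
      _ ≤ 1 * NN M T n s₀ + ((k:ℝ≥0∞)+1) * NN M T n s₀ :=
          add_le_add_right (mul_le_mul_right (NN_succ_le hrow n s₀) _) _
      _ = (((k:ℕ)+1:ℕ):ℝ≥0∞) * NN M T n s₀ + NN M T n s₀ := by
          push_cast
          ring
      _ ≤ ((((k:ℕ)+1:ℕ):ℝ≥0∞)+1) * NN M T n s₀ := by
          rw [add_mul, one_mul]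

lemma reach_iInf (hrow : ∀ s, ∑' u, M s u = 1) (hT : ∀ s ∈ T, ∀ u, M s u = M s₀ u)
    (hΘ : ∑' t, termHit M T s₀ t = 1) {ρ0 : S → ℝ≥0∞}
    (hρ0T : ∀ s, ρ0 s ≠ 0 → s ∈ T) {u : S} (hu : u ∈ ReachSet M ρ0) :
    ⨅ n, NN M T n u = 0 := by
  obtain ⟨t, ht⟩ := hu
  have hex : ∃ s', ρ0 s' * stepProb M t s' u ≠ 0 := by
    by_contra h
    push_neg at h
    rw [show (∑' s', ρ0 s' * stepProb M t s' u) = 0 from ENNReal.tsum_eq_zero.mpr h] at ht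
    exact lt_irrefl _ ht
  obtain ⟨s', hs'⟩ := hex
  have h1 : ρ0 s' ≠ 0 := fun h => hs' (by rw [h, zero_mul])
  have h2 : stepProb M t s' u ≠ 0 := fun h => hs' (by rw [h, mul_zero])
  have hs'T : s' ∈ T := hρ0T s' h1
  cases t with
  | zero =>
    have : s' = u := by
      by_contra h
      exact h2 (by rw [stepProb_zero, if_neg h])
    subst this
    have := NN_T hT hs'T
    simp only [this]
    exact iInf_NN_s₀ hrow hΘ
  | succ k =>
    have h3 : stepProb M (k+1) s₀ u ≠ 0 := by
      rw [← stepProb_T hT hs'T]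
      exact h2
    have key : ∀ n, stepProb M (k+1) s₀ u * NN M T n u
        ≤ (((k+1:ℕ):ℝ≥0∞)+1) * NN M T n s₀ := by
      intro n
      exact le_trans (ENNReal.le_tsum u) (Dbound hrow hT (k+1) n)
    have hlim : Tendsto (fun n => (((k+1:ℕ):ℝ≥0∞)+1) * NN M T n s₀) atTop (𝓝 0) := by
      have := ENNReal.Tendsto.const_mul (NN_s₀_tendsto (T := T) hrow hΘ)
        (a := (((k+1:ℕ):ℝ≥0∞)+1)) (Or.inr (by simp))
      simpa using this
    have hz : stepProb M (k+1) s₀ u * (⨅ n, NN M T n u) = 0 := by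
      refine le_antisymm ?_ (zero_le)
      refine ge_of_tendsto hlim (Eventually.of_forall fun n => ?_)
      calc stepProb M (k+1) s₀ u * (⨅ m, NN M T m u)
          ≤ stepProb M (k+1) s₀ u * NN M T n u :=
            mul_le_mul_right (iInf_le (fun m => NN M T m u) n) _
        _ ≤ _ := key n
    rcases mul_eq_zero.mp hz with h | h
    · exact absurd h h3
    · exact h

lemma Gzero (hrow : ∀ s, ∑' u, M s u = 1) {ρ : S → ℝ≥0∞} (hmass : ∑' s, ρ s = 1)
    (hsupp : ∀ s, ρ s ≠ 0 → ⨅ n, NN M T n s = 0) :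
    ⨅ n, ∑' s, ρ s * NN M T n s = 0 := by
  have key : ∀ (F : Finset S) (f : S → ℝ≥0∞),
      (∑' s, f s) = (∑ s ∈ F, f s) + (∑' s : ((↑F : Set S)ᶜ : Set S), f s) := by
    intro F f
    rw [← Summable.tsum_add_tsum_compl (s := (↑F : Set S)) (f := f) ENNReal.summable ENNReal.summable]
    congr 1
    exact (Finset.tsum_subtype F f)
  refine le_antisymm ?_ (zero_le)
  refine ENNReal.le_of_forall_pos_le_add fun ε hε _ => ?_
  rw [zero_add]
  have htail : ∃ F : Finset S, (∑' s : ((↑F : Set S)ᶜ : Set S), ρ s) ≤ (ε:ℝ≥0∞) := by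
    by_cases hεbig : (1:ℝ≥0∞) ≤ (ε:ℝ≥0∞)
    · refine ⟨∅, le_trans ?_ hεbig⟩
      rw [← hmass, key ∅ ρ, Finset.sum_empty, zero_add]
    · push_neg at hεbig
      have h1 : (1:ℝ≥0∞) - ε < ⨆ F : Finset S, ∑ s ∈ F, ρ s := by
        rw [← ENNReal.tsum_eq_iSup_sum, hmass]
        exact ENNReal.sub_lt_self ENNReal.one_ne_top one_ne_zero (by simpa using hε.ne')
      obtain ⟨F, hF⟩ := lt_iSup_iff.mp h1
      refine ⟨F, ?_⟩
      by_contra hc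
      push_neg at hc
      have hsum : (∑ s ∈ F, ρ s) + (∑' s : ((↑F : Set S)ᶜ : Set S), ρ s) = 1 := by
        rw [← key F ρ, hmass]
      have : (1:ℝ≥0∞) < 1 := by
        calc (1:ℝ≥0∞) = (1 - ε) + ε := (tsub_add_cancel_of_le hεbig.le).symm
          _ < (∑ s ∈ F, ρ s) + (∑' s : ((↑F : Set S)ᶜ : Set S), ρ s) :=
            ENNReal.add_lt_add hF hc
          _ = 1 := hsum
      exact absurd this (lt_irrefl _)
  obtain ⟨F, hF⟩ := htail
  have hbound : ∀ n, (∑' s, ρ s * NN M T n s)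
      ≤ (∑ s ∈ F, ρ s * NN M T n s) + (ε:ℝ≥0∞) := by
    intro n
    rw [key F (fun s => ρ s * NN M T n s)]
    refine add_le_add_right (le_trans ?_ hF) _
    refine ENNReal.tsum_le_tsum fun s => ?_
    calc ρ s.1 * NN M T n s.1 ≤ ρ s.1 * 1 := mul_le_mul_right (NN_le_one hrow n s.1) _
      _ = ρ s.1 := mul_one _
  calc ⨅ n, ∑' s, ρ s * NN M T n s
      ≤ ⨅ n, ((∑ s ∈ F, ρ s * NN M T n s) + (ε:ℝ≥0∞)) := iInf_mono hbound
    _ = (⨅ n, ∑ s ∈ F, ρ s * NN M T n s) + (ε:ℝ≥0∞) := (ENNReal.iInf_add).symm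
    _ = (∑ s ∈ F, ⨅ n, ρ s * NN M T n s) + (ε:ℝ≥0∞) := by
        congr 1
        refine ENNReal.iInf_sum fun t i j => ?_
        refine ⟨max i j, fun a _ => ?_⟩
        exact ⟨mul_le_mul_right (NN_antitone hrow a (le_max_left i j)) _,
          mul_le_mul_right (NN_antitone hrow a (le_max_right i j)) _⟩
    _ = 0 + (ε:ℝ≥0∞) := by
        congr 1
        refine Finset.sum_eq_zero fun s _ => ?_
        by_cases hs : ρ s = 0
        · simp [hs]
        · have hne : ρ s ≠ ∞ := by
            refine ne_top_of_le_ne_top ENNReal.one_ne_top ?_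
            rw [← hmass]
            exact ENNReal.le_tsum s
          rw [← ENNReal.mul_iInf (fun ha _ => absurd ha hne), hsupp s hs, mul_zero]
    _ = (ε:ℝ≥0∞) := zero_add _

lemma BB_zero (ρ : S → ℝ≥0∞) : BB M T ρ 0 = ρ := rfl

lemma BB_succ (ρ : S → ℝ≥0∞) (n : ℕ) (u : S) :
    BB M T ρ (n+1) u = if u ∈ T then 0 else ∑' v, BB M T ρ n v * M v u := rfl

lemma BB_succ_T {ρ : S → ℝ≥0∞} {n : ℕ} {u : S} (hu : u ∈ T) : BB M T ρ (n+1) u = 0 := by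
  rw [BB_succ, if_pos hu]

lemma BB_tele (ρ : S → ℝ≥0∞) :
    ∀ n m, (∑' u, BB M T ρ n u * NN M T m u) = ∑' u, ρ u * NN M T (n + m) u := by
  intro n
  induction n with
  | zero => intro m; simp [BB_zero]
  | succ n ih =>
    intro m
    calc ∑' u, BB M T ρ (n+1) u * NN M T m u
        = ∑' u, ∑' v, (if u ∈ T then 0 else BB M T ρ n v * M v u * NN M T m u) := by
          refine tsum_congr fun u => ?_
          rw [BB_succ, ite_mul, zero_mul, ite_tsum_mul]
      _ = ∑' v, ∑' u, (if u ∈ T then 0 else BB M T ρ n v * (M v u * NN M T m u)) := by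
          rw [ENNReal.tsum_comm]
          exact tsum_congr fun u => tsum_congr fun v => by rw [mul_assoc]
      _ = ∑' v, BB M T ρ n v * NN M T (m+1) v := by
          refine tsum_congr fun v => ?_
          rw [tsum_ite_zero_mul_left, ← NN_front]
      _ = ∑' u, ρ u * NN M T (n + (m+1)) u := ih (m+1)
      _ = ∑' u, ρ u * NN M T (n + 1 + m) u := by
          rw [show n + (m+1) = n + 1 + m by omega]

lemma BB_le (hrow : ∀ s, ∑' u, M s u = 1) (ρ : S → ℝ≥0∞) (n : ℕ) (u : S) :
    BB M T ρ n u ≤ ∑' s, ρ s * NN M T n s := by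
  calc BB M T ρ n u ≤ ∑' w, BB M T ρ n w := ENNReal.le_tsum u
    _ = ∑' w, BB M T ρ n w * NN M T 0 w := by simp [NN_zero]
    _ = ∑' s, ρ s * NN M T (n + 0) s := BB_tele ρ n 0
    _ = ∑' s, ρ s * NN M T n s := by rw [Nat.add_zero]

section claim

variable {ρ : S → ℝ≥0∞}

lemma ρsplit (hT : ∀ s ∈ T, ∀ u, M s u = M s₀ u)
    (hstat : ∀ u, ρ u = ∑' v, ρ v * M v u) (u : S) :
    ρ u = (∑' v, if v ∈ T then ρ v else 0) * M s₀ u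
      + ∑' v, (if v ∈ T then 0 else ρ v * M v u) := by
  rw [hstat u]
  calc ∑' v, ρ v * M v u
      = ∑' v, ((if v ∈ T then ρ v * M s₀ u else 0) + (if v ∈ T then 0 else ρ v * M v u)) := by
        refine tsum_congr fun v => ?_
        by_cases hv : v ∈ T
        · rw [if_pos hv, if_pos hv, add_zero, hT v hv u]
        · rw [if_neg hv, if_neg hv, zero_add]
    _ = _ := by
        rw [ENNReal.tsum_add]
        congr 1
        rw [← ENNReal.tsum_mul_right]
        refine tsum_congr fun v => ?_
        by_cases hv : v ∈ T <;> simp [hv]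

lemma claim (hT : ∀ s ∈ T, ∀ u, M s u = M s₀ u)
    (hstat : ∀ u, ρ u = ∑' v, ρ v * M v u) :
    ∀ n, ∀ u, u ∉ T → ρ u = BB M T ρ (n+1) u
      + (∑' v, if v ∈ T then ρ v else 0) * ∑ m ∈ Finset.range n, epiStep M T s₀ m u := by
  intro n
  induction n with
  | zero =>
    intro u hu
    rw [Finset.range_zero, Finset.sum_empty, mul_zero, add_zero, BB_succ, if_neg hu]
    exact hstat u
  | succ n ih =>
    intro u hu
    set α := (∑' v, if v ∈ T then ρ v else 0) with hα
    calc ρ u = α * M s₀ u + ∑' v, (if v ∈ T then 0 else ρ v * M v u) := ρsplit hT hstat u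
      _ = α * M s₀ u + ∑' v, (if v ∈ T then 0 else
            (BB M T ρ (n+1) v + α * ∑ m ∈ Finset.range n, epiStep M T s₀ m v) * M v u) := by
          congr 1
          refine tsum_congr fun v => ?_
          by_cases hv : v ∈ T
          · simp [hv]
          · rw [if_neg hv, if_neg hv, ← ih v hv]
      _ = α * M s₀ u + ((∑' v, (if v ∈ T then 0 else BB M T ρ (n+1) v * M v u))
            + α * ∑' v, (if v ∈ T then 0 else
                (∑ m ∈ Finset.range n, epiStep M T s₀ m v) * M v u)) := by
          congr 1
          calc ∑' v, (if v ∈ T then 0 else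
                (BB M T ρ (n+1) v + α * ∑ m ∈ Finset.range n, epiStep M T s₀ m v) * M v u)
              = ∑' v, ((if v ∈ T then 0 else BB M T ρ (n+1) v * M v u)
                  + (if v ∈ T then 0 else
                      α * ((∑ m ∈ Finset.range n, epiStep M T s₀ m v) * M v u))) := by
                refine tsum_congr fun v => ?_
                by_cases hv : v ∈ T
                · simp [hv]
                · simp only [hv, if_false]
                  rw [add_mul, mul_assoc]
            _ = _ := by rw [ENNReal.tsum_add, tsum_ite_zero_mul_left]
      _ = BB M T ρ (n+2) u
            + α * ∑ m ∈ Finset.range (n+1), epiStep M T s₀ m u := by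
          have p1 : (∑' v, (if v ∈ T then 0 else BB M T ρ (n+1) v * M v u))
              = BB M T ρ (n+2) u := by
            rw [BB_succ ρ (n+1) u, if_neg hu]
            refine tsum_congr fun v => ?_
            by_cases hv : v ∈ T
            · rw [if_pos hv, BB_succ_T hv, zero_mul]
            · rw [if_neg hv]
          have p2 : (∑' v, (if v ∈ T then 0 else
                (∑ m ∈ Finset.range n, epiStep M T s₀ m v) * M v u))
              = ∑ m ∈ Finset.range n, epiStep M T s₀ (m+1) u := by
            calc ∑' v, (if v ∈ T then 0 else
                  (∑ m ∈ Finset.range n, epiStep M T s₀ m v) * M v u)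
                = ∑' v, ∑ m ∈ Finset.range n,
                    (if v ∈ T then 0 else epiStep M T s₀ m v * M v u) := by
                  refine tsum_congr fun v => ?_
                  by_cases hv : v ∈ T
                  · simp [hv]
                  · simp [hv, Finset.sum_mul]
              _ = ∑ m ∈ Finset.range n, ∑' v,
                    (if v ∈ T then 0 else epiStep M T s₀ m v * M v u) :=
                  Summable.tsum_finsetSum fun i _ => ENNReal.summable
              _ = ∑ m ∈ Finset.range n, epiStep M T s₀ (m+1) u :=
                  Finset.sum_congr rfl fun m _ => (epiStep_succ s₀ m u).symm
          rw [p1, p2, Finset.sum_range_succ']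
          have : M s₀ u = epiStep M T s₀ 0 u := rfl
          rw [this, mul_add]
          ring

lemma unique_core (hrow : ∀ s, ∑' u, M s u = 1) (hT : ∀ s ∈ T, ∀ u, M s u = M s₀ u)
    (hΘ : ∑' t, termHit M T s₀ t = 1)
    (hmass : ∑' s, ρ s = 1)
    (hstat : ∀ u, ρ u = ∑' v, ρ v * M v u)
    (hsupp : ∀ s, ρ s ≠ 0 → ⨅ n, NN M T n s = 0) :
    ∀ u, ρ u = (∑' v, if v ∈ T then ρ v else 0) * ∑' t, epiStep M T s₀ t u := by
  set α := (∑' v, if v ∈ T then ρ v else 0) with hα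
  have hGz := Gzero (T := T) hrow hmass hsupp
  have hBBz : ∀ u, ⨅ n, BB M T ρ (n+1) u = 0 := by
    intro u
    refine le_antisymm ?_ (zero_le)
    rw [← hGz]
    refine le_iInf fun m => ?_
    refine (iInf_le (fun n => BB M T ρ (n+1) u) m).trans ?_
    refine (BB_le hrow ρ (m+1) u).trans ?_
    exact ENNReal.tsum_le_tsum fun s => mul_le_mul_right (NN_succ_le hrow m s) _
  have uNotT : ∀ u ∉ T, ρ u = α * ∑' t, epiStep M T s₀ t u := by
    intro u hu
    refine le_antisymm ?_ ?_
    · have h1 : ∀ n, ρ u ≤ BB M T ρ (n+1) u + α * ∑' t, epiStep M T s₀ t u := by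
        intro n
        rw [claim hT hstat n u hu]
        exact add_le_add_right (mul_le_mul_right (ENNReal.sum_le_tsum _) α) _
      calc ρ u ≤ ⨅ n, (BB M T ρ (n+1) u + α * ∑' t, epiStep M T s₀ t u) := le_iInf h1
        _ = (⨅ n, BB M T ρ (n+1) u) + α * ∑' t, epiStep M T s₀ t u := (ENNReal.iInf_add).symm
        _ = α * ∑' t, epiStep M T s₀ t u := by rw [hBBz u, zero_add]
    · rw [ENNReal.tsum_eq_iSup_nat, ENNReal.mul_iSup]
      refine iSup_le fun n => ?_
      rw [claim hT hstat n u hu]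
      exact le_add_self
  intro u
  by_cases hu : u ∈ T
  · calc ρ u = α * M s₀ u + ∑' v, (if v ∈ T then 0 else ρ v * M v u) := ρsplit hT hstat u
      _ = α * M s₀ u + ∑' v, (if v ∈ T then 0
            else α * ((∑' t, epiStep M T s₀ t v) * M v u)) := by
          congr 1
          refine tsum_congr fun v => ?_
          by_cases hv : v ∈ T
          · simp [hv]
          · rw [if_neg hv, if_neg hv, uNotT v hv, mul_assoc]
      _ = α * (M s₀ u + ∑' v, (if v ∈ T then 0
            else (∑' t, epiStep M T s₀ t v) * M v u)) := by
          rw [tsum_ite_zero_mul_left, mul_add]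
      _ = α * ∑' t, epiStep M T s₀ t u := by rw [← nu_split u]
  · exact uNotT u hu

end claim

theorem main_aux (hrow : ∀ s, ∑' u, M s u = 1) (hT : ∀ s ∈ T, ∀ u, M s u = M s₀ u)
    (hs₀ : s₀ ∈ T) (hΘ : ∑' t, termHit M T s₀ t = 1) (hL : meanEpiLen M T s₀ < ⊤)
    {ρ0 : S → ℝ≥0∞} (hρ0T : ∀ s, ρ0 s ≠ 0 → s ∈ T) (hρ0s₀ : ρ0 s₀ ≠ 0) :
    ∃! ρ : S → ℝ≥0∞, (∑' s, ρ s = 1) ∧ (∀ s', ρ s' = ∑' s, ρ s * M s s') ∧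
      (∀ s, s ∉ ReachSet M ρ0 → ρ s = 0) := by
  set L := meanEpiLen M T s₀ with hLdef
  have hL0 : L ≠ 0 := by
    have h1 : (1:ℝ≥0∞) ≤ L := by
      rw [← hΘ, hLdef, meanEpiLen]
      refine ENNReal.tsum_le_tsum fun t => ?_
      calc termHit M T s₀ t = 1 * termHit M T s₀ t := (one_mul _).symm
        _ ≤ ((t:ℝ≥0∞)+1) * termHit M T s₀ t := mul_le_mul_left le_add_self _
    intro h
    rw [h] at h1
    exact absurd h1 (by simp)
  have hLt : L ≠ ⊤ := hL.ne
  have hmassν : ∑' u, (∑' t, epiStep M T s₀ t u) = L := nu_mass hrow hΘ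
  set ρstar := fun u => (∑' t, epiStep M T s₀ t u) * L⁻¹ with hρstar
  have hmass : ∑' u, ρstar u = 1 := by
    rw [hρstar]
    simp only
    rw [ENNReal.tsum_mul_right, hmassν, ENNReal.mul_inv_cancel hL0 hLt]
  have hstat : ∀ u, ρstar u = ∑' s, ρstar s * M s u := by
    intro u
    rw [hρstar]
    simp only
    calc (∑' t, epiStep M T s₀ t u) * L⁻¹
        = (∑' s, (∑' t, epiStep M T s₀ t s) * M s u) * L⁻¹ := by rw [nu_stat hrow hT hΘ u]
      _ = ∑' s, (∑' t, epiStep M T s₀ t s) * M s u * L⁻¹ := ENNReal.tsum_mul_right.symm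
      _ = ∑' s, (∑' t, epiStep M T s₀ t s) * L⁻¹ * M s u :=
          tsum_congr fun s => by rw [mul_right_comm]
  have hsupp : ∀ u, u ∉ ReachSet M ρ0 → ρstar u = 0 := by
    intro u hu
    rw [hρstar]
    simp only
    have hν : (∑' t, epiStep M T s₀ t u) = 0 := by
      by_contra hν
      obtain ⟨t, ht⟩ : ∃ t, epiStep M T s₀ t u ≠ 0 := by
        by_contra hh
        push_neg at hh
        exact hν (ENNReal.tsum_eq_zero.mpr hh)
      refine hu ⟨t+1, ?_⟩
      calc (0:ℝ≥0∞) < ρ0 s₀ * epiStep M T s₀ t u := by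
            rw [pos_iff_ne_zero]
            exact mul_ne_zero hρ0s₀ ht
        _ ≤ ρ0 s₀ * stepProb M (t+1) s₀ u := mul_le_mul_right (epiStep_le_stepProb t u) _
        _ ≤ ∑' s', ρ0 s' * stepProb M (t+1) s' u := ENNReal.le_tsum s₀
    rw [hν, zero_mul]
  refine ⟨ρstar, ⟨hmass, hstat, hsupp⟩, ?_⟩
  rintro ρ' ⟨h1, h2, h3⟩
  have hsupp' : ∀ s, ρ' s ≠ 0 → ⨅ n, NN M T n s = 0 := by
    intro s hs
    have hreach : s ∈ ReachSet M ρ0 := by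
      by_contra hcon
      exact hs (h3 s hcon)
    exact reach_iInf hrow hT hΘ hρ0T hreach
  have hpt := unique_core hrow hT hΘ h1 h2 hsupp'
  set α := (∑' v, if v ∈ T then ρ' v else 0) with hα
  have hαL : α * L = 1 := by
    rw [← h1]
    rw [show (∑' s, ρ' s) = ∑' s, α * ∑' t, epiStep M T s₀ t s from tsum_congr hpt]
    rw [ENNReal.tsum_mul_left, hmassν]
  have hαinv : α = L⁻¹ := by
    have h := congrArg (fun x => x * L⁻¹) hαL
    simp only [mul_assoc, one_mul] at h
    rw [ENNReal.mul_inv_cancel hL0 hLt, mul_one] at h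
    exact h
  funext u
  rw [hpt u, hαinv, hρstar]
  simp only
  rw [mul_comm]

end Stmt5Aux

/-- In an episodic learning process, every policy has a unique stationary distribution,
supported on the reachable states. -/
theorem stmt_5 {S A : Type} [Countable S] [Countable A] (E : ELP S A)
    (π : S → A → ℝ≥0∞) (hπ : ∀ s, ∑' a, π s a = 1) :
    ∃! ρ : S → ℝ≥0∞, (∑' s, ρ s = 1) ∧
      (∀ s', ρ s' = ∑' s, ρ s * chainOf E.P π s s') ∧
      (∀ s, s ∉ ReachSet (chainOf E.P π) E.ρ0 → ρ s = 0) := by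
  obtain ⟨s₀, hs₀⟩ : ∃ s₀, E.ρ0 s₀ ≠ 0 := by
    by_contra h
    push_neg at h
    have := E.ρ0_sum
    rw [ENNReal.tsum_eq_zero.mpr h] at this
    exact one_ne_zero this.symm
  have hpos : 0 < E.ρ0 s₀ := pos_iff_ne_zero.mpr hs₀
  have hA : Nonempty A := by
    by_contra h
    have hempty : IsEmpty A := not_nonempty_iff.mp h
    have h0 := hπ s₀
    rw [tsum_empty] at h0
    exact one_ne_zero h0.symm
  obtain ⟨a₀⟩ := hA
  set M := chainOf E.P π with hM
  set T := TermSet E.P E.ρ0 with hTdef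
  have hmemT : ∀ s, E.ρ0 s ≠ 0 → s ∈ T := by
    intro s hs s₁ h1 a a'
    exact E.homog s s₁ (pos_iff_ne_zero.mpr hs) h1 a a'
  have hs₀T : s₀ ∈ T := hmemT s₀ hs₀
  have hconst : ∀ s ∈ T, ∀ u, M s u = E.P s₀ a₀ u := by
    intro s hs u
    rw [hM, chainOf]
    calc ∑' a, π s a * E.P s a u = ∑' a, π s a * E.P s₀ a₀ u := by
          refine tsum_congr fun a => ?_
          rw [hs s₀ hpos a a₀]
      _ = (∑' a, π s a) * E.P s₀ a₀ u := ENNReal.tsum_mul_right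
      _ = E.P s₀ a₀ u := by rw [hπ s, one_mul]
  have hT : ∀ s ∈ T, ∀ u, M s u = M s₀ u := by
    intro s hs u
    rw [hconst s hs u, hconst s₀ hs₀T u]
  have hrow : ∀ s, ∑' u, M s u = 1 := by
    intro s
    rw [hM]
    simp only [chainOf]
    rw [ENNReal.tsum_comm]
    calc ∑' a, ∑' u, π s a * E.P s a u
        = ∑' a, π s a * ∑' u, E.P s a u := tsum_congr fun a => ENNReal.tsum_mul_left
      _ = ∑' a, π s a := by
          refine tsum_congr fun a => ?_
          rw [E.P_sum s a, mul_one]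
      _ = 1 := hπ s
  obtain ⟨hΘ, hL⟩ := E.epi_fin π hπ s₀ hs₀T
  exact Stmt5Aux.main_aux hrow hT hs₀T hΘ hL hmemT hs₀
end
end

section
/- In the ε-perturbed model M⁺ of any episodic learning process, every policy π induces an ergodic Markov chain, and hence has a limiting distribution lim_{t→∞} ρ_π^{+(t)} = ρ⁺_π. -/
open scoped ENNReal Classical
open Filter Topology

noncomputable section

/-- The ε-perturbed Markov chain: a null state is inserted, entered from a terminal
state with probability ε; from the null state transitions mimic a terminal state. -/
def perturbM {S : Type} (M : S → S → ℝ≥0∞) (T : Set S) (sT : S) (ε : ℝ≥0∞) :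
    Option S → Option S → ℝ≥0∞
  | some s, some s' => if s ∈ T then (1 - ε) * M s s' else M s s'
  | some s, none => if s ∈ T then ε else 0
  | none, some s' => M sT s'
  | none, none => 0



section Hidden
open Filter Topology Finset

namespace RenewalAux

lemma tendsto_sub_const {a : ℕ → ℕ} (ha : Tendsto a atTop atTop) (d : ℕ) :
    Tendsto (fun j => a j - d) atTop atTop := by
  rw [tendsto_atTop] at ha ⊢
  intro N
  filter_upwards [ha (N + d)] with j hj
  omega

lemma repr_lemma (p q : ℕ) (hp : 2 ≤ p) (hq : q = 2*p - 1) (n : ℕ) :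
    ∃ a b : ℕ, 2*p*p + n = a * p + b * q := by
  have hp0 : 0 < p := by omega
  set b := (p - n % p) % p with hb
  have hbp : b < p := Nat.mod_lt _ hp0
  have hdvd : p ∣ (n + b) := by
    have h2 := Nat.div_add_mod n p
    have h1 : n % p < p := Nat.mod_lt _ hp0
    rcases Nat.eq_zero_or_pos (n % p) with h | h
    · have hb0 : b = 0 := by simp [hb, h]
      refine ⟨n / p, ?_⟩
      generalize hT : p * (n / p) = T at h2 ⊢
      omega
    · have hb' : b = p - n % p := by rw [hb]; exact Nat.mod_eq_of_lt (by omega)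
      refine ⟨n / p + 1, ?_⟩
      have : p * (n / p + 1) = p * (n / p) + p := by ring
      rw [this]
      generalize hT : p * (n / p) = T at h2 ⊢
      omega
  obtain ⟨c, hc⟩ := hdvd
  refine ⟨c + 2*p - 2*b, b, ?_⟩
  have h2b : 2*b ≤ c + 2*p := by omega
  have hq' : b * q + b = 2 * (b * p) := by
    rw [hq]
    have h1 : b * (2*p-1) + b * 1 = b * (2*p-1+1) := (Nat.mul_add b _ 1).symm
    have h2 : 2*p-1+1 = 2*p := by omega
    rw [h2] at h1
    calc b * (2*p-1) + b = b * (2*p-1) + b * 1 := by ring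
      _ = b * (2*p) := h1
      _ = 2 * (b * p) := by ring
  have hap : (c + 2*p - 2*b) * p + 2*(b*p) = (c+2*p)*p := by
    have : (c + 2*p - 2*b) * p + (2*b) * p = (c+2*p)*p := by
      rw [← Nat.add_mul]
      congr 1
      omega
    calc (c + 2*p - 2*b) * p + 2*(b*p) = (c + 2*p - 2*b) * p + (2*b)*p := by ring
      _ = (c+2*p)*p := this
  have hcp : (c+2*p)*p = (2*p*p + n) + b := by
    have : (c+2*p)*p = p * c + 2*p*p := by ring
    rw [this, ← hc]
    ring_nf
  generalize hX : (c + 2*p - 2*b) * p = X at hap ⊢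
  generalize hY : b * p = Y at hq' hap
  generalize hZ : b * q = Z at hq' ⊢
  generalize hV : (c+2*p)*p = V at hap hcp
  generalize hU : 2*p*p = U at hcp ⊢
  omega

variable {pr fr br Hr rr : ℕ → ℝ}

lemma key_up
    (hfr0 : ∀ k, 0 ≤ fr k) (hfrsum : HasSum fr 1)
    (hpr0 : ∀ n, 0 ≤ pr n) (hpr1 : ∀ n, pr n ≤ 1)
    (hbr0 : ∀ n, 0 ≤ br n) (hbr : Tendsto br atTop (𝓝 0))
    (hrec : ∀ n, pr n = br n + ∑ k ∈ range (n+1), fr k * pr (n-k))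
    (lam : ℝ) (hlam : lam = limsup pr atTop) (hlam0 : 0 ≤ lam)
    (a : ℕ → ℕ) (ha : Tendsto a atTop atTop)
    (hconv : Tendsto (fun j => pr (a j)) atTop (𝓝 lam))
    (d : ℕ) (hd : 0 < fr d) :
    Tendsto (fun j => pr (a j - d)) atTop (𝓝 lam) := by
  have hBddAbove : IsBoundedUnder (· ≤ ·) atTop pr := isBoundedUnder_of ⟨1, hpr1⟩
  have hub' : ∀ δ : ℝ, 0 < δ → ∀ᶠ n in atTop, pr n < lam + δ := by
    intro δ hδ
    exact eventually_lt_of_limsup_lt (by rw [← hlam]; linarith) hBddAbove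
  rw [tendsto_order]
  constructor
  · -- b < lam → eventually b < pr (a j - d)
    intro b hb
    set ε := lam - b with hε
    have hεpos : 0 < ε := by simp [hε]; linarith
    set δ := fr d * ε / 4 with hδdef
    have hδpos : 0 < δ := by positivity
    -- choose K
    have hps : Tendsto (fun n => ∑ i ∈ range n, fr i) atTop (𝓝 1) := hfrsum.tendsto_sum_nat
    obtain ⟨N₀, hN₀⟩ := eventually_atTop.1 (hps.eventually (eventually_gt_nhds (by linarith : (1:ℝ) - δ < 1)))
    set K := max N₀ (d+1) with hK
    have hK1 : 1 - δ < ∑ k ∈ range (K+1), fr k := hN₀ (K+1) (by omega)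
    have hdK : d ≤ K := by omega
    obtain ⟨N, hN⟩ := eventually_atTop.1 (hub' δ hδpos)
    have hfd1 : fr d ≤ 1 := le_hasSum hfrsum d (fun j _ => hfr0 j)
    filter_upwards [ha.eventually_ge_atTop (N + K), (hbr.comp ha).eventually (eventually_lt_nhds hδpos),
      hconv.eventually (eventually_gt_nhds (by linarith : lam - δ < lam))] with j h1 h2 h3
    set n := a j with hn
    have hnK : K + 1 ≤ n + 1 := by omega
    have hfr_split : ∑ k ∈ range (n+1), fr k = ∑ k ∈ range (K+1), fr k + ∑ k ∈ Ico (K+1) (n+1), fr k := by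
      rw [range_eq_Ico, range_eq_Ico]
      exact (Finset.sum_Ico_consecutive _ (Nat.zero_le _) hnK).symm
    have hfrn1 : ∑ k ∈ range (n+1), fr k ≤ 1 := sum_le_hasSum _ (fun i _ => hfr0 i) hfrsum
    have hsplit : ∑ k ∈ range (n+1), fr k * pr (n-k)
        = ∑ k ∈ range (K+1), fr k * pr (n-k) + ∑ k ∈ Ico (K+1) (n+1), fr k * pr (n-k) := by
      rw [range_eq_Ico, range_eq_Ico]
      exact (Finset.sum_Ico_consecutive _ (Nat.zero_le _) hnK).symm
    have hT2 : ∑ k ∈ Ico (K+1) (n+1), fr k * pr (n-k) ≤ δ := by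
      calc ∑ k ∈ Ico (K+1) (n+1), fr k * pr (n-k) ≤ ∑ k ∈ Ico (K+1) (n+1), fr k :=
            Finset.sum_le_sum (fun k _ => mul_le_of_le_one_right (hfr0 k) (hpr1 _))
        _ ≤ δ := by linarith
    have hdmem : d ∈ range (K+1) := mem_range.2 (by omega)
    have herase1 : ∑ k ∈ (range (K+1)).erase d, fr k ≤ 1 - fr d := by
      have h := sum_le_hasSum (range (K+1)) (fun i _ => hfr0 i) hfrsum
      have h' := Finset.sum_erase_add (range (K+1)) fr hdmem
      linarith
    have herase0 : 0 ≤ ∑ k ∈ (range (K+1)).erase d, fr k :=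
      Finset.sum_nonneg (fun k _ => hfr0 k)
    have hT1 : ∑ k ∈ range (K+1), fr k * pr (n-k)
        ≤ (lam + δ) * (1 - fr d) + fr d * pr (n - d) := by
      rw [← Finset.sum_erase_add _ _ hdmem]
      have h1' : ∑ k ∈ (range (K+1)).erase d, fr k * pr (n-k)
          ≤ (lam + δ) * ∑ k ∈ (range (K+1)).erase d, fr k := by
        rw [Finset.mul_sum]
        apply Finset.sum_le_sum
        intro k hk
        have hkK : k ≤ K := by
          have := mem_range.1 (Finset.mem_of_mem_erase hk); omega
        have hprk : pr (n - k) < lam + δ := hN _ (by omega)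
        calc fr k * pr (n-k) ≤ fr k * (lam + δ) := by
              apply mul_le_mul_of_nonneg_left hprk.le (hfr0 k)
          _ = (lam + δ) * fr k := mul_comm _ _
      have h2' : (lam + δ) * ∑ k ∈ (range (K+1)).erase d, fr k ≤ (lam + δ) * (1 - fr d) :=
        mul_le_mul_of_nonneg_left herase1 (by linarith)
      linarith
    -- assemble
    have hrecn := hrec n
    have h2' : br n < δ := h2
    have hfinal : lam - δ < δ + ((lam + δ) * (1 - fr d) + fr d * pr (n - d)) + δ := by
      have : pr n ≤ br n + (∑ k ∈ range (K+1), fr k * pr (n-k)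
          + ∑ k ∈ Ico (K+1) (n+1), fr k * pr (n-k)) := by rw [hrecn, hsplit]
      linarith
    have hmul : fr d * b < fr d * pr (n - d) := by nlinarith
    exact (mul_lt_mul_iff_right₀ hd).1 hmul
  · intro b hb
    filter_upwards [(tendsto_sub_const ha d).eventually
      ((hub' (b - lam) (by linarith)))] with j hj
    simpa using hj

lemma key_lo
    (hfr0 : ∀ k, 0 ≤ fr k) (hfrsum : HasSum fr 1)
    (hpr0 : ∀ n, 0 ≤ pr n) (hpr1 : ∀ n, pr n ≤ 1)
    (hbr0 : ∀ n, 0 ≤ br n)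
    (hrec : ∀ n, pr n = br n + ∑ k ∈ range (n+1), fr k * pr (n-k))
    (mu : ℝ) (hmu : mu = liminf pr atTop) (hmu1 : mu ≤ 1)
    (a : ℕ → ℕ) (ha : Tendsto a atTop atTop)
    (hconv : Tendsto (fun j => pr (a j)) atTop (𝓝 mu))
    (d : ℕ) (hd : 0 < fr d) :
    Tendsto (fun j => pr (a j - d)) atTop (𝓝 mu) := by
  have hBddBelow : IsBoundedUnder (· ≥ ·) atTop pr := isBoundedUnder_of ⟨0, hpr0⟩
  have hlb' : ∀ δ : ℝ, 0 < δ → ∀ᶠ n in atTop, mu - δ < pr n := by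
    intro δ hδ
    exact eventually_lt_of_lt_liminf (by rw [← hmu]; linarith) hBddBelow
  rw [tendsto_order]
  constructor
  · intro b hb
    filter_upwards [(tendsto_sub_const ha d).eventually
      ((hlb' (mu - b) (by linarith)))] with j hj
    simpa using hj
  · intro b hb
    set ε := b - mu with hε
    have hεpos : 0 < ε := by simp [hε]; linarith
    set δ := fr d * ε / 4 with hδdef
    have hδpos : 0 < δ := by positivity
    have hps : Tendsto (fun n => ∑ i ∈ range n, fr i) atTop (𝓝 1) := hfrsum.tendsto_sum_nat
    obtain ⟨N₀, hN₀⟩ := eventually_atTop.1 (hps.eventually (eventually_gt_nhds (by linarith : (1:ℝ) - δ < 1)))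
    set K := max N₀ (d+1) with hK
    have hK1 : 1 - δ < ∑ k ∈ range (K+1), fr k := hN₀ (K+1) (by omega)
    have hdK : d ≤ K := by omega
    obtain ⟨N, hN⟩ := eventually_atTop.1 (hlb' δ hδpos)
    have hfd1 : fr d ≤ 1 := le_hasSum hfrsum d (fun j _ => hfr0 j)
    filter_upwards [ha.eventually_ge_atTop (N + K),
      hconv.eventually (eventually_lt_nhds (by linarith : mu < mu + δ))] with j h1 h3
    set n := a j with hn
    have hnK : K + 1 ≤ n + 1 := by omega
    have hsplit : ∑ k ∈ range (n+1), fr k * pr (n-k)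
        = ∑ k ∈ range (K+1), fr k * pr (n-k) + ∑ k ∈ Ico (K+1) (n+1), fr k * pr (n-k) := by
      rw [range_eq_Ico, range_eq_Ico]
      exact (Finset.sum_Ico_consecutive _ (Nat.zero_le _) hnK).symm
    have hT2 : 0 ≤ ∑ k ∈ Ico (K+1) (n+1), fr k * pr (n-k) :=
      Finset.sum_nonneg (fun k _ => mul_nonneg (hfr0 k) (hpr0 _))
    have hdmem : d ∈ range (K+1) := mem_range.2 (by omega)
    have herase_add := Finset.sum_erase_add (range (K+1)) fr hdmem
    have herase1 : ∑ k ∈ (range (K+1)).erase d, fr k ≤ 1 - fr d := by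
      have h := sum_le_hasSum (range (K+1)) (fun i _ => hfr0 i) hfrsum
      linarith
    have herase2 : (1 - δ) - fr d ≤ ∑ k ∈ (range (K+1)).erase d, fr k := by linarith
    set C := ∑ k ∈ (range (K+1)).erase d, fr k with hCdef
    have hlow : fr d * pr (n - d) + C * (mu - δ) ≤ ∑ k ∈ range (K+1), fr k * pr (n-k) := by
      rw [← Finset.sum_erase_add _ _ hdmem]
      have h1' : C * (mu - δ) ≤ ∑ k ∈ (range (K+1)).erase d, fr k * pr (n-k) := by
        rw [hCdef, Finset.sum_mul]
        apply Finset.sum_le_sum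
        intro k hk
        have hkK : k ≤ K := by
          have := mem_range.1 (Finset.mem_of_mem_erase hk); omega
        have hprk : mu - δ < pr (n - k) := hN _ (by omega)
        exact mul_le_mul_of_nonneg_left hprk.le (hfr0 k)
      linarith
    have hC : (1 - fr d) * (mu - δ) - δ ≤ C * (mu - δ) := by
      rcases le_or_gt 0 (mu - δ) with hs | hs
      · nlinarith
      · nlinarith
    have hrecn := hrec n
    have hfinal : fr d * pr (n - d) + ((1 - fr d) * (mu - δ) - δ) < mu + δ := by
      have hbrn : 0 ≤ br n := hbr0 n
      nlinarith [hsplit, hlow, hT2]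
    have hmul : fr d * pr (n - d) < fr d * b := by nlinarith
    exact (mul_lt_mul_iff_right₀ hd).1 hmul

theorem renewal_limit (mr : ℝ)
    (hfr0 : ∀ k, 0 ≤ fr k) (hfrsum : HasSum fr 1)
    (hpr0 : ∀ n, 0 ≤ pr n) (hpr1 : ∀ n, pr n ≤ 1)
    (hbr0 : ∀ n, 0 ≤ br n) (hbr : Tendsto br atTop (𝓝 0))
    (hHr0 : ∀ n, 0 ≤ Hr n) (hHr : Tendsto Hr atTop (𝓝 0))
    (hrr0 : ∀ k, 0 ≤ rr k) (hmr1 : 1 ≤ mr) (hrrsum : HasSum rr mr)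
    (hrec : ∀ n, pr n = br n + ∑ k ∈ range (n+1), fr k * pr (n-k))
    (hid : ∀ n, Hr n + ∑ k ∈ range (n+1), rr k * pr (n-k) = 1)
    (p q : ℕ) (hp : 2 ≤ p) (hq : q = 2*p - 1) (hfp : 0 < fr p) (hfq : 0 < fr q) :
    Tendsto pr atTop (𝓝 (1/mr)) := by
  have hBddAbove : IsBoundedUnder (· ≤ ·) atTop pr := isBoundedUnder_of ⟨1, hpr1⟩
  have hBddBelow : IsBoundedUnder (· ≥ ·) atTop pr := isBoundedUnder_of ⟨0, hpr0⟩
  set lam := limsup pr atTop with hlam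
  set mu := liminf pr atTop with hmu
  have hmulam : mu ≤ lam := liminf_le_limsup hBddAbove hBddBelow
  have hmu0 : 0 ≤ mu := le_liminf_of_le (hBddAbove.isCoboundedUnder_ge) (Eventually.of_forall hpr0)
  have hlam1 : lam ≤ 1 := limsup_le_of_le (hBddBelow.isCoboundedUnder_le) (Eventually.of_forall hpr1)
  have hlam0 : 0 ≤ lam := le_trans hmu0 hmulam
  have hmu1 : mu ≤ 1 := hmulam.trans hlam1
  -- limsup subsequence
  have hfreq : ∀ j : ℕ, ∃ᶠ i in atTop, lam - 1/(j+1) < pr i ∧ pr i < lam + 1/(j+1) := by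
    intro j
    have hpos : (0:ℝ) < 1/(j+1) := by positivity
    have h1 : ∃ᶠ i in atTop, lam - 1/(j+1) < pr i :=
      frequently_lt_of_lt_limsup (hBddBelow.isCoboundedUnder_le) (by linarith)
    have h2 : ∀ᶠ i in atTop, pr i < lam + 1/(j+1) :=
      eventually_lt_of_limsup_lt (by linarith) hBddAbove
    exact h1.and_eventually h2
  obtain ⟨φ, hφmono, hφ⟩ := extraction_forall_of_frequently hfreq
  have hφtop : Tendsto φ atTop atTop := hφmono.tendsto_atTop
  have honediv : Tendsto (fun j : ℕ => 1/((j:ℝ)+1)) atTop (𝓝 0) :=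
    tendsto_one_div_add_atTop_nhds_zero_nat
  have hφconv : Tendsto (fun j => pr (φ j)) atTop (𝓝 lam) := by
    have hl : Tendsto (fun j : ℕ => lam - 1/((j:ℝ)+1)) atTop (𝓝 lam) := by
      simpa using (tendsto_const_nhds (x := lam) (f := atTop)).sub honediv
    have hr : Tendsto (fun j : ℕ => lam + 1/((j:ℝ)+1)) atTop (𝓝 lam) := by
      simpa using (tendsto_const_nhds (x := lam) (f := atTop)).add honediv
    exact tendsto_of_tendsto_of_tendsto_of_le_of_le hl hr
      (fun j => (hφ j).1.le) (fun j => (hφ j).2.le)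
  -- liminf subsequence
  have hfreq' : ∀ j : ℕ, ∃ᶠ i in atTop, pr i < mu + 1/(j+1) ∧ mu - 1/(j+1) < pr i := by
    intro j
    have hpos : (0:ℝ) < 1/(j+1) := by positivity
    have h2 : ∃ᶠ i in atTop, pr i < mu + 1/(j+1) :=
      frequently_lt_of_liminf_lt (hBddAbove.isCoboundedUnder_ge) (by linarith)
    have h1 : ∀ᶠ i in atTop, mu - 1/(j+1) < pr i :=
      eventually_lt_of_lt_liminf (by linarith) hBddBelow
    exact h2.and_eventually h1
  obtain ⟨ψ, hψmono, hψ⟩ := extraction_forall_of_frequently hfreq'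
  have hψtop : Tendsto ψ atTop atTop := hψmono.tendsto_atTop
  have hψconv : Tendsto (fun j => pr (ψ j)) atTop (𝓝 mu) := by
    have hl : Tendsto (fun j : ℕ => mu - 1/((j:ℝ)+1)) atTop (𝓝 mu) := by
      simpa using (tendsto_const_nhds (x := mu) (f := atTop)).sub honediv
    have hr : Tendsto (fun j : ℕ => mu + 1/((j:ℝ)+1)) atTop (𝓝 mu) := by
      simpa using (tendsto_const_nhds (x := mu) (f := atTop)).add honediv
    exact tendsto_of_tendsto_of_tendsto_of_le_of_le hl hr
      (fun j => (hψ j).2.le) (fun j => (hψ j).1.le)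
  -- shifted convergence along the subsequences
  have hQ : ∀ i : ℕ, (∃ a b : ℕ, i = a*p + b*q) → Tendsto (fun j => pr (φ j - i)) atTop (𝓝 lam) := by
    have key : ∀ i : ℕ, Tendsto (fun j => pr (φ j - i)) atTop (𝓝 lam) →
        ∀ d, 0 < fr d → Tendsto (fun j => pr (φ j - (i + d))) atTop (𝓝 lam) := by
      intro i hi d hd
      have h := key_up hfr0 hfrsum hpr0 hpr1 hbr0 hbr hrec lam hlam hlam0
        (fun j => φ j - i) (tendsto_sub_const hφtop i) hi d hd
      simpa [Nat.sub_sub] using h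
    have hA : ∀ a b : ℕ, Tendsto (fun j => pr (φ j - (a*p + b*q))) atTop (𝓝 lam) := by
      intro a
      induction a with
      | zero =>
        intro b
        induction b with
        | zero => simpa using hφconv
        | succ b ihb =>
          have h := key _ ihb q hfq
          have harith : 0*p + (b+1)*q = (0*p + b*q) + q := by ring
          rw [harith]; exact h
      | succ a iha =>
        intro b
        have h := key _ (iha b) p hfp
        have harith : (a+1)*p + b*q = (a*p + b*q) + p := by ring
        rw [harith]; exact h
    rintro i ⟨a, b, hab⟩
    rw [hab]; exact hA a b
  have hQ' : ∀ i : ℕ, (∃ a b : ℕ, i = a*p + b*q) → Tendsto (fun j => pr (ψ j - i)) atTop (𝓝 mu) := by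
    have key : ∀ i : ℕ, Tendsto (fun j => pr (ψ j - i)) atTop (𝓝 mu) →
        ∀ d, 0 < fr d → Tendsto (fun j => pr (ψ j - (i + d))) atTop (𝓝 mu) := by
      intro i hi d hd
      have h := key_lo hfr0 hfrsum hpr0 hpr1 hbr0 hrec mu hmu hmu1
        (fun j => ψ j - i) (tendsto_sub_const hψtop i) hi d hd
      simpa [Nat.sub_sub] using h
    have hA : ∀ a b : ℕ, Tendsto (fun j => pr (ψ j - (a*p + b*q))) atTop (𝓝 mu) := by
      intro a
      induction a with
      | zero =>
        intro b
        induction b with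
        | zero => simpa using hψconv
        | succ b ihb =>
          have h := key _ ihb q hfq
          have harith : 0*p + (b+1)*q = (0*p + b*q) + q := by ring
          rw [harith]; exact h
      | succ a iha =>
        intro b
        have h := key _ (iha b) p hfp
        have harith : (a+1)*p + b*q = (a*p + b*q) + p := by ring
        rw [harith]; exact h
    rintro i ⟨a, b, hab⟩
    rw [hab]; exact hA a b
  -- partial sums of rr
  have hrrpartial : Tendsto (fun K : ℕ => ∑ k ∈ range (K+1), rr k) atTop (𝓝 mr) :=
    (hrrsum.tendsto_sum_nat).comp (tendsto_add_atTop_nat 1)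
  -- upper bound
  have hupper : ∀ K : ℕ, (∑ k ∈ range (K+1), rr k) * lam ≤ 1 := by
    intro K
    have hconv : Tendsto (fun j => ∑ k ∈ range (K+1), rr k * pr (φ j - (2*p*p + k))) atTop
        (𝓝 (∑ k ∈ range (K+1), rr k * lam)) := by
      apply tendsto_finset_sum
      intro k _
      exact (hQ (2*p*p + k) (repr_lemma p q hp hq k)).const_mul (rr k)
    have hev : ∀ᶠ j in atTop, ∑ k ∈ range (K+1), rr k * pr (φ j - (2*p*p + k)) ≤ 1 := by
      filter_upwards [hφtop.eventually_ge_atTop (2*p*p + K)] with j hj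
      have hrw : ∀ k, φ j - (2*p*p + k) = (φ j - 2*p*p) - k := fun k => by omega
      set n := φ j - 2*p*p with hn
      have hKn : K + 1 ≤ n + 1 := by omega
      have hidn := hid n
      have hmono : ∑ k ∈ range (K+1), rr k * pr (n-k) ≤ ∑ k ∈ range (n+1), rr k * pr (n-k) :=
        Finset.sum_le_sum_of_subset_of_nonneg (Finset.range_subset_range.2 hKn)
          (fun k _ _ => mul_nonneg (hrr0 k) (hpr0 _))
      calc ∑ k ∈ range (K+1), rr k * pr (φ j - (2*p*p + k))
          = ∑ k ∈ range (K+1), rr k * pr (n - k) := by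
            apply Finset.sum_congr rfl; intro k _; rw [hrw k]
        _ ≤ 1 := by linarith [hHr0 n]
    have h := le_of_tendsto hconv hev
    rwa [← Finset.sum_mul] at h
  have hup : mr * lam ≤ 1 :=
    le_of_tendsto (hrrpartial.mul_const lam) (Eventually.of_forall hupper)
  -- lower bound
  have hlower : ∀ K : ℕ, 1 ≤ (∑ k ∈ range (K+1), rr k) * mu + (mr - ∑ k ∈ range (K+1), rr k) := by
    intro K
    have hconv1 : Tendsto (fun j => Hr (ψ j - 2*p*p)) atTop (𝓝 0) :=
      hHr.comp (tendsto_sub_const hψtop (2*p*p))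
    have hconv2 : Tendsto (fun j => ∑ k ∈ range (K+1), rr k * pr (ψ j - (2*p*p + k))) atTop
        (𝓝 (∑ k ∈ range (K+1), rr k * mu)) := by
      apply tendsto_finset_sum
      intro k _
      exact (hQ' (2*p*p + k) (repr_lemma p q hp hq k)).const_mul (rr k)
    have hev : ∀ᶠ j in atTop, 1 ≤ Hr (ψ j - 2*p*p)
        + (∑ k ∈ range (K+1), rr k * pr (ψ j - (2*p*p + k)) + (mr - ∑ k ∈ range (K+1), rr k)) := by
      filter_upwards [hψtop.eventually_ge_atTop (2*p*p + K)] with j hj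
      have hrw : ∀ k, ψ j - (2*p*p + k) = (ψ j - 2*p*p) - k := fun k => by omega
      set n := ψ j - 2*p*p with hn
      have hKn : K + 1 ≤ n + 1 := by omega
      have hidn := hid n
      have hsplit : ∑ k ∈ range (n+1), rr k * pr (n-k)
          = ∑ k ∈ range (K+1), rr k * pr (n-k) + ∑ k ∈ Ico (K+1) (n+1), rr k * pr (n-k) := by
        rw [range_eq_Ico, range_eq_Ico]
        exact (Finset.sum_Ico_consecutive _ (Nat.zero_le _) hKn).symm
      have hrrsplit : ∑ k ∈ range (n+1), rr k
          = ∑ k ∈ range (K+1), rr k + ∑ k ∈ Ico (K+1) (n+1), rr k := by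
        rw [range_eq_Ico, range_eq_Ico]
        exact (Finset.sum_Ico_consecutive _ (Nat.zero_le _) hKn).symm
      have htail1 : ∑ k ∈ Ico (K+1) (n+1), rr k * pr (n-k) ≤ ∑ k ∈ Ico (K+1) (n+1), rr k :=
        Finset.sum_le_sum (fun k _ => mul_le_of_le_one_right (hrr0 k) (hpr1 _))
      have htail2 : ∑ k ∈ range (n+1), rr k ≤ mr :=
        sum_le_hasSum _ (fun i _ => hrr0 i) hrrsum
      have heq : ∑ k ∈ range (K+1), rr k * pr (ψ j - (2*p*p + k))
          = ∑ k ∈ range (K+1), rr k * pr (n - k) := by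
        apply Finset.sum_congr rfl; intro k _; rw [hrw k]
      rw [heq]
      linarith
    have h := ge_of_tendsto (hconv1.add (hconv2.add tendsto_const_nhds)) hev
    rw [Finset.sum_mul]
    simpa using h
  have hlo : 1 ≤ mr * mu := by
    have hconv : Tendsto (fun K : ℕ => (∑ k ∈ range (K+1), rr k) * mu
        + (mr - ∑ k ∈ range (K+1), rr k)) atTop (𝓝 (mr * mu + (mr - mr))) :=
      (hrrpartial.mul_const mu).add (tendsto_const_nhds.sub hrrpartial)
    have h := ge_of_tendsto hconv (Eventually.of_forall hlower)
    simpa using h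
  -- conclude
  have hmrpos : (0:ℝ) < mr := by linarith
  have h1 : lam ≤ 1/mr := by rw [le_div_iff₀ hmrpos]; linarith [hup]
  have h2 : 1/mr ≤ mu := by rw [div_le_iff₀ hmrpos]; linarith [hlo]
  have hlameq : lam = 1/mr := le_antisymm h1 (h2.trans hmulam)
  have hmueq : mu = 1/mr := le_antisymm (hmulam.trans h1) h2
  exact tendsto_of_liminf_eq_limsup hmueq hlameq hBddAbove hBddBelow

lemma conv_tendsto (g p : ℕ → ℝ) (G L : ℝ)
    (hg0 : ∀ k, 0 ≤ g k) (hgsum : HasSum g G)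
    (hp0 : ∀ n, 0 ≤ p n) (hp1 : ∀ n, p n ≤ 1)
    (hL0 : 0 ≤ L) (hL1 : L ≤ 1)
    (hp : Tendsto p atTop (𝓝 L)) :
    Tendsto (fun n => ∑ k ∈ range (n+1), g k * p (n-k)) atTop (𝓝 (G * L)) := by
  have hG0 : 0 ≤ G := hgsum.tsum_eq ▸ tsum_nonneg hg0
  rw [Metric.tendsto_atTop]
  intro εr hεr
  set δ := εr / (G + 3) with hδ
  have hδ0 : 0 < δ := div_pos hεr (by linarith)
  have hδε : δ * (G + 3) = εr := div_mul_cancel₀ εr (by linarith)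
  obtain ⟨K, hK⟩ := eventually_atTop.1
    (hgsum.tendsto_sum_nat.eventually (eventually_gt_nhds (by linarith : G - δ < G)))
  obtain ⟨N, hN⟩ := Metric.tendsto_atTop.1 hp δ hδ0
  refine ⟨N + K + 1, fun n hn => ?_⟩
  have hKn : K + 1 ≤ n + 1 := by omega
  have hsplit : ∑ k ∈ range (n+1), g k * p (n-k)
      = ∑ k ∈ range (K+1), g k * p (n-k) + ∑ k ∈ Ico (K+1) (n+1), g k * p (n-k) := by
    rw [range_eq_Ico, range_eq_Ico]
    exact (Finset.sum_Ico_consecutive _ (Nat.zero_le _) hKn).symm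
  have hgsplit : ∑ k ∈ range (n+1), g k
      = ∑ k ∈ range (K+1), g k + ∑ k ∈ Ico (K+1) (n+1), g k := by
    rw [range_eq_Ico, range_eq_Ico]
    exact (Finset.sum_Ico_consecutive _ (Nat.zero_le _) hKn).symm
  have hgn : ∑ k ∈ range (n+1), g k ≤ G := sum_le_hasSum _ (fun i _ => hg0 i) hgsum
  have hKsum : G - δ < ∑ k ∈ range (K+1), g k := hK (K+1) (by omega)
  have hKsum' : ∑ k ∈ range (K+1), g k ≤ G := sum_le_hasSum _ (fun i _ => hg0 i) hgsum
  have hR0 : 0 ≤ ∑ k ∈ Ico (K+1) (n+1), g k * p (n-k) :=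
    Finset.sum_nonneg fun k _ => mul_nonneg (hg0 k) (hp0 _)
  have hR1 : ∑ k ∈ Ico (K+1) (n+1), g k * p (n-k) ≤ δ := by
    calc ∑ k ∈ Ico (K+1) (n+1), g k * p (n-k) ≤ ∑ k ∈ Ico (K+1) (n+1), g k :=
          Finset.sum_le_sum fun k _ => mul_le_of_le_one_right (hg0 k) (hp1 _)
      _ ≤ δ := by linarith
  have hT1 : |∑ k ∈ range (K+1), g k * p (n-k) - (∑ k ∈ range (K+1), g k) * L| ≤ G * δ := by
    rw [Finset.sum_mul, ← Finset.sum_sub_distrib]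
    calc |∑ k ∈ range (K+1), (g k * p (n-k) - g k * L)|
        ≤ ∑ k ∈ range (K+1), |g k * p (n-k) - g k * L| := Finset.abs_sum_le_sum_abs _ _
      _ = ∑ k ∈ range (K+1), g k * |p (n-k) - L| := by
          apply Finset.sum_congr rfl; intro k _
          rw [← mul_sub, abs_mul, abs_of_nonneg (hg0 k)]
      _ ≤ ∑ k ∈ range (K+1), g k * δ := by
          apply Finset.sum_le_sum; intro k hk
          have hkK : k ≤ K := by simp only [Finset.mem_range] at hk; omega
          have hd := hN (n-k) (by omega)
          rw [Real.dist_eq] at hd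
          exact mul_le_mul_of_nonneg_left hd.le (hg0 k)
      _ = (∑ k ∈ range (K+1), g k) * δ := by rw [Finset.sum_mul]
      _ ≤ G * δ := mul_le_mul_of_nonneg_right hKsum' hδ0.le
  have hT2 : |(∑ k ∈ range (K+1), g k) * L - G * L| ≤ δ := by
    rw [← sub_mul, abs_mul]
    have h1 : |∑ k ∈ range (K+1), g k - G| ≤ δ := by
      rw [abs_le]; constructor <;> linarith
    have h2 : |L| ≤ 1 := by rw [abs_le]; constructor <;> linarith
    calc |∑ k ∈ range (K+1), g k - G| * |L| ≤ δ * 1 :=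
          mul_le_mul h1 h2 (abs_nonneg L) hδ0.le
      _ = δ := mul_one δ
  rw [Real.dist_eq, hsplit]
  have habs : |∑ k ∈ range (K+1), g k * p (n-k) + ∑ k ∈ Ico (K+1) (n+1), g k * p (n-k) - G * L|
      ≤ |∑ k ∈ range (K+1), g k * p (n-k) - (∑ k ∈ range (K+1), g k) * L|
        + |(∑ k ∈ range (K+1), g k) * L - G * L|
        + |∑ k ∈ Ico (K+1) (n+1), g k * p (n-k)| := by
    have := abs_add_le (∑ k ∈ range (K+1), g k * p (n-k) - (∑ k ∈ range (K+1), g k) * L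
        + ((∑ k ∈ range (K+1), g k) * L - G * L))
      (∑ k ∈ Ico (K+1) (n+1), g k * p (n-k))
    have h2 := abs_add_le (∑ k ∈ range (K+1), g k * p (n-k) - (∑ k ∈ range (K+1), g k) * L)
      ((∑ k ∈ range (K+1), g k) * L - G * L)
    calc |_| = |(∑ k ∈ range (K+1), g k * p (n-k) - (∑ k ∈ range (K+1), g k) * L
          + ((∑ k ∈ range (K+1), g k) * L - G * L))
          + ∑ k ∈ Ico (K+1) (n+1), g k * p (n-k)| := by ring_nf
      _ ≤ _ := by
          refine le_trans this ?_
          have h3 : |∑ k ∈ Ico (K+1) (n+1), g k * p (n-k)| = ∑ k ∈ Ico (K+1) (n+1), g k * p (n-k) :=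
            abs_of_nonneg hR0
          linarith [h2]
  have hRabs : |∑ k ∈ Ico (K+1) (n+1), g k * p (n-k)| ≤ δ := by
    rw [abs_of_nonneg hR0]; exact hR1
  calc |∑ k ∈ range (K+1), g k * p (n-k) + ∑ k ∈ Ico (K+1) (n+1), g k * p (n-k) - G * L|
      ≤ G * δ + δ + δ := by linarith
    _ < εr := by nlinarith

end RenewalAux

namespace MarkovAux

variable {σ : Type} (M : σ → σ → ℝ≥0∞) (α : σ) (init : σ → ℝ≥0∞)

/-- taboo evolution: kill mass entering `α` after time 0 -/
def taboo (start : σ → ℝ≥0∞) : ℕ → σ → ℝ≥0∞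
  | 0 => start
  | n+1 => fun y => if y = α then 0 else ∑' x, taboo start n x * M x y

def marg (n : ℕ) (y : σ) : ℝ≥0∞ := ∑' x, init x * stepProb M n x y

/-- delta at α -/
def del : σ → ℝ≥0∞ := fun y => if y = α then 1 else 0

def gtab : ℕ → σ → ℝ≥0∞ := taboo M α (del α)
def htab : ℕ → σ → ℝ≥0∞ := taboo M α init

def fff : ℕ → ℝ≥0∞
  | 0 => 0
  | k+1 => ∑' x, gtab M α k x * M x α

def bbb : ℕ → ℝ≥0∞
  | 0 => 0
  | n+1 => ∑' x, htab M α init n x * M x α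

def Gk (k : ℕ) : ℝ≥0∞ := ∑' y, gtab M α k y
def Hn (n : ℕ) : ℝ≥0∞ := ∑' y, htab M α init n y

lemma marg_zero (y : σ) : marg M init 0 y = init y := by
  unfold marg stepProb
  rw [tsum_eq_single y]
  · simp
  · intro b hb; simp [hb]

lemma marg_succ (n : ℕ) (y : σ) :
    marg M init (n+1) y = ∑' x, marg M init n x * M x y := by
  unfold marg
  calc ∑' x, init x * stepProb M (n+1) x y
      = ∑' x, ∑' u, init x * stepProb M n x u * M u y := by
        apply tsum_congr; intro x
        show init x * ∑' u, stepProb M n x u * M u y = _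
        rw [← ENNReal.tsum_mul_left]
        exact tsum_congr fun u => by ring
    _ = ∑' u, ∑' x, init x * stepProb M n x u * M u y := ENNReal.tsum_comm
    _ = ∑' u, (∑' x, init x * stepProb M n x u) * M u y := by
        exact tsum_congr fun u => by rw [ENNReal.tsum_mul_right]

lemma step_rowsum (hrow : ∀ x, ∑' y, M x y = 1) (n : ℕ) (x : σ) :
    ∑' y, stepProb M n x y = 1 := by
  induction n generalizing x with
  | zero =>
    show (∑' y, if x = y then (1:ℝ≥0∞) else 0) = 1
    rw [tsum_eq_single x]
    · simp
    · intro b hb; simp [Ne.symm hb]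
  | succ n ih =>
    show (∑' y, ∑' u, stepProb M n x u * M u y) = 1
    rw [ENNReal.tsum_comm]
    calc ∑' u, ∑' y, stepProb M n x u * M u y
        = ∑' u, stepProb M n x u * ∑' y, M u y := by
          exact tsum_congr fun u => ENNReal.tsum_mul_left
      _ = ∑' u, stepProb M n x u := by
          exact tsum_congr fun u => by rw [hrow u, mul_one]
      _ = 1 := ih x

lemma marg_mass (hrow : ∀ x, ∑' y, M x y = 1) (hinit : ∑' x, init x = 1) (n : ℕ) :
    ∑' y, marg M init n y = 1 := by
  unfold marg
  rw [ENNReal.tsum_comm]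
  calc ∑' x, ∑' y, init x * stepProb M n x y
      = ∑' x, init x * ∑' y, stepProb M n x y := tsum_congr fun x => ENNReal.tsum_mul_left
    _ = ∑' x, init x := tsum_congr fun x => by rw [step_rowsum M hrow n x, mul_one]
    _ = 1 := hinit

lemma gtab_zero (y : σ) : gtab M α 0 y = if y = α then 1 else 0 := rfl

lemma gtab_succ (k : ℕ) (y : σ) :
    gtab M α (k+1) y = if y = α then 0 else ∑' x, gtab M α k x * M x y := rfl

lemma gtab_alpha (k : ℕ) (hk : 1 ≤ k) : gtab M α k α = 0 := by
  cases k with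
  | zero => omega
  | succ k => rw [gtab_succ, if_pos rfl]

lemma tsum_split_ite (f : σ → ℝ≥0∞) (a : σ) :
    ∑' y, f y = f a + ∑' y, (if y = a then 0 else f y) := by
  have h : ∀ y, f y = (if y = a then f a else 0) + (if y = a then 0 else f y) := by
    intro y
    by_cases hy : y = a
    · subst hy; simp
    · simp [hy]
  rw [tsum_congr h, ENNReal.tsum_add, tsum_ite_eq]

lemma htab_zero (y : σ) : htab M α init 0 y = init y := rfl

lemma htab_succ (n : ℕ) (y : σ) :
    htab M α init (n+1) y = if y = α then 0 else ∑' x, htab M α init n x * M x y := rfl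

/-- core expansion step -/
lemma expand_core (n : ℕ) (y : σ)
    (IH : ∀ x, marg M init n x
      = htab M α init n x + ∑ j ∈ range (n+1), marg M init j α * gtab M α (n-j) x) :
    marg M init (n+1) y = (∑' x, htab M α init n x * M x y)
      + ∑ j ∈ range (n+1), marg M init j α * (∑' x, gtab M α (n-j) x * M x y) := by
  rw [marg_succ]
  calc ∑' x, marg M init n x * M x y
      = ∑' x, (htab M α init n x * M x y
          + ∑ j ∈ range (n+1), marg M init j α * (gtab M α (n-j) x * M x y)) := by
        apply tsum_congr; intro x
        rw [IH x, add_mul, Finset.sum_mul]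
        congr 1
        exact Finset.sum_congr rfl fun j _ => by ring
    _ = (∑' x, htab M α init n x * M x y)
        + ∑' x, ∑ j ∈ range (n+1), marg M init j α * (gtab M α (n-j) x * M x y) :=
        ENNReal.tsum_add
    _ = (∑' x, htab M α init n x * M x y)
        + ∑ j ∈ range (n+1), marg M init j α * (∑' x, gtab M α (n-j) x * M x y) := by
        congr 1
        rw [Summable.tsum_finsetSum (fun j _ => ENNReal.summable)]
        exact Finset.sum_congr rfl fun j _ => ENNReal.tsum_mul_left

theorem decomp (hinitα : init α = 0) (n : ℕ) (y : σ) :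
    marg M init n y
      = htab M α init n y + ∑ j ∈ range (n+1), marg M init j α * gtab M α (n-j) y := by
  induction n generalizing y with
  | zero =>
    simp only [zero_add, Finset.sum_range_one]
    rw [marg_zero, htab_zero, marg_zero, hinitα, zero_mul, add_zero]
  | succ n ih =>
    by_cases hy : y = α
    · rw [hy]
      rw [Finset.sum_range_succ]
      have h1 : htab M α init (n+1) α = 0 := by rw [htab_succ, if_pos rfl]
      have h2 : ∀ j ∈ range (n+1), marg M init j α * gtab M α (n+1-j) α = 0 := by
        intro j hj
        rw [gtab_alpha M α _ (by simp at hj; omega), mul_zero]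
      rw [h1, zero_add, Finset.sum_eq_zero h2, zero_add]
      have h3 : gtab M α (n+1-(n+1)) α = 1 := by simp [gtab_zero]
      rw [h3, mul_one]
    · rw [expand_core M α init n y (fun x => ih x)]
      have h1 : (∑' x, htab M α init n x * M x y) = htab M α init (n+1) y := by
        rw [htab_succ, if_neg hy]
      have h2 : ∀ j ∈ range (n+1),
          marg M init j α * (∑' x, gtab M α (n-j) x * M x y)
            = marg M init j α * gtab M α (n+1-j) y := by
        intro j hj
        have hj' : j ≤ n := by simp at hj; omega
        have heq : n - j + 1 = n + 1 - j := by omega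
        rw [← heq, gtab_succ, if_neg hy]
      rw [h1, Finset.sum_congr rfl h2]
      have h3 : gtab M α (n+1-(n+1)) y = 0 := by simp [gtab_zero, hy]
      congr 1
      rw [eq_comm, Finset.sum_range_succ, h3, mul_zero, add_zero]

theorem renewal_eq (hinitα : init α = 0) (n : ℕ) :
    marg M init (n+1) α = bbb M α init (n+1)
      + ∑ j ∈ range (n+1), marg M init j α * fff M α (n+1-j) := by
  rw [expand_core M α init n α (fun x => decomp M α init hinitα n x)]
  congr 1
  apply Finset.sum_congr rfl
  intro j hj
  have hj' : j ≤ n := by simp at hj; omega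
  have : n + 1 - j = (n - j) + 1 := by omega
  rw [this]
  rfl

lemma Gk_zero : Gk M α 0 = 1 := by
  unfold Gk
  rw [tsum_eq_single α]
  · simp [gtab_zero]
  · intro b hb; simp [gtab_zero, hb]

lemma Hn_zero (hinit : ∑' x, init x = 1) : Hn M α init 0 = 1 := hinit

lemma Gk_succ (hrow : ∀ x, ∑' y, M x y = 1) (k : ℕ) :
    Gk M α (k+1) + fff M α (k+1) = Gk M α k := by
  have key : ∑' y, (∑' x, gtab M α k x * M x y) = Gk M α k := by
    rw [ENNReal.tsum_comm]
    calc ∑' x, ∑' y, gtab M α k x * M x y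
        = ∑' x, gtab M α k x * ∑' y, M x y := tsum_congr fun x => ENNReal.tsum_mul_left
      _ = Gk M α k := tsum_congr fun x => by rw [hrow x, mul_one]
  have split : ∑' y, (∑' x, gtab M α k x * M x y)
      = (∑' x, gtab M α k x * M x α)
        + ∑' y, (if y = α then 0 else ∑' x, gtab M α k x * M x y) :=
    tsum_split_ite _ α
  have hG : Gk M α (k+1) = ∑' y, (if y = α then 0 else ∑' x, gtab M α k x * M x y) := by
    unfold Gk
    exact tsum_congr fun y => by rw [gtab_succ]
  have hf : fff M α (k+1) = ∑' x, gtab M α k x * M x α := rfl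
  rw [hG, hf, ← key, split, add_comm]

lemma Hn_succ (hrow : ∀ x, ∑' y, M x y = 1) (n : ℕ) :
    Hn M α init (n+1) + bbb M α init (n+1) = Hn M α init n := by
  have key : ∑' y, (∑' x, htab M α init n x * M x y) = Hn M α init n := by
    rw [ENNReal.tsum_comm]
    calc ∑' x, ∑' y, htab M α init n x * M x y
        = ∑' x, htab M α init n x * ∑' y, M x y := tsum_congr fun x => ENNReal.tsum_mul_left
      _ = Hn M α init n := tsum_congr fun x => by rw [hrow x, mul_one]
  have split : ∑' y, (∑' x, htab M α init n x * M x y)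
      = (∑' x, htab M α init n x * M x α)
        + ∑' y, (if y = α then 0 else ∑' x, htab M α init n x * M x y) :=
    tsum_split_ite _ α
  have hH : Hn M α init (n+1) = ∑' y, (if y = α then 0 else ∑' x, htab M α init n x * M x y) := by
    unfold Hn
    exact tsum_congr fun y => by rw [htab_succ]
  have hb : bbb M α init (n+1) = ∑' x, htab M α init n x * M x α := rfl
  rw [hH, hb, ← key, split, add_comm]

theorem mass_id (hrow : ∀ x, ∑' y, M x y = 1) (hinit : ∑' x, init x = 1)
    (hinitα : init α = 0) (n : ℕ) :
    Hn M α init n + ∑ j ∈ range (n+1), marg M init j α * Gk M α (n-j) = 1 := by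
  have h := marg_mass M init hrow hinit n
  calc Hn M α init n + ∑ j ∈ range (n+1), marg M init j α * Gk M α (n-j)
      = ∑' y, (htab M α init n y + ∑ j ∈ range (n+1), marg M init j α * gtab M α (n-j) y) := by
        rw [ENNReal.tsum_add]
        congr 1
        rw [Summable.tsum_finsetSum (fun j _ => ENNReal.summable)]
        exact (Finset.sum_congr rfl fun j _ => ENNReal.tsum_mul_left).symm
    _ = ∑' y, marg M init n y := tsum_congr fun y => (decomp M α init hinitα n y).symm
    _ = 1 := h

end MarkovAux

namespace AuxSums
open MarkovAux

lemma tsum_shift (f : ℕ → ℝ≥0∞) : ∑' k, f k = f 0 + ∑' k, f (k+1) :=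
  tsum_eq_zero_add' ENNReal.summable

lemma tsum_option {γ : Type} (f : Option γ → ℝ≥0∞) :
    ∑' x, f x = f none + ∑' s, f (some s) := by
  have h : ∀ x : Option γ, f x = (if x = none then f none else 0) + (if x = none then 0 else f x) := by
    intro x; by_cases hx : x = none
    · subst hx; simp
    · simp [hx]
  rw [tsum_congr h, ENNReal.tsum_add, tsum_ite_eq]
  congr 1
  have h2 := Function.Injective.tsum_eq (g := fun s : γ => some s) (Option.some_injective γ)
    (f := fun x => if x = none then (0:ℝ≥0∞) else f x) (by
      intro x hx
      simp only [Function.mem_support, ne_eq, ite_eq_left_iff, not_forall] at hx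
      obtain ⟨hx0, -⟩ := hx
      match x, hx0 with
      | some s, _ => exact ⟨s, rfl⟩)
  rw [← h2]
  exact tsum_congr (fun s => by simp)

lemma tsum_antidiag (f g : ℕ → ℝ≥0∞) :
    ∑' k, ∑ p ∈ Finset.HasAntidiagonal.antidiagonal k, f p.1 * g p.2 = (∑' i, f i) * (∑' j, g j) := by
  have h1 : ∀ k : ℕ, ∑ p ∈ Finset.HasAntidiagonal.antidiagonal k, f p.1 * g p.2
      = ∑' (p : Finset.HasAntidiagonal.antidiagonal k), f p.1.1 * g p.1.2 :=
    fun k => (Finset.tsum_subtype (Finset.HasAntidiagonal.antidiagonal k) (fun p : ℕ × ℕ => f p.1 * g p.2)).symm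
  calc ∑' k, ∑ p ∈ Finset.HasAntidiagonal.antidiagonal k, f p.1 * g p.2
      = ∑' (k : ℕ) (p : Finset.HasAntidiagonal.antidiagonal k), f p.1.1 * g p.1.2 := tsum_congr h1
    _ = ∑' (x : Σ k : ℕ, Finset.HasAntidiagonal.antidiagonal k), f x.2.1.1 * g x.2.1.2 :=
        (ENNReal.tsum_sigma (fun k (p : Finset.HasAntidiagonal.antidiagonal k) => f p.1.1 * g p.1.2)).symm
    _ = ∑' (p : ℕ × ℕ), f p.1 * g p.2 :=
        Finset.HasAntidiagonal.sigmaAntidiagonalEquivProd.tsum_eq (fun p : ℕ × ℕ => f p.1 * g p.2)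
    _ = ∑' (i : ℕ) (j : ℕ), f i * g j := ENNReal.tsum_prod (f := fun i j => f i * g j)
    _ = (∑' i, f i) * (∑' j, g j) := by
        rw [← ENNReal.tsum_mul_right]
        exact tsum_congr fun i => ENNReal.tsum_mul_left

lemma triangle_le (w c : ℕ → ℝ≥0∞) (hc : ∑' t, c t ≤ 1) (n : ℕ) :
    ∑ j ∈ Finset.range n, ∑ i ∈ Finset.range (j+1), w i * c (j - i)
      ≤ ∑ i ∈ Finset.range n, w i := by
  rw [Finset.sum_sigma' (Finset.range n) (fun j => Finset.range (j+1))
    (fun j i => w i * c (j - i))]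
  have hbij : ∑ x ∈ (Finset.range n).sigma (fun j => Finset.range (j+1)),
        w x.2 * c (x.1 - x.2)
      = ∑ x ∈ (Finset.range n).sigma (fun i => Finset.range (n - i)), w x.1 * c x.2 := by
    apply Finset.sum_nbij' (i := fun x => (⟨x.2, x.1 - x.2⟩ : Σ _ : ℕ, ℕ))
      (j := fun x => (⟨x.1 + x.2, x.1⟩ : Σ _ : ℕ, ℕ))
    · intro a ha
      simp only [Finset.mem_sigma, Finset.mem_range] at ha ⊢
      omega
    · intro a ha
      simp only [Finset.mem_sigma, Finset.mem_range] at ha ⊢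
      omega
    · rintro ⟨a1, a2⟩ ha
      simp only [Finset.mem_sigma, Finset.mem_range] at ha
      have h' : a2 + (a1 - a2) = a1 := by omega
      simp [h']
    · rintro ⟨a1, a2⟩ ha
      simp only [Finset.mem_sigma, Finset.mem_range] at ha
      have h' : a1 + a2 - a1 = a2 := by omega
      simp [h']
    · intro a ha; rfl
  rw [hbij, Finset.sum_sigma]
  apply Finset.sum_le_sum
  intro i _
  calc ∑ x ∈ Finset.range (n - i), w i * c x
      = w i * ∑ x ∈ Finset.range (n - i), c x := by rw [Finset.mul_sum]
    _ ≤ w i * 1 := by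
        apply mul_le_mul_of_nonneg_left _ zero_le
        exact le_trans (ENNReal.sum_le_tsum _) hc
    _ = w i := mul_one _

end AuxSums

namespace MarkovAux2
open MarkovAux AuxSums Finset

variable {σ : Type} (M : σ → σ → ℝ≥0∞) (α : σ) (init : σ → ℝ≥0∞)

lemma renewal_eq' (hinitα : init α = 0) (n : ℕ) :
    marg M init n α = bbb M α init n
      + ∑ k ∈ range (n+1), fff M α k * marg M init (n-k) α := by
  cases n with
  | zero =>
    rw [marg_zero, hinitα, Finset.sum_range_one]
    show (0:ℝ≥0∞) = bbb M α init 0 + fff M α 0 * marg M init (0-0) α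
    rw [show bbb M α init 0 = 0 from rfl, show fff M α 0 = 0 from rfl, zero_mul, add_zero]
  | succ n =>
    rw [renewal_eq M α init hinitα n]
    congr 1
    rw [Finset.sum_range_succ' (fun k => fff M α k * marg M init (n+1-k) α) (n+1)]
    have h0 : fff M α 0 * marg M init (n+1-0) α = 0 := by
      rw [show fff M α 0 = 0 from rfl, zero_mul]
    rw [h0, add_zero,
      ← Finset.sum_range_reflect (fun j => marg M init j α * fff M α (n+1-j)) (n+1)]
    apply Finset.sum_congr rfl
    intro j hj
    have hjn : j ≤ n := by simp only [Finset.mem_range] at hj; omega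
    have e1 : n + 1 - 1 - j = n - j := by omega
    have e2 : n + 1 - (n - j) = j + 1 := by omega
    have e3 : n + 1 - (j+1) = n - j := by omega
    rw [e1, e2, e3, mul_comm]

lemma mass_id' (hrow : ∀ x, ∑' y, M x y = 1) (hinit : ∑' x, init x = 1)
    (hinitα : init α = 0) (n : ℕ) :
    Hn M α init n + ∑ k ∈ range (n+1), Gk M α k * marg M init (n-k) α = 1 := by
  have h := mass_id M α init hrow hinit hinitα n
  rw [← h]
  congr 1
  rw [← Finset.sum_range_reflect (fun k => Gk M α k * marg M init (n-k) α) (n+1)]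
  apply Finset.sum_congr rfl
  intro j hj
  have hjn : j ≤ n := by simp only [Finset.mem_range] at hj; omega
  have e1 : n + 1 - 1 - j = n - j := by omega
  have e2 : n - (n - j) = j := by omega
  rw [e1, e2, mul_comm]

lemma decomp' (hinitα : init α = 0) (n : ℕ) (y : σ) :
    marg M init n y = htab M α init n y
      + ∑ k ∈ range (n+1), gtab M α k y * marg M init (n-k) α := by
  have h := decomp M α init hinitα n y
  rw [h]
  congr 1
  rw [← Finset.sum_range_reflect (fun k => gtab M α k y * marg M init (n-k) α) (n+1)]
  apply Finset.sum_congr rfl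
  intro j hj
  have hjn : j ≤ n := by simp only [Finset.mem_range] at hj; omega
  have e1 : n + 1 - 1 - j = n - j := by omega
  have e2 : n - (n - j) = j := by omega
  rw [e1, e2, mul_comm]

lemma G_stat (hfone : ∑' k, fff M α (k+1) = 1) (y : σ) :
    ∑' x, (∑' k, gtab M α k x) * M x y = ∑' k, gtab M α k y := by
  have h1 : ∑' x, (∑' k, gtab M α k x) * M x y = ∑' k, ∑' x, gtab M α k x * M x y := by
    calc ∑' x, (∑' k, gtab M α k x) * M x y
        = ∑' x, ∑' k, gtab M α k x * M x y :=
          tsum_congr fun x => (ENNReal.tsum_mul_right).symm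
      _ = ∑' k, ∑' x, gtab M α k x * M x y := ENNReal.tsum_comm
  rw [h1]
  by_cases hy : y = α
  · rw [hy]
    have h2 : ∀ k, (∑' x, gtab M α k x * M x α) = fff M α (k+1) := fun k => rfl
    rw [tsum_congr h2, hfone, tsum_shift (fun k => gtab M α k α)]
    have h3 : ∀ k, gtab M α (k+1) α = 0 := fun k => gtab_alpha M α (k+1) (by omega)
    rw [tsum_congr h3]
    simp [gtab_zero]
  · have h2 : ∀ k, (∑' x, gtab M α k x * M x y) = gtab M α (k+1) y := by
      intro k; rw [gtab_succ, if_neg hy]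
    rw [tsum_congr h2, tsum_shift (fun k => gtab M α k y), gtab_zero, if_neg hy, zero_add]

lemma G_total : ∑' y, ∑' k, gtab M α k y = ∑' k, Gk M α k := by
  rw [ENNReal.tsum_comm]
  rfl

end MarkovAux2

end Hidden

section ChainSec
open Filter Topology Finset MarkovAux AuxSums

def wseq (c : ℕ → ℝ≥0∞) (ε : ℝ≥0∞) : ℕ → ℝ≥0∞
  | 0 => 1
  | (j+1) => (1-ε) * ∑ i ∈ (Finset.range (j+1)).attach, wseq c ε i.1 * c (j - i.1)
decreasing_by exact Finset.mem_range.mp i.2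

lemma wseq_zero (c : ℕ → ℝ≥0∞) (ε : ℝ≥0∞) : wseq c ε 0 = 1 := by rw [wseq]

lemma wseq_succ (c : ℕ → ℝ≥0∞) (ε : ℝ≥0∞) (j : ℕ) :
    wseq c ε (j+1) = (1-ε) * ∑ i ∈ Finset.range (j+1), wseq c ε i * c (j - i) := by
  rw [wseq, Finset.sum_attach (Finset.range (j+1)) (fun x => wseq c ε x * c (j - x))]

variable {S A : Type} (E : ELP S A) (π : S → A → ℝ≥0∞) (ε : ℝ≥0∞) (sT : S)

local notation "M₀" => chainOf E.P π
local notation "TT" => TermSet E.P E.ρ0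
local notation "MF" => perturbM (chainOf E.P π) (TermSet E.P E.ρ0) sT ε
local notation "IF" => (fun x : Option S => Option.elim x (0:ℝ≥0∞) E.ρ0)
local notation "ee" => epiStep (chainOf E.P π) (TermSet E.P E.ρ0) sT
local notation "cc" => termHit (chainOf E.P π) (TermSet E.P E.ρ0) sT

lemma perturbM_some_some (s s' : S) :
    MF (some s) (some s') = if s ∈ TT then (1-ε) * chainOf E.P π s s' else chainOf E.P π s s' := rfl

lemma perturbM_some_none (s : S) :
    MF (some s) none = if s ∈ TT then ε else 0 := rfl

lemma perturbM_none_some (s' : S) : MF none (some s') = chainOf E.P π sT s' := rfl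

lemma perturbM_none_none : MF none none = 0 := rfl

lemma chain_rowsum (hπ : ∀ s, ∑' a, π s a = 1) (s : S) :
    ∑' s', chainOf E.P π s s' = 1 := by
  unfold chainOf
  rw [ENNReal.tsum_comm]
  calc ∑' a, ∑' s', π s a * E.P s a s'
      = ∑' a, π s a * ∑' s', E.P s a s' := tsum_congr fun a => ENNReal.tsum_mul_left
    _ = ∑' a, π s a := tsum_congr fun a => by rw [E.P_sum s a, mul_one]
    _ = 1 := hπ s

lemma sT_mem (hsT : 0 < E.ρ0 sT) : sT ∈ TermSet E.P E.ρ0 :=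
  fun s₀ hs₀ a a' => E.homog sT s₀ hsT hs₀ a a'

lemma supp_T (s : S) (hs : E.ρ0 s ≠ 0) : s ∈ TermSet E.P E.ρ0 :=
  fun s₀ hs₀ a a' => E.homog s s₀ (pos_iff_ne_zero.mpr hs) hs₀ a a'

lemma row_eq (hπ : ∀ s, ∑' a, π s a = 1) (hsT : 0 < E.ρ0 sT)
    {s : S} (hs : s ∈ TermSet E.P E.ρ0) (v : S) :
    chainOf E.P π s v = chainOf E.P π sT v := by
  have hA : Nonempty A := by
    by_contra h
    have : IsEmpty A := not_nonempty_iff.mp h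
    have h0 := hπ sT
    rw [tsum_empty] at h0
    exact zero_ne_one h0
  obtain ⟨a₀⟩ := hA
  have hsrow : ∀ a, E.P s a = E.P sT a₀ := fun a => hs sT hsT a a₀
  have hsTrow : ∀ a, E.P sT a = E.P sT a₀ := fun a => (sT_mem E sT hsT) sT hsT a a₀
  unfold chainOf
  calc ∑' a, π s a * E.P s a v
      = ∑' a, π s a * E.P sT a₀ v := tsum_congr fun a => by rw [hsrow a]
    _ = (∑' a, π s a) * E.P sT a₀ v := ENNReal.tsum_mul_right
    _ = E.P sT a₀ v := by rw [hπ s, one_mul]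
    _ = (∑' a, π sT a) * E.P sT a₀ v := by rw [hπ sT, one_mul]
    _ = ∑' a, π sT a * E.P sT a v := by
        rw [← ENNReal.tsum_mul_right]
        exact tsum_congr fun a => by rw [hsTrow a]

lemma perturb_rowsum (hπ : ∀ s, ∑' a, π s a = 1) (hε1 : ε ≤ 1) (x : Option S) :
    ∑' y, MF x y = 1 := by
  rw [tsum_option]
  cases x with
  | none =>
    rw [perturbM_none_none, zero_add,
      tsum_congr (fun s' => perturbM_none_some E π ε sT s')]
    exact chain_rowsum E π hπ sT
  | some s =>
    rw [perturbM_some_none,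
      tsum_congr (fun s' => perturbM_some_some E π ε sT s s')]
    by_cases hs : s ∈ TT
    · rw [if_pos hs, tsum_congr (fun s' => if_pos hs), ENNReal.tsum_mul_left,
        chain_rowsum E π hπ s, mul_one, add_comm]
      exact tsub_add_cancel_of_le hε1
    · rw [if_neg hs, tsum_congr (fun s' => if_neg hs), zero_add]
      exact chain_rowsum E π hπ s

lemma init_mass : ∑' x : Option S, Option.elim x (0:ℝ≥0∞) E.ρ0 = 1 := by
  rw [tsum_option]
  show (0:ℝ≥0∞) + ∑' s, E.ρ0 s = 1
  rw [zero_add]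
  exact E.ρ0_sum

lemma gtab_one (y : Option S) : gtab MF none 1 y = MF none y := by
  rw [gtab_succ]
  by_cases hy : y = none
  · rw [if_pos hy, hy, perturbM_none_none]
  · rw [if_neg hy]
    rw [tsum_eq_single none]
    · show del (none : Option S) none * MF none y = MF none y
      unfold del
      rw [if_pos rfl, one_mul]
    · intro b hb
      show del (none : Option S) b * MF b y = 0
      unfold del
      rw [if_neg hb, zero_mul]

lemma htab_eq (hπ : ∀ s, ∑' a, π s a = 1) (hsT : 0 < E.ρ0 sT) (n : ℕ) (y : Option S) :
    htab MF none IF (n+1) y = (1-ε) * gtab MF none (n+1) y := by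
  induction n generalizing y with
  | zero =>
    rw [htab_succ, gtab_one]
    by_cases hy : y = none
    · rw [if_pos hy, hy, perturbM_none_none, mul_zero]
    · rw [if_neg hy]
      obtain ⟨v, rfl⟩ : ∃ v, y = some v := Option.ne_none_iff_exists'.mp hy
      rw [perturbM_none_some, tsum_option]
      have h0 : htab MF none IF 0 none * MF none (some v) = 0 := by
        show (0:ℝ≥0∞) * MF none (some v) = 0
        rw [zero_mul]
      rw [h0, zero_add]
      have hterm : ∀ s : S, htab MF none IF 0 (some s) * MF (some s) (some v)
          = E.ρ0 s * ((1-ε) * chainOf E.P π sT v) := by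
        intro s
        show E.ρ0 s * MF (some s) (some v) = _
        by_cases h0 : E.ρ0 s = 0
        · rw [h0, zero_mul, zero_mul]
        · have hsT' : s ∈ TermSet E.P E.ρ0 := supp_T E s h0
          rw [perturbM_some_some, if_pos hsT', row_eq E π sT hπ hsT hsT' v]
      rw [tsum_congr hterm, ENNReal.tsum_mul_right, E.ρ0_sum, one_mul]
  | succ n ih =>
    rw [htab_succ, gtab_succ]
    by_cases hy : y = none
    · rw [if_pos hy, if_pos hy, mul_zero]
    · rw [if_neg hy, if_neg hy, ← ENNReal.tsum_mul_left]
      exact tsum_congr fun x => by rw [ih x, mul_assoc]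

lemma bbb_one : bbb MF none IF 1 = ε := by
  show ∑' x, htab MF none IF 0 x * MF x none = ε
  rw [tsum_option]
  have h0 : htab MF none IF 0 none * MF none none = 0 := by
    rw [perturbM_none_none, mul_zero]
  rw [h0, zero_add]
  have hterm : ∀ s : S, htab MF none IF 0 (some s) * MF (some s) none = E.ρ0 s * ε := by
    intro s
    show E.ρ0 s * MF (some s) none = E.ρ0 s * ε
    by_cases h0 : E.ρ0 s = 0
    · rw [h0, zero_mul, zero_mul]
    · rw [perturbM_some_none, if_pos (supp_T E s h0)]
  rw [tsum_congr hterm, ENNReal.tsum_mul_right, E.ρ0_sum, one_mul]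

lemma bbb_eq (hπ : ∀ s, ∑' a, π s a = 1) (hsT : 0 < E.ρ0 sT) (n : ℕ) :
    bbb MF none IF (n+2) = (1-ε) * fff MF none (n+2) := by
  show ∑' x, htab MF none IF (n+1) x * MF x none
      = (1-ε) * ∑' x, gtab MF none (n+1) x * MF x none
  rw [← ENNReal.tsum_mul_left]
  exact tsum_congr fun x => by rw [htab_eq E π ε sT hπ hsT n x, mul_assoc]

lemma Hn_eq (hπ : ∀ s, ∑' a, π s a = 1) (hsT : 0 < E.ρ0 sT) (n : ℕ) :
    Hn MF none IF (n+1) = (1-ε) * Gk MF none (n+1) := by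
  show ∑' y, htab MF none IF (n+1) y = (1-ε) * ∑' y, gtab MF none (n+1) y
  rw [← ENNReal.tsum_mul_left]
  exact tsum_congr fun y => htab_eq E π ε sT hπ hsT n y

lemma estep (hπ : ∀ s, ∑' a, π s a = 1) (hsT : 0 < E.ρ0 sT) (t : ℕ) (v : S) :
    (∑' s, ee t s * MF (some s) (some v))
      = ee (t+1) v + (1-ε) * (cc t * chainOf E.P π sT v) := by
  have hsplit : ∀ s, ee t s * MF (some s) (some v)
      = (if s ∈ TT then 0 else ee t s * chainOf E.P π s v)
        + (if s ∈ TT then (1-ε) * (ee t s * chainOf E.P π sT v) else 0) := by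
    intro s
    by_cases hs : s ∈ TT
    · rw [if_pos hs, if_pos hs, zero_add, perturbM_some_some, if_pos hs,
        row_eq E π sT hπ hsT hs v]
      ring
    · rw [if_neg hs, if_neg hs, add_zero, perturbM_some_some, if_neg hs]
  rw [tsum_congr hsplit, ENNReal.tsum_add]
  congr 1
  calc ∑' s, (if s ∈ TT then (1-ε) * (ee t s * chainOf E.P π sT v) else 0)
      = ∑' s, (1-ε) * ((if s ∈ TT then ee t s else 0) * chainOf E.P π sT v) := by
        apply tsum_congr; intro s
        by_cases hs : s ∈ TT
        · rw [if_pos hs, if_pos hs]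
        · rw [if_neg hs, if_neg hs, zero_mul, mul_zero]
    _ = (1-ε) * ((∑' s, if s ∈ TT then ee t s else 0) * chainOf E.P π sT v) := by
        rw [ENNReal.tsum_mul_left, ENNReal.tsum_mul_right]
    _ = (1-ε) * (cc t * chainOf E.P π sT v) := rfl

lemma gdecomp (hπ : ∀ s, ∑' a, π s a = 1) (hsT : 0 < E.ρ0 sT) : ∀ k (v : S),
    gtab MF none (k+1) (some v) = ∑ j ∈ Finset.range (k+1), wseq cc ε j * ee (k-j) v := by
  intro k
  induction k with
  | zero =>
    intro v
    rw [gtab_one, perturbM_none_some]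
    rw [Finset.sum_range_one, wseq_zero, one_mul]
    rfl
  | succ k ih =>
    intro v
    rw [gtab_succ, if_neg (by simp : ¬ (some v : Option S) = none)]
    rw [tsum_option]
    rw [gtab_alpha MF none (k+1) (by omega), zero_mul, zero_add]
    rw [tsum_congr (fun s => by rw [ih s])]
    rw [tsum_congr (fun s => Finset.sum_mul (Finset.range (k+1)) (fun j => wseq cc ε j * ee (k-j) s) (MF (some s) (some v)))]
    rw [Summable.tsum_finsetSum (fun j _ => ENNReal.summable)]
    have hj : ∀ j ∈ Finset.range (k+1),
        (∑' s, wseq cc ε j * ee (k-j) s * MF (some s) (some v))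
        = wseq cc ε j * (ee (k-j+1) v + (1-ε) * (cc (k-j) * chainOf E.P π sT v)) := by
      intro j _
      rw [← estep E π ε sT hπ hsT (k-j) v, ← ENNReal.tsum_mul_left]
      exact tsum_congr fun s => by ring
    rw [Finset.sum_congr rfl hj]
    rw [Finset.sum_congr rfl (fun j _ => mul_add (wseq cc ε j) _ _), Finset.sum_add_distrib]
    have h1 : ∑ j ∈ Finset.range (k+1), wseq cc ε j * ee (k-j+1) v
        = ∑ j ∈ Finset.range (k+1), wseq cc ε j * ee (k+1-j) v :=
      Finset.sum_congr rfl fun j hj => by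
        have hjk := Finset.mem_range.mp hj
        have heq : k - j + 1 = k + 1 - j := by omega
        rw [heq]
    have h2 : ∑ j ∈ Finset.range (k+1), wseq cc ε j * ((1-ε) * (cc (k-j) * chainOf E.P π sT v))
        = wseq cc ε (k+1) * ee 0 v := by
      rw [wseq_succ]
      calc ∑ j ∈ Finset.range (k+1), wseq cc ε j * ((1-ε) * (cc (k-j) * chainOf E.P π sT v))
          = ((1-ε) * ∑ j ∈ Finset.range (k+1), wseq cc ε j * cc (k-j)) * chainOf E.P π sT v := by
            rw [Finset.mul_sum, Finset.sum_mul]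
            exact Finset.sum_congr rfl fun j _ => by ring
        _ = (1-ε) * (∑ j ∈ Finset.range (k+1), wseq cc ε j * cc (k-j)) * ee 0 v := by
            rfl
    rw [h1, h2, Finset.sum_range_succ (fun j => wseq cc ε j * ee (k+1-j) v) (k+1), Nat.sub_self]

lemma Et_zero (hπ : ∀ s, ∑' a, π s a = 1) : ∑' v, ee 0 v = 1 := by
  show ∑' v, chainOf E.P π sT v = 1
  exact chain_rowsum E π hπ sT

lemma Et_succ (hπ : ∀ s, ∑' a, π s a = 1) (t : ℕ) :
    (∑' v, ee (t+1) v) + cc t = ∑' v, ee t v := by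
  have h1 : ∑' u, ee (t+1) u = ∑' v, (if v ∈ TT then 0 else ee t v) := by
    calc ∑' u, ee (t+1) u
        = ∑' u, ∑' v, (if v ∈ TT then 0 else ee t v * chainOf E.P π v u) := rfl
      _ = ∑' v, ∑' u, (if v ∈ TT then 0 else ee t v * chainOf E.P π v u) := ENNReal.tsum_comm
      _ = ∑' v, (if v ∈ TT then 0 else ee t v) := by
          apply tsum_congr; intro v
          by_cases hv : v ∈ TT
          · simp [hv]
          · rw [if_neg hv, tsum_congr (fun u => if_neg hv), ENNReal.tsum_mul_left,
              chain_rowsum E π hπ v, mul_one]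
  rw [h1]
  show _ + (∑' v, if v ∈ TT then ee t v else 0) = _
  rw [← ENNReal.tsum_add]
  apply tsum_congr; intro v
  by_cases hv : v ∈ TT <;> simp [hv]

lemma cc_le_one (hcsum : ∑' t, cc t = 1) (t : ℕ) : cc t ≤ 1 := by
  rw [← hcsum]; exact ENNReal.le_tsum t

lemma Et_eq_tail (hπ : ∀ s, ∑' a, π s a = 1) (hcsum : ∑' t, cc t = 1) :
    ∀ t, (∑' v, ee t v) = ∑' i, (if i < t then 0 else cc i) := by
  intro t
  induction t with
  | zero =>
    rw [Et_zero E π sT hπ, ← hcsum]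
    exact (tsum_congr fun i => if_neg (by omega)).symm
  | succ t ih =>
    have hrec := Et_succ E π sT hπ t
    have htail : (∑' i, (if i < t then 0 else cc i))
        = cc t + ∑' i, (if i < t+1 then 0 else cc i) := by
      have hpt : ∀ i : ℕ, (if i < t then 0 else cc i)
          = (if i = t then cc t else 0) + (if i < t+1 then 0 else cc i) := by
        intro i
        rcases lt_trichotomy i t with h | h | h
        · rw [if_pos h, if_neg (by omega), if_pos (by omega), add_zero]
        · subst h
          rw [if_neg (by omega), if_pos rfl, if_pos (by omega), add_zero]
        · rw [if_neg (by omega), if_neg (by omega), if_neg (by omega), zero_add]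
      rw [tsum_congr hpt, ENNReal.tsum_add, tsum_ite_eq]
    rw [ih, htail] at hrec
    have hfin : cc t ≠ ⊤ :=
      ((cc_le_one E π sT hcsum t).trans_lt ENNReal.one_lt_top).ne
    have hrec' : cc t + (∑' v, ee (t+1) v) = cc t + ∑' i, (if i < t+1 then 0 else cc i) := by
      rw [add_comm] at hrec
      exact hrec
    exact (ENNReal.add_right_inj hfin).mp hrec'

lemma Et_total (hπ : ∀ s, ∑' a, π s a = 1) (hcsum : ∑' t, cc t = 1) :
    ∑' t, ∑' v, ee t v = meanEpiLen (chainOf E.P π) (TermSet E.P E.ρ0) sT := by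
  rw [tsum_congr (Et_eq_tail E π sT hπ hcsum), ENNReal.tsum_comm]
  apply tsum_congr; intro i
  have h1 : ∑' t, (if i < t then 0 else cc i) = ∑ t ∈ Finset.range (i+1), (if i < t then 0 else cc i) := by
    apply tsum_eq_sum
    intro t ht
    rw [if_pos (by simp only [Finset.mem_range] at ht; omega)]
  rw [h1, Finset.sum_congr rfl (fun t ht => if_neg (by simp only [Finset.mem_range] at ht; omega)),
    Finset.sum_const, Finset.card_range, nsmul_eq_mul]
  push_cast
  rfl

lemma Gk_formula (hπ : ∀ s, ∑' a, π s a = 1) (hsT : 0 < E.ρ0 sT) (k : ℕ) :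
    Gk MF none (k+1) = ∑ j ∈ Finset.range (k+1), wseq cc ε j * ∑' v, ee (k-j) v := by
  show ∑' y, gtab MF none (k+1) y = _
  rw [tsum_option, gtab_alpha MF none (k+1) (by omega), zero_add,
    tsum_congr (fun s => gdecomp E π ε sT hπ hsT k s),
    Summable.tsum_finsetSum (fun j _ => ENNReal.summable)]
  exact Finset.sum_congr rfl fun j _ => ENNReal.tsum_mul_left

lemma wseq_partial (hc1 : ∑' t, cc t ≤ 1) (hε0 : 0 < ε) (hε1 : ε < 1) :
    ∀ n, ∑ j ∈ Finset.range (n+1), wseq cc ε j ≤ ε⁻¹ := by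
  have hεtop : ε ≠ ⊤ := (hε1.trans ENNReal.one_lt_top).ne
  have hinvfin : ε⁻¹ ≠ ⊤ := by
    simp [ENNReal.inv_ne_top, hε0.ne']
  intro n
  induction n with
  | zero =>
    rw [Finset.sum_range_one, wseq_zero]
    exact ENNReal.one_le_inv.mpr hε1.le
  | succ n ih =>
    rw [Finset.sum_range_succ']
    have h1 : ∑ i ∈ Finset.range (n+1), wseq cc ε (i+1)
        = (1-ε) * ∑ i ∈ Finset.range (n+1), ∑ l ∈ Finset.range (i+1), wseq cc ε l * cc (i-l) := by
      rw [Finset.mul_sum]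
      exact Finset.sum_congr rfl fun i _ => wseq_succ cc ε i
    rw [h1, wseq_zero]
    have h2 : ∑ i ∈ Finset.range (n+1), ∑ l ∈ Finset.range (i+1), wseq cc ε l * cc (i-l)
        ≤ ∑ l ∈ Finset.range (n+1), wseq cc ε l := by
      have := AuxSums.triangle_le (wseq cc ε) cc hc1 (n+1)
      exact this
    calc (1-ε) * (∑ i ∈ Finset.range (n+1), ∑ l ∈ Finset.range (i+1), wseq cc ε l * cc (i-l)) + 1
        ≤ (1-ε) * ε⁻¹ + 1 := by
          exact add_le_add_left (mul_le_mul_right (h2.trans ih) _) 1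
      _ = (ε⁻¹ - ε * ε⁻¹) + 1 := by
          rw [ENNReal.sub_mul (fun _ _ => hinvfin), one_mul]
      _ = (ε⁻¹ - 1) + 1 := by rw [ENNReal.mul_inv_cancel hε0.ne' hεtop]
      _ = ε⁻¹ := tsub_add_cancel_of_le (ENNReal.one_le_inv.mpr hε1.le)

lemma wseq_tsum_le (hc1 : ∑' t, cc t ≤ 1) (hε0 : 0 < ε) (hε1 : ε < 1) :
    ∑' j, wseq cc ε j ≤ ε⁻¹ := by
  rw [ENNReal.tsum_eq_iSup_nat]
  apply iSup_le
  intro n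
  cases n with
  | zero => simp
  | succ n =>
    exact le_trans (Finset.sum_le_sum_of_subset (Finset.range_subset_range.2 (by omega)))
      (wseq_partial E π ε sT hc1 hε0 hε1 n)

lemma m_le (hπ : ∀ s, ∑' a, π s a = 1) (hsT : 0 < E.ρ0 sT)
    (hcsum : ∑' t, cc t = 1) (hε0 : 0 < ε) (hε1 : ε < 1) :
    ∑' k, Gk MF none k ≤ 1 + ε⁻¹ * meanEpiLen (chainOf E.P π) (TermSet E.P E.ρ0) sT := by
  rw [AuxSums.tsum_shift (fun k => Gk MF none k), Gk_zero]
  apply add_le_add_right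
  have h1 : ∑' k, Gk MF none (k+1)
      = (∑' j, wseq cc ε j) * (∑' t, ∑' v, ee t v) := by
    rw [tsum_congr (fun k => Gk_formula E π ε sT hπ hsT k)]
    rw [tsum_congr (fun k => (Finset.Nat.sum_antidiagonal_eq_sum_range_succ_mk
      (fun p => wseq cc ε p.1 * ∑' v, ee p.2 v) k).symm)]
    exact AuxSums.tsum_antidiag (wseq cc ε) (fun t => ∑' v, ee t v)
  rw [h1, Et_total E π sT hπ hcsum]
  exact mul_le_mul_left (wseq_tsum_le E π ε sT hcsum.le hε0 hε1) _

lemma fff_formula (hπ : ∀ s, ∑' a, π s a = 1) (hsT : 0 < E.ρ0 sT) (k : ℕ) :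
    fff MF none (k+2) = ε * ∑ j ∈ Finset.range (k+1), wseq cc ε j * cc (k-j) := by
  show ∑' x, gtab MF none (k+1) x * MF x none = _
  rw [tsum_option, gtab_alpha MF none (k+1) (by omega), zero_mul, zero_add]
  have h1 : ∀ s : S, gtab MF none (k+1) (some s) * MF (some s) none
      = ε * (if s ∈ TT then gtab MF none (k+1) (some s) else 0) := by
    intro s
    rw [perturbM_some_none]
    by_cases hs : s ∈ TT
    · rw [if_pos hs, if_pos hs]; ring
    · rw [if_neg hs, if_neg hs, mul_zero, mul_zero]
  rw [tsum_congr h1, ENNReal.tsum_mul_left]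
  congr 1
  have h2 : ∀ s : S, (if s ∈ TT then gtab MF none (k+1) (some s) else 0)
      = ∑ j ∈ Finset.range (k+1), wseq cc ε j * (if s ∈ TT then ee (k-j) s else 0) := by
    intro s
    by_cases hs : s ∈ TT
    · rw [if_pos hs, gdecomp E π ε sT hπ hsT k s]
      exact Finset.sum_congr rfl fun j _ => by rw [if_pos hs]
    · rw [if_neg hs]
      symm
      apply Finset.sum_eq_zero
      intro j _
      rw [if_neg hs, mul_zero]
  rw [tsum_congr h2, Summable.tsum_finsetSum (fun j _ => ENNReal.summable)]
  apply Finset.sum_congr rfl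
  intro j _
  rw [ENNReal.tsum_mul_left]
  rfl

lemma exists_pos_c (hcsum : ∑' t, cc t = 1) : ∃ t₀, 0 < cc t₀ := by
  by_contra h
  push_neg at h
  have h0 : ∑' t, cc t = 0 :=
    ENNReal.tsum_eq_zero.mpr fun t => le_antisymm (h t) (zero_le)
  rw [h0] at hcsum
  exact zero_ne_one hcsum

lemma fff_pos1 (hπ : ∀ s, ∑' a, π s a = 1) (hsT : 0 < E.ρ0 sT) (hε0 : 0 < ε)
    (t₀ : ℕ) (hc : 0 < cc t₀) : 0 < fff MF none (t₀+2) := by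
  rw [fff_formula E π ε sT hπ hsT t₀]
  apply ENNReal.mul_pos hε0.ne'
  have hle := Finset.single_le_sum (f := fun j => wseq cc ε j * cc (t₀-j))
    (fun i _ => zero_le) (Finset.mem_range.2 (by omega : (0:ℕ) < t₀+1))
  simp only [wseq_zero, one_mul, Nat.sub_zero] at hle
  exact (lt_of_lt_of_le hc hle).ne'

lemma fff_pos2 (hπ : ∀ s, ∑' a, π s a = 1) (hsT : 0 < E.ρ0 sT) (hε0 : 0 < ε)
    (hε1 : ε < 1) (t₀ : ℕ) (hc : 0 < cc t₀) : 0 < fff MF none (2*t₀+3) := by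
  have h23 : 2*t₀+3 = (2*t₀+1)+2 := by ring
  rw [h23, fff_formula E π ε sT hπ hsT (2*t₀+1)]
  apply ENNReal.mul_pos hε0.ne'
  have hw : 0 < wseq cc ε (t₀+1) := by
    rw [wseq_succ]
    apply ENNReal.mul_pos
    · exact (tsub_pos_of_lt hε1).ne'
    · have hle := Finset.single_le_sum (f := fun i => wseq cc ε i * cc (t₀-i))
        (fun i _ => zero_le) (Finset.mem_range.2 (by omega : (0:ℕ) < t₀+1))
      simp only [wseq_zero, one_mul, Nat.sub_zero] at hle
      exact (lt_of_lt_of_le hc hle).ne'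
  have hterm := Finset.single_le_sum (f := fun j => wseq cc ε j * cc (2*t₀+1-j))
    (fun i _ => zero_le) (Finset.mem_range.2 (by omega : t₀+1 < 2*t₀+1+1))
  have h' : 2*t₀+1 - (t₀+1) = t₀ := by omega
  simp only [h'] at hterm
  exact (lt_of_lt_of_le (ENNReal.mul_pos hw.ne' hc.ne') hterm).ne'

end ChainSec


/-- In the ε-perturbed model of an episodic learning process, every policy induces an
ergodic chain: the marginal distributions converge to a stationary (limiting)
distribution. -/
theorem stmt_7 {S A : Type} [Countable S] [Countable A] (E : ELP S A)
    (π : S → A → ℝ≥0∞) (hπ : ∀ s, ∑' a, π s a = 1)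
    (ε : ℝ≥0∞) (hε0 : 0 < ε) (hε1 : ε < 1)
    (sT : S) (hsT : 0 < E.ρ0 sT) :
    ∃ ρp : Option S → ℝ≥0∞, (∑' x, ρp x = 1) ∧
      (∀ y, ρp y = ∑' x, ρp x * perturbM (chainOf E.P π) (TermSet E.P E.ρ0) sT ε x y) ∧
      (∀ y, Tendsto
        (fun t : ℕ => ∑' x : Option S,
          (Option.elim x 0 E.ρ0) *
            stepProb (perturbM (chainOf E.P π) (TermSet E.P E.ρ0) sT ε) t x y)
        atTop (𝓝 (ρp y))) := by
  classical
  open MarkovAux MarkovAux2 AuxSums RenewalAux in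
  have hsTmem : sT ∈ TermSet E.P E.ρ0 := sT_mem E sT hsT
  obtain ⟨hcsum, hmE⟩ := E.epi_fin π hπ sT hsTmem
  have hεtop : ε ≠ ⊤ := (hε1.trans ENNReal.one_lt_top).ne
  have hinvtop : ε⁻¹ ≠ ⊤ := by simp [ENNReal.inv_ne_top, hε0.ne']
  set MF : Option S → Option S → ℝ≥0∞ :=
    perturbM (chainOf E.P π) (TermSet E.P E.ρ0) sT ε with hMFdef
  set IFF : Option S → ℝ≥0∞ := fun x => Option.elim x 0 E.ρ0 with hIFFdef
  have hrow : ∀ x, ∑' y, MF x y = 1 := perturb_rowsum E π ε sT hπ hε1.le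
  have hinit : ∑' x, IFF x = 1 := init_mass E
  have hinitα : IFF none = 0 := rfl
  -- basic ENNReal bounds
  have hmarg_le : ∀ n y, marg MF IFF n y ≤ 1 := by
    intro n y
    rw [← marg_mass MF IFF hrow hinit n]
    exact ENNReal.le_tsum y
  have hmarg_fin : ∀ n y, marg MF IFF n y ≠ ⊤ :=
    fun n y => ((hmarg_le n y).trans_lt ENNReal.one_lt_top).ne
  have hGk_le : ∀ k, Gk MF none k ≤ 1 := by
    intro k
    induction k with
    | zero => rw [Gk_zero]
    | succ k ih =>
      refine le_trans ?_ ih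
      rw [← Gk_succ MF none hrow k]
      exact le_self_add
  have hGk_fin : ∀ k, Gk MF none k ≠ ⊤ :=
    fun k => ((hGk_le k).trans_lt ENNReal.one_lt_top).ne
  have hfff_le : ∀ k, fff MF none (k+1) ≤ Gk MF none k := by
    intro k
    rw [← Gk_succ MF none hrow k]
    exact le_add_self
  have hfff_le1 : ∀ k, fff MF none k ≤ 1 := by
    intro k
    cases k with
    | zero => exact zero_le
    | succ k => exact (hfff_le k).trans (hGk_le k)
  have hfff_fin : ∀ k, fff MF none k ≠ ⊤ :=
    fun k => ((hfff_le1 k).trans_lt ENNReal.one_lt_top).ne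
  have hHn_le : ∀ n, Hn MF none IFF n ≤ 1 := by
    intro n
    induction n with
    | zero => rw [Hn_zero MF none IFF hinit]
    | succ n ih =>
      refine le_trans ?_ ih
      rw [← Hn_succ MF none IFF hrow n]
      exact le_self_add
  have hHn_fin : ∀ n, Hn MF none IFF n ≠ ⊤ :=
    fun n => ((hHn_le n).trans_lt ENNReal.one_lt_top).ne
  have hbbb_le : ∀ n, bbb MF none IFF (n+1) ≤ Hn MF none IFF n := by
    intro n
    rw [← Hn_succ MF none IFF hrow n]
    exact le_add_self
  have hbbb_le1 : ∀ n, bbb MF none IFF n ≤ 1 := by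
    intro n
    cases n with
    | zero => exact zero_le
    | succ n => exact (hbbb_le n).trans (hHn_le n)
  have hbbb_fin : ∀ n, bbb MF none IFF n ≠ ⊤ :=
    fun n => ((hbbb_le1 n).trans_lt ENNReal.one_lt_top).ne
  have htab_le : ∀ n y, htab MF none IFF n y ≤ 1 := by
    intro n y
    refine le_trans ?_ (hHn_le n)
    exact ENNReal.le_tsum y
  have hgtab_le : ∀ k y, gtab MF none k y ≤ 1 := by
    intro k y
    refine le_trans ?_ (hGk_le k)
    exact ENNReal.le_tsum y
  -- the mean return time m
  set m : ℝ≥0∞ := ∑' k, Gk MF none k with hmdef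
  have hm_le : m ≤ 1 + ε⁻¹ * meanEpiLen (chainOf E.P π) (TermSet E.P E.ρ0) sT :=
    m_le E π ε sT hπ hsT hcsum hε0 hε1
  have hm_ne_top : m ≠ ⊤ := by
    refine ((hm_le.trans_lt ?_)).ne
    exact ENNReal.add_lt_top.mpr ⟨ENNReal.one_lt_top,
      ENNReal.mul_lt_top hinvtop.lt_top hmE⟩
  have hm_ge1 : 1 ≤ m := by
    rw [hmdef, ← Gk_zero (M := MF) (α := (none : Option S))]
    exact ENNReal.le_tsum 0
  have hm_ne_zero : m ≠ 0 := by
    intro h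
    rw [h] at hm_ge1
    exact (lt_irrefl _ (lt_of_lt_of_le zero_lt_one hm_ge1)).elim
  -- partial sums of fff
  have hFpartial : ∀ n, Gk MF none n + ∑ i ∈ Finset.range (n+1), fff MF none i = 1 := by
    intro n
    induction n with
    | zero =>
      rw [Gk_zero, Finset.sum_range_one, show fff MF none 0 = 0 from rfl, add_zero]
    | succ n ih =>
      rw [Finset.sum_range_succ, show Gk MF none (n+1) + (∑ i ∈ Finset.range (n+1), fff MF none i
        + fff MF none (n+1)) = (Gk MF none (n+1) + fff MF none (n+1))
        + ∑ i ∈ Finset.range (n+1), fff MF none i by ring, Gk_succ MF none hrow n]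
      exact ih
  have hFsum_le1 : ∑' k, fff MF none k ≤ 1 := by
    rw [ENNReal.tsum_eq_iSup_nat]
    apply iSup_le
    intro n
    cases n with
    | zero => simp
    | succ n =>
      calc ∑ i ∈ Finset.range (n+1), fff MF none i
          ≤ Gk MF none n + ∑ i ∈ Finset.range (n+1), fff MF none i := le_add_self
        _ = 1 := hFpartial n
  have hFsum_fin : ∑' k, fff MF none k ≠ ⊤ :=
    (hFsum_le1.trans_lt ENNReal.one_lt_top).ne
  -- real sequences
  set pr : ℕ → ℝ := fun n => (marg MF IFF n none).toReal with hprdef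
  set fr : ℕ → ℝ := fun k => (fff MF none k).toReal with hfrdef
  set br : ℕ → ℝ := fun n => (bbb MF none IFF n).toReal with hbrdef
  set Hr : ℕ → ℝ := fun n => (Hn MF none IFF n).toReal with hHrdef
  set rr : ℕ → ℝ := fun k => (Gk MF none k).toReal with hrrdef
  set mr : ℝ := m.toReal with hmrdef
  have hpr0 : ∀ n, 0 ≤ pr n := fun n => ENNReal.toReal_nonneg
  have hpr1 : ∀ n, pr n ≤ 1 := by
    intro n
    have := ENNReal.toReal_mono ENNReal.one_ne_top (hmarg_le n none)
    simpa using this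
  have hfr0 : ∀ k, 0 ≤ fr k := fun k => ENNReal.toReal_nonneg
  have hrr0 : ∀ k, 0 ≤ rr k := fun k => ENNReal.toReal_nonneg
  have hbr0 : ∀ n, 0 ≤ br n := fun n => ENNReal.toReal_nonneg
  have hHr0 : ∀ n, 0 ≤ Hr n := fun n => ENNReal.toReal_nonneg
  have hrr_summable : Summable rr := ENNReal.summable_toReal hm_ne_top
  have hrrsum : HasSum rr mr := by
    have h := hrr_summable.hasSum
    rwa [← ENNReal.tsum_toReal_eq hGk_fin] at h
  have hmr1 : (1:ℝ) ≤ mr := by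
    have := ENNReal.toReal_mono hm_ne_top hm_ge1
    simpa using this
  have hrr_to0 : Tendsto rr atTop (𝓝 0) := hrr_summable.tendsto_atTop_zero
  have hfr_summable : Summable fr := ENNReal.summable_toReal hFsum_fin
  have hfr_to0 : Tendsto fr atTop (𝓝 0) := hfr_summable.tendsto_atTop_zero
  -- real partial sums identity and HasSum fr 1
  have hsum_fin : ∀ (n : ℕ) (F : ℕ → ℝ≥0∞), (∀ i, F i ≤ 1) →
      (∑ i ∈ Finset.range (n+1), F i) ≠ ⊤ := by
    intro n F hF
    refine (ENNReal.sum_lt_top.mpr ?_).ne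
    intro i _
    exact (hF i).trans_lt ENNReal.one_lt_top
  have hFr_partial : ∀ n, rr n + ∑ i ∈ Finset.range (n+1), fr i = 1 := by
    intro n
    have h := hFpartial n
    have := congrArg ENNReal.toReal h
    rwa [ENNReal.toReal_add (hGk_fin n) (hsum_fin n _ hfff_le1),
      ENNReal.toReal_sum (fun i _ => hfff_fin i), ENNReal.toReal_one] at this
  have hfrpartial_tendsto : Tendsto (fun n => ∑ i ∈ Finset.range (n+1), fr i) atTop (𝓝 1) := by
    have heq : (fun n => ∑ i ∈ Finset.range (n+1), fr i) = fun n => 1 - rr n := by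
      funext n
      have := hFr_partial n
      linarith
    rw [heq]
    have h := (tendsto_const_nhds (x := (1:ℝ)) (f := atTop)).sub hrr_to0
    simpa using h
  have hfrsum : HasSum fr 1 := by
    have hsum := hfr_summable.hasSum
    have h2 : Tendsto (fun n => ∑ i ∈ Finset.range (n+1), fr i) atTop (𝓝 (∑' k, fr k)) :=
      hsum.tendsto_sum_nat.comp (tendsto_add_atTop_nat 1)
    have h3 : (∑' k, fr k) = 1 := tendsto_nhds_unique h2 hfrpartial_tendsto
    rwa [h3] at hsum
  -- ENNReal tsum of fff equals 1
  have hFsum1 : ∑' k, fff MF none k = 1 := by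
    have h1 : (∑' k, fff MF none k).toReal = 1 := by
      rw [ENNReal.tsum_toReal_eq hfff_fin]
      exact hfrsum.tsum_eq
    have h2 := ENNReal.ofReal_toReal hFsum_fin
    rw [h1] at h2
    simpa using h2.symm
  have hfone : ∑' k, fff MF none (k+1) = 1 := by
    have := AuxSums.tsum_shift (fun k => fff MF none k)
    rw [hFsum1, show fff MF none 0 = 0 from rfl, zero_add] at this
    exact this.symm
  -- real renewal recursion
  have hrec : ∀ n, pr n = br n + ∑ k ∈ Finset.range (n+1), fr k * pr (n-k) := by
    intro n
    have h := renewal_eq' MF none IFF hinitα n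
    have := congrArg ENNReal.toReal h
    rw [ENNReal.toReal_add (hbbb_fin n) (hsum_fin n _ (fun i =>
        mul_le_one' (hfff_le1 i) (hmarg_le _ none))),
      ENNReal.toReal_sum (fun i _ => (ENNReal.mul_ne_top (hfff_fin i) (hmarg_fin _ none))),
      Finset.sum_congr rfl (fun k _ => ENNReal.toReal_mul)] at this
    exact this
  -- real mass identity
  have hid : ∀ n, Hr n + ∑ k ∈ Finset.range (n+1), rr k * pr (n-k) = 1 := by
    intro n
    have h := mass_id' MF none IFF hrow hinit hinitα n
    have := congrArg ENNReal.toReal h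
    rwa [ENNReal.toReal_add (hHn_fin n) (hsum_fin n _ (fun i =>
        mul_le_one' (hGk_le i) (hmarg_le _ none))),
      ENNReal.toReal_sum (fun i _ => (ENNReal.mul_ne_top (hGk_fin i) (hmarg_fin _ none))),
      Finset.sum_congr rfl (fun k _ => ENNReal.toReal_mul), ENNReal.toReal_one] at this
  -- br and Hr tend to 0
  have hbr_to0 : Tendsto br atTop (𝓝 0) := by
    apply squeeze_zero' (Filter.Eventually.of_forall hbr0)
    · show ∀ᶠ n in atTop, br n ≤ fr n
      rw [eventually_atTop]
      refine ⟨2, fun n hn => ?_⟩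
      obtain ⟨k, rfl⟩ : ∃ k, n = k + 2 := ⟨n - 2, by omega⟩
      have h := bbb_eq E π ε sT hπ hsT k
      have hle : bbb MF none IFF (k+2) ≤ fff MF none (k+2) := by
        rw [h]
        exact mul_le_of_le_one_left (zero_le) tsub_le_self
      exact ENNReal.toReal_mono (hfff_fin (k+2)) hle
    · exact hfr_to0
  have hHr_to0 : Tendsto Hr atTop (𝓝 0) := by
    apply squeeze_zero' (Filter.Eventually.of_forall hHr0)
    · show ∀ᶠ n in atTop, Hr n ≤ rr n
      rw [eventually_atTop]
      refine ⟨1, fun n hn => ?_⟩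
      obtain ⟨k, rfl⟩ : ∃ k, n = k + 1 := ⟨n - 1, by omega⟩
      have h := Hn_eq E π ε sT hπ hsT k
      have hle : Hn MF none IFF (k+1) ≤ Gk MF none (k+1) := by
        rw [h]
        exact mul_le_of_le_one_left (zero_le) tsub_le_self
      exact ENNReal.toReal_mono (hGk_fin (k+1)) hle
    · exact hrr_to0
  -- support points
  obtain ⟨t₀, hct₀⟩ := exists_pos_c E π sT hcsum
  have hfp : 0 < fr (t₀+2) :=
    ENNReal.toReal_pos (fff_pos1 E π ε sT hπ hsT hε0 t₀ hct₀).ne' (hfff_fin _)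
  have hfq : 0 < fr (2*t₀+3) :=
    ENNReal.toReal_pos (fff_pos2 E π ε sT hπ hsT hε0 hε1 t₀ hct₀).ne' (hfff_fin _)
  -- EFP renewal theorem
  have hplim : Tendsto pr atTop (𝓝 (1/mr)) :=
    renewal_limit mr hfr0 hfrsum hpr0 hpr1 hbr0 hbr_to0 hHr0 hHr_to0 hrr0 hmr1 hrrsum
      hrec hid (t₀+2) (2*t₀+3) (by omega) (by omega) hfp hfq
  -- the limiting distribution
  refine ⟨fun y => (∑' k, gtab MF none k y) * m⁻¹, ?_, ?_, ?_⟩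
  · -- total mass one
    rw [ENNReal.tsum_mul_right, G_total, ← hmdef]
    exact ENNReal.mul_inv_cancel hm_ne_zero hm_ne_top
  · -- stationarity
    intro y
    have h1 : ∀ x : Option S, (∑' k, gtab MF none k x) * m⁻¹ * MF x y
        = m⁻¹ * ((∑' k, gtab MF none k x) * MF x y) := fun x => by ring
    rw [tsum_congr h1, ENNReal.tsum_mul_left, G_stat MF none hfone y, mul_comm]
  · -- convergence
    intro y
    have hGy_le : (∑' k, gtab MF none k y) ≤ m := by
      rw [hmdef]
      exact Summable.tsum_le_tsum (fun k => ENNReal.le_tsum y) ENNReal.summable ENNReal.summable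
    have hGy_fin : (∑' k, gtab MF none k y) ≠ ⊤ :=
      (hGy_le.trans_lt hm_ne_top.lt_top).ne
    set gr : ℕ → ℝ := fun k => (gtab MF none k y).toReal with hgrdef
    set Gr : ℝ := (∑' k, gtab MF none k y).toReal with hGrdef
    have hgr0 : ∀ k, 0 ≤ gr k := fun k => ENNReal.toReal_nonneg
    have hgtab_fin : ∀ k, gtab MF none k y ≠ ⊤ :=
      fun k => ((hgtab_le k y).trans_lt ENNReal.one_lt_top).ne
    have hgrsum : HasSum gr Gr := by
      have h := (ENNReal.summable_toReal hGy_fin).hasSum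
      rwa [← ENNReal.tsum_toReal_eq hgtab_fin] at h
    have hmr_pos : (0:ℝ) < mr := lt_of_lt_of_le zero_lt_one hmr1
    have hL0 : (0:ℝ) ≤ 1/mr := by positivity
    have hL1 : (1:ℝ)/mr ≤ 1 := by
      rw [div_le_one hmr_pos]
      exact hmr1
    have hconv := conv_tendsto gr pr Gr (1/mr) hgr0 hgrsum hpr0 hpr1 hL0 hL1 hplim
    have hhtabr : Tendsto (fun n => (htab MF none IFF n y).toReal) atTop (𝓝 0) := by
      apply squeeze_zero (fun n => ENNReal.toReal_nonneg)
        (fun n => ENNReal.toReal_mono (hHn_fin n) (ENNReal.le_tsum y))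
      exact hHr_to0
    have hdecompr : ∀ n, (marg MF IFF n y).toReal
        = (htab MF none IFF n y).toReal + ∑ k ∈ Finset.range (n+1), gr k * pr (n-k) := by
      intro n
      have h := decomp' MF none IFF hinitα n y
      have := congrArg ENNReal.toReal h
      rw [ENNReal.toReal_add (((htab_le n y).trans_lt ENNReal.one_lt_top).ne)
          (hsum_fin n _ (fun i => mul_le_one' (hgtab_le i y) (hmarg_le _ none))),
        ENNReal.toReal_sum (fun i _ => (ENNReal.mul_ne_top (hgtab_fin i) (hmarg_fin _ none))),
        Finset.sum_congr rfl (fun k _ => ENNReal.toReal_mul)] at this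
      exact this
    have hreal : Tendsto (fun n => (marg MF IFF n y).toReal) atTop (𝓝 (0 + Gr * (1/mr))) := by
      have h := hhtabr.add hconv
      have heq : (fun n => (htab MF none IFF n y).toReal
          + ∑ k ∈ Finset.range (n+1), gr k * pr (n-k))
          = fun n => (marg MF IFF n y).toReal := by
        funext n
        exact (hdecompr n).symm
      rwa [heq] at h
    have hlift : Tendsto (fun n => marg MF IFF n y) atTop
        (𝓝 ((∑' k, gtab MF none k y) * m⁻¹)) := by
      have h := ENNReal.tendsto_ofReal hreal
      have heq : (fun n => ENNReal.ofReal ((marg MF IFF n y).toReal))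
          = fun n => marg MF IFF n y := by
        funext n
        exact ENNReal.ofReal_toReal (hmarg_fin n y)
      rw [heq] at h
      have hval : ENNReal.ofReal (0 + Gr * (1/mr)) = (∑' k, gtab MF none k y) * m⁻¹ := by
        rw [zero_add, ENNReal.ofReal_mul (by positivity), hGrdef,
          ENNReal.ofReal_toReal hGy_fin]
        congr 1
        have hminv_fin : m⁻¹ ≠ ⊤ := by
          simp [ENNReal.inv_ne_top, hm_ne_zero]
        have h2 : (m⁻¹).toReal = 1/mr := by
          rw [ENNReal.toReal_inv, hmrdef, one_div]
        rw [← h2, ENNReal.ofReal_toReal hminv_fin]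
      rwa [hval] at h
    exact hlift
end
end

section
/- In the ε-perturbed model M⁺ of an episodic learning process M, for every policy π the stationary distribution ρ⁺_π of M⁺ restricted to the original state space is proportional to the stationary distribution ρ_π of M: ρ_π(s) = ρ⁺_π(s)/(1 - ρ⁺_π(s_null)) for all s ∈ S. -/
open scoped ENNReal Classical
open Filter Topology

noncomputable section

namespace Stmt8

theorem tsum_option {β : Type} (f : Option β → ℝ≥0∞) :
    ∑' x, f x = f none + ∑' n, f (some n) := by
  rw [ENNReal.tsum_eq_add_tsum_ite none]
  congr 1
  have h := Function.Injective.tsum_eq (g := (some : β → Option β))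
    (fun a b h => by simpa using h) (f := fun x => if x = none then 0 else f x)
    (by intro x hx
        cases x with
        | none => simp at hx
        | some n => exact ⟨n, rfl⟩)
  simp only [reduceCtorEq, reduceIte] at h
  exact (tsum_congr (fun b => by congr 1)).trans h.symm

theorem reach_prop {σ : Type} (M' : σ → σ → ℝ≥0∞) (Q : σ → Prop)
    (hstep : ∀ x y, Q x → M' x y ≠ 0 → Q y) :
    ∀ (t : ℕ) (x y : σ), Q x → stepProb M' t x y ≠ 0 → Q y := by
  intro t
  induction t with
  | zero =>
    intro x y hx h
    have hxy : x = y := by by_contra hne; exact h (if_neg hne)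
    exact hxy ▸ hx
  | succ t ih =>
    intro x y hx h
    have hex : ¬ ∀ u, stepProb M' t x u * M' u y = 0 :=
      fun hall => h (ENNReal.tsum_eq_zero.mpr hall)
    push_neg at hex
    obtain ⟨u, hu⟩ := hex
    rw [mul_ne_zero_iff] at hu
    exact hstep u y (ih x u hx hu.1) hu.2

variable {S : Type} (M : S → S → ℝ≥0∞) (T : Set S) (sT : S)

/-- `Bk n v s'`: probability of going from `v` to `s'` in `n` steps while the states
at times `0, …, n-1` avoid `T`. -/
def Bk : ℕ → S → S → ℝ≥0∞
  | 0, v, s' => if v = s' then 1 else 0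
  | n+1, v, s' => if v ∈ T then 0 else ∑' u, M v u * Bk n u s'

/-- Survival probability: avoid `T` for `n` steps starting from `v`. -/
def beta (n : ℕ) (v : S) : ℝ≥0∞ := ∑' s', Bk M T n v s'

def betaInf (v : S) : ℝ≥0∞ := ⨅ n, beta M T n v

def Ef (t : ℕ) (s' : S) : ℝ≥0∞ := ∑' u, M sT u * Bk M T t u s'

def Lfun (s' : S) : ℝ≥0∞ := ∑' t, Ef M T sT t s'

def Sfun (t : ℕ) : ℝ≥0∞ := ∑' u, epiStep M T sT t u

theorem beta_zero (v : S) : beta M T 0 v = 1 := by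
  unfold beta
  rw [tsum_eq_single v (by intro b hb; simp [Bk, Ne.symm hb])]
  simp [Bk]

theorem beta_succ (n : ℕ) (v : S) :
    beta M T (n+1) v = if v ∈ T then 0 else ∑' u, M v u * beta M T n u := by
  by_cases hv : v ∈ T
  · simp [beta, Bk, hv]
  · simp only [beta, Bk, hv, if_false]
    rw [ENNReal.tsum_comm]
    exact tsum_congr fun u => ENNReal.tsum_mul_left

theorem beta_le_one (hM1 : ∀ s, ∑' u, M s u = 1) : ∀ n v, beta M T n v ≤ 1 := by
  intro n
  induction n with
  | zero => intro v; rw [beta_zero]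
  | succ n ih =>
    intro v
    rw [beta_succ]
    by_cases hv : v ∈ T
    · simp [hv]
    · simp only [hv, if_false]
      calc ∑' u, M v u * beta M T n u ≤ ∑' u, M v u * 1 :=
            ENNReal.tsum_le_tsum fun u => mul_le_mul_right (ih u) _
        _ = 1 := by simpa using hM1 v

theorem beta_antitone (hM1 : ∀ s, ∑' u, M s u = 1) :
    ∀ n v, beta M T (n+1) v ≤ beta M T n v := by
  intro n
  induction n with
  | zero => intro v; rw [beta_zero]; exact beta_le_one M T hM1 1 v
  | succ n ih =>
    intro v
    rw [beta_succ, beta_succ]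
    by_cases hv : v ∈ T
    · simp [hv]
    · simp only [hv, if_false]
      exact ENNReal.tsum_le_tsum fun u => mul_le_mul_right (ih u) _

theorem Bk_le_beta (n : ℕ) (v s' : S) : Bk M T n v s' ≤ beta M T n v :=
  ENNReal.le_tsum s'

theorem betaInf_of_mem (v : S) (hv : v ∈ T) : betaInf M T v = 0 := by
  refine le_antisymm ?_ zero_le
  refine (iInf_le _ 1).trans ?_
  rw [beta_succ]
  simp [hv]

theorem Sfun_zero (hM1 : ∀ s, ∑' u, M s u = 1) : Sfun M T sT 0 = 1 := hM1 sT

theorem Sfun_succ (hM1 : ∀ s, ∑' u, M s u = 1) (t : ℕ) :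
    Sfun M T sT t = termHit M T sT t + Sfun M T sT (t+1) := by
  have h1 : Sfun M T sT (t+1) = ∑' v, if v ∈ T then 0 else epiStep M T sT t v := by
    unfold Sfun
    show (∑' u, ∑' v, if v ∈ T then 0 else epiStep M T sT t v * M v u) = _
    rw [ENNReal.tsum_comm]
    refine tsum_congr fun v => ?_
    by_cases hv : v ∈ T
    · simp [hv]
    · simp only [hv, if_false]
      rw [ENNReal.tsum_mul_left, hM1 v, mul_one]
  rw [h1]
  unfold Sfun termHit
  rw [← ENNReal.tsum_add]
  refine tsum_congr fun v => ?_
  by_cases hv : v ∈ T <;> simp [hv]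

theorem Sfun_partial (hM1 : ∀ s, ∑' u, M s u = 1) (n : ℕ) :
    Sfun M T sT n + ∑ r ∈ Finset.range n, termHit M T sT r = 1 := by
  induction n with
  | zero => simpa using Sfun_zero M T sT hM1
  | succ n ih =>
    rw [Finset.sum_range_succ, ← ih, Sfun_succ M T sT hM1 n]
    ring

theorem Sfun_antitone (hM1 : ∀ s, ∑' u, M s u = 1) (t : ℕ) :
    Sfun M T sT (t+1) ≤ Sfun M T sT t := by
  rw [Sfun_succ M T sT hM1 t]; exact le_add_self

theorem iInf_Sfun (hM1 : ∀ s, ∑' u, M s u = 1)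
    (hterm : ∑' t, termHit M T sT t = 1) : ⨅ n, Sfun M T sT n = 0 := by
  set b := ⨅ n, Sfun M T sT n with hb
  have h1 : ∀ n, b + ∑ r ∈ Finset.range n, termHit M T sT r ≤ 1 := by
    intro n
    calc b + ∑ r ∈ Finset.range n, termHit M T sT r
        ≤ Sfun M T sT n + ∑ r ∈ Finset.range n, termHit M T sT r :=
          add_le_add_left (iInf_le _ n) _
      _ = 1 := Sfun_partial M T sT hM1 n
  have hsup : (⨆ n, ∑ r ∈ Finset.range n, termHit M T sT r) = 1 := by
    rw [← ENNReal.tsum_eq_iSup_nat, hterm]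
  have h2 : b + 1 ≤ 1 := by
    conv_lhs => rw [← hsup]
    rw [ENNReal.add_iSup]
    exact iSup_le fun n => (h1 n)
  have h3 : b + 1 ≤ 0 + 1 := by simpa using h2
  exact le_antisymm ((ENNReal.add_le_add_iff_right ENNReal.one_ne_top).mp h3) zero_le

theorem key_sum :
    ∀ (n t : ℕ), ∑' v, epiStep M T sT t v * beta M T n v = Sfun M T sT (t + n)
  | 0, t => by
    simp only [beta_zero, mul_one]
    rfl
  | (n+1), t => by
    have step : ∀ v, epiStep M T sT t v * beta M T (n+1) v
        = ∑' u, (if v ∈ T then 0 else epiStep M T sT t v * M v u) * beta M T n u := by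
      intro v
      rw [beta_succ]
      by_cases hv : v ∈ T
      · simp [hv]
      · simp only [hv, if_false]
        rw [← ENNReal.tsum_mul_left]
        exact tsum_congr fun u => (mul_assoc _ _ _).symm
    calc ∑' v, epiStep M T sT t v * beta M T (n+1) v
        = ∑' v, ∑' u, (if v ∈ T then 0 else epiStep M T sT t v * M v u) * beta M T n u :=
          tsum_congr step
      _ = ∑' u, (∑' v, (if v ∈ T then 0 else epiStep M T sT t v * M v u)) * beta M T n u := by
          rw [ENNReal.tsum_comm]
          exact tsum_congr fun u => ENNReal.tsum_mul_right
      _ = ∑' u, epiStep M T sT (t+1) u * beta M T n u := rfl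
      _ = Sfun M T sT (t + (n+1)) := by
          rw [key_sum n (t+1)]
          congr 1
          omega

theorem betaInf_of_epi (hM1 : ∀ s, ∑' u, M s u = 1)
    (hSinf : ⨅ n, Sfun M T sT n = 0)
    (hanti : ∀ t, Sfun M T sT (t+1) ≤ Sfun M T sT t)
    {t : ℕ} {v : S} (h : epiStep M T sT t v ≠ 0) : betaInf M T v = 0 := by
  have h1 : epiStep M T sT t v * betaInf M T v = 0 := by
    refine le_antisymm ?_ zero_le
    have h2 : ∀ n, epiStep M T sT t v * betaInf M T v ≤ Sfun M T sT (t + n) := by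
      intro n
      calc epiStep M T sT t v * betaInf M T v
          ≤ epiStep M T sT t v * beta M T n v := mul_le_mul_right (iInf_le _ n) _
        _ ≤ ∑' v, epiStep M T sT t v * beta M T n v := ENNReal.le_tsum v
        _ = Sfun M T sT (t + n) := key_sum M T sT n t
    have h3 : epiStep M T sT t v * betaInf M T v ≤ ⨅ n, Sfun M T sT n := by
      refine le_iInf fun n => (h2 n).trans ?_
      have : ∀ m k, Sfun M T sT (m + k) ≤ Sfun M T sT m := by
        intro m k
        induction k with
        | zero => simp
        | succ k ih => exact (hanti (m+k)).trans ih
      simpa [Nat.add_comm] using this n t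
    simpa [hSinf] using h3
  rcases mul_eq_zero.mp h1 with h0 | h0
  · exact absurd h0 h
  · exact h0

theorem betaInf_step (hM1 : ∀ s, ∑' u, M s u = 1)
    (hSinf : ⨅ n, Sfun M T sT n = 0)
    (hanti : ∀ t, Sfun M T sT (t+1) ≤ Sfun M T sT t)
    (hrow : ∀ s ∈ T, ∀ u, M s u = M sT u)
    {u v : S} (hu : betaInf M T u = 0) (huv : M u v ≠ 0) : betaInf M T v = 0 := by
  by_cases hT : u ∈ T
  · have : epiStep M T sT 0 v ≠ 0 := by
      show M sT v ≠ 0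
      rw [← hrow u hT]; exact huv
    exact betaInf_of_epi M T sT hM1 hSinf hanti this
  · have h1 : ∀ n, M u v * betaInf M T v ≤ beta M T (n+1) u := by
      intro n
      rw [beta_succ]
      simp only [hT, if_false]
      calc M u v * betaInf M T v ≤ M u v * beta M T n v := mul_le_mul_right (iInf_le _ n) _
        _ ≤ ∑' w, M u w * beta M T n w := ENNReal.le_tsum v
    have h2 : M u v * betaInf M T v ≤ ⨅ n, beta M T (n+1) u := le_iInf h1
    have h3 : (⨅ n, beta M T (n+1) u) ≤ betaInf M T u :=
      iInf_mono fun n => beta_antitone M T hM1 n u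
    have := h2.trans (h3.trans_eq hu)
    rcases mul_eq_zero.mp (le_antisymm this zero_le) with h0 | h0
    · exact absurd h0 huv
    · exact h0

/-- Unrolling stationarity `n` times. -/
theorem unroll (g : S → ℝ≥0∞) (hg : ∀ s', g s' = ∑' s, g s * M s s')
    (hrow : ∀ s ∈ T, ∀ u, M s u = M sT u) :
    ∀ (n : ℕ) (s' : S), g s' = (∑' s, if s ∈ T then g s else 0) *
      (∑ t ∈ Finset.range n, Ef M T sT t s') + ∑' v, g v * Bk M T n v s' := by
  intro n
  induction n with
  | zero =>
    intro s'
    simp only [Finset.range_zero, Finset.sum_empty, mul_zero, zero_add]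
    rw [tsum_eq_single s' (by intro v hv; simp [Bk, hv])]
    simp [Bk]
  | succ n ih =>
    intro s'
    set cg := ∑' s, if s ∈ T then g s else 0 with hcg
    have hrem : (∑' v, g v * Bk M T n v s')
        = cg * Ef M T sT n s' + ∑' v, g v * Bk M T (n+1) v s' := by
      calc ∑' v, g v * Bk M T n v s'
          = ∑' v, (∑' w, g w * M w v) * Bk M T n v s' := by
            exact tsum_congr fun v => by rw [← hg v]
        _ = ∑' v, ∑' w, g w * M w v * Bk M T n v s' := by
            exact tsum_congr fun v => ENNReal.tsum_mul_right.symm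
        _ = ∑' w, ∑' v, g w * (M w v * Bk M T n v s') := by
            rw [ENNReal.tsum_comm]
            exact tsum_congr fun w => tsum_congr fun v => mul_assoc _ _ _
        _ = ∑' w, g w * ∑' v, M w v * Bk M T n v s' := by
            exact tsum_congr fun w => ENNReal.tsum_mul_left
        _ = ∑' w, ((if w ∈ T then g w * Ef M T sT n s' else 0)
              + (if w ∈ T then 0 else g w * Bk M T (n+1) w s')) := by
            refine tsum_congr fun w => ?_
            by_cases hw : w ∈ T
            · simp only [hw, if_true, add_zero]
              congr 1
              unfold Ef
              exact tsum_congr fun v => by rw [hrow w hw v]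
            · simp only [hw, if_false, zero_add]
              congr 1
              exact (by simp [Bk, hw] : Bk M T (n+1) w s' = _).symm
        _ = cg * Ef M T sT n s' + ∑' v, g v * Bk M T (n+1) v s' := by
            rw [ENNReal.tsum_add]
            congr 1
            · rw [← ENNReal.tsum_mul_right (f := fun w => if w ∈ T then g w else 0)]
              exact tsum_congr fun w => by by_cases hw : w ∈ T <;> simp [hw]
            · refine tsum_congr fun w => ?_
              by_cases hw : w ∈ T
              · simp [hw, Bk]
              · simp [hw]
    rw [ih s', hrem, Finset.sum_range_succ, mul_add]
    ring

theorem lim_rem (hM1 : ∀ s, ∑' u, M s u = 1)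
    (g : S → ℝ≥0∞) (hg1 : ∑' s, g s ≤ 1)
    (hsupp : ∀ v, g v ≠ 0 → betaInf M T v = 0) :
    ⨅ n, ∑' v, g v * beta M T n v = 0 := by
  letI : MeasurableSpace S := ⊤
  haveI : MeasurableSingletonClass S := ⟨fun _ => trivial⟩
  have hle1 : ∀ v, g v ≤ 1 := fun v => (ENNReal.le_tsum v).trans hg1
  have hcount : ∀ n, (∑' v, g v * beta M T n v)
      = ∫⁻ v, g v * beta M T n v ∂MeasureTheory.Measure.count :=
    fun n => (MeasureTheory.lintegral_count _).symm
  have key : (∫⁻ v, ⨅ n, g v * beta M T n v ∂MeasureTheory.Measure.count)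
      = ⨅ n, ∫⁻ v, g v * beta M T n v ∂MeasureTheory.Measure.count := by
    refine MeasureTheory.lintegral_iInf (fun n => measurable_from_top) ?_ ?_
    · intro m n hmn v
      simp only
      refine mul_le_mul_right ?_ _
      induction hmn with
      | refl => exact le_refl _
      | step h ih => exact (beta_antitone M T hM1 _ v).trans ih
    · rw [← hcount 0]
      refine ne_top_of_le_ne_top ENNReal.one_ne_top ?_
      calc ∑' v, g v * beta M T 0 v = ∑' v, g v := by
            refine tsum_congr fun v => by rw [beta_zero, mul_one]
        _ ≤ 1 := hg1
  have inner : ∀ v, (⨅ n, g v * beta M T n v) = 0 := by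
    intro v
    by_cases hv : g v = 0
    · simp [hv]
    · refine le_antisymm ?_ zero_le
      calc (⨅ n, g v * beta M T n v) ≤ ⨅ n, beta M T n v :=
            iInf_mono fun n => mul_le_of_le_one_left zero_le (hle1 v)
        _ = 0 := hsupp v hv
  have final : (⨅ n, ∑' v, g v * beta M T n v)
      = ∫⁻ v, ⨅ n, g v * beta M T n v ∂MeasureTheory.Measure.count := by
    rw [key]; exact iInf_congr hcount
  rw [final, MeasureTheory.lintegral_congr inner, MeasureTheory.lintegral_zero]

/-- Any stationary sub-probability supported on states from which `T` is a.s. hit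
is proportional to `Lfun`. -/
theorem g_eq (hM1 : ∀ s, ∑' u, M s u = 1)
    (hrow : ∀ s ∈ T, ∀ u, M s u = M sT u)
    (g : S → ℝ≥0∞) (hg : ∀ s', g s' = ∑' s, g s * M s s') (hg1 : ∑' s, g s ≤ 1)
    (hsupp : ∀ v, g v ≠ 0 → betaInf M T v = 0) :
    ∀ s', g s' = (∑' s, if s ∈ T then g s else 0) * Lfun M T sT s' := by
  intro s'
  set cg := ∑' s, if s ∈ T then g s else 0 with hcg
  have hpart : ∀ n, (∑ t ∈ Finset.range n, Ef M T sT t s') ≤ Lfun M T sT s' :=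
    fun n => ENNReal.sum_le_tsum (Finset.range n)
  refine le_antisymm ?_ ?_
  · have hub : ∀ n, g s' ≤ cg * Lfun M T sT s' + ∑' v, g v * beta M T n v := by
      intro n
      rw [unroll M T sT g hg hrow n s']
      refine add_le_add (mul_le_mul_right (hpart n) _) ?_
      exact ENNReal.tsum_le_tsum fun v => mul_le_mul_right (Bk_le_beta M T n v s') _
    calc g s' ≤ ⨅ n, (cg * Lfun M T sT s' + ∑' v, g v * beta M T n v) := le_iInf hub
      _ = cg * Lfun M T sT s' + ⨅ n, ∑' v, g v * beta M T n v := ENNReal.add_iInf.symm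
      _ = cg * Lfun M T sT s' := by rw [lim_rem M T hM1 g hg1 hsupp, add_zero]
  · have hlb : ∀ n, cg * (∑ t ∈ Finset.range n, Ef M T sT t s') ≤ g s' := by
      intro n
      rw [unroll M T sT g hg hrow n s']
      exact le_add_right le_rfl
    calc cg * Lfun M T sT s'
        = cg * ⨆ n, ∑ t ∈ Finset.range n, Ef M T sT t s' := by
          rw [Lfun, ENNReal.tsum_eq_iSup_nat]
      _ = ⨆ n, cg * ∑ t ∈ Finset.range n, Ef M T sT t s' := ENNReal.mul_iSup _ _
      _ ≤ g s' := iSup_le hlb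

end Stmt8


/-- The stationary distribution of the ε-perturbed model, restricted to the original
state space, is proportional to that of the original model:
ρ(s) = ρ⁺(s) / (1 - ρ⁺(s_null)). -/
theorem stmt_8 {S A : Type} [Countable S] [Countable A] (E : ELP S A)
    (π : S → A → ℝ≥0∞) (hπ : ∀ s, ∑' a, π s a = 1)
    (ε : ℝ≥0∞) (hε0 : 0 < ε) (hε1 : ε < 1)
    (sT : S) (hsT : 0 < E.ρ0 sT)
    (ρ : S → ℝ≥0∞) (hρ1 : ∑' s, ρ s = 1)
    (hρ : ∀ s', ρ s' = ∑' s, ρ s * chainOf E.P π s s')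
    (hρsupp : ∀ s, s ∉ ReachSet (chainOf E.P π) E.ρ0 → ρ s = 0)
    (ρp : Option S → ℝ≥0∞) (hρp1 : ∑' x, ρp x = 1)
    (hρp : ∀ y, ρp y = ∑' x, ρp x * perturbM (chainOf E.P π) (TermSet E.P E.ρ0) sT ε x y)
    (hρpsupp : ∀ x, x ∉ ReachSet (perturbM (chainOf E.P π) (TermSet E.P E.ρ0) sT ε)
        (fun x => Option.elim x 0 E.ρ0) → ρp x = 0) :
    ∀ s : S, ρ s = ρp (some s) / (1 - ρp none) := by
  classical
  set M : S → S → ℝ≥0∞ := chainOf E.P π with hM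
  set T : Set S := TermSet E.P E.ρ0 with hT
  -- A is nonempty
  have hA : Nonempty A := by
    by_contra h
    rw [not_nonempty_iff] at h
    have := hπ sT
    rw [tsum_empty] at this
    exact zero_ne_one (α := ℝ≥0∞) this
  obtain ⟨a₀⟩ := hA
  -- row sums are one
  have hM1 : ∀ s, ∑' s', M s s' = 1 := by
    intro s
    show (∑' s', ∑' a, π s a * E.P s a s') = 1
    rw [ENNReal.tsum_comm]
    calc (∑' a, ∑' s', π s a * E.P s a s')
        = ∑' a, π s a * ∑' s', E.P s a s' := tsum_congr fun a => ENNReal.tsum_mul_left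
      _ = ∑' a, π s a := tsum_congr fun a => by rw [E.P_sum s a, mul_one]
      _ = 1 := hπ s
  -- sT is terminal
  have hsTT : sT ∈ T := fun s₀ h a a' => E.homog sT s₀ hsT h a a'
  -- all terminal rows agree with sT's row
  have hrowP : ∀ s ∈ T, ∀ u, M s u = E.P sT a₀ u := by
    intro s hs u
    show (∑' a, π s a * E.P s a u) = E.P sT a₀ u
    calc (∑' a, π s a * E.P s a u) = ∑' a, π s a * E.P sT a₀ u :=
          tsum_congr fun a => by rw [hs sT hsT a a₀]
      _ = (∑' a, π s a) * E.P sT a₀ u := ENNReal.tsum_mul_right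
      _ = E.P sT a₀ u := by rw [hπ s, one_mul]
  have hrow : ∀ s ∈ T, ∀ u, M s u = M sT u := by
    intro s hs u
    rw [hrowP s hs u, hrowP sT hsTT u]
  -- episode termination
  have hterm : ∑' t, termHit M T sT t = 1 := (E.epi_fin π hπ sT hsTT).1
  have hSinf : ⨅ n, Stmt8.Sfun M T sT n = 0 := Stmt8.iInf_Sfun M T sT hM1 hterm
  have hSanti : ∀ t, Stmt8.Sfun M T sT (t+1) ≤ Stmt8.Sfun M T sT t :=
    Stmt8.Sfun_antitone M T sT hM1
  have hstep0 : ∀ u v : S, Stmt8.betaInf M T u = 0 → M u v ≠ 0 → Stmt8.betaInf M T v = 0 :=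
    fun u v hu huv => Stmt8.betaInf_step M T sT hM1 hSinf hSanti hrow hu huv
  -- support of ρ
  have hinitT : ∀ s₀ : S, E.ρ0 s₀ ≠ 0 → s₀ ∈ T := by
    intro s₀ h s₁ h1 a a'
    exact E.homog s₀ s₁ (pos_iff_ne_zero.mpr h) h1 a a'
  have hsupρ : ∀ v, ρ v ≠ 0 → Stmt8.betaInf M T v = 0 := by
    intro v hv
    have hvR : v ∈ ReachSet M E.ρ0 := by
      by_contra h
      exact hv (hρsupp v h)
    obtain ⟨t, hpos⟩ := hvR
    have hex : ¬ ∀ s₀, E.ρ0 s₀ * stepProb M t s₀ v = 0 :=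
      fun hall => hpos.ne' (ENNReal.tsum_eq_zero.mpr hall)
    push_neg at hex
    obtain ⟨s₀, hs₀⟩ := hex
    rw [mul_ne_zero_iff] at hs₀
    exact Stmt8.reach_prop M (fun w => Stmt8.betaInf M T w = 0) hstep0 t s₀ v
      (Stmt8.betaInf_of_mem M T s₀ (hinitT s₀ hs₀.1)) hs₀.2
  -- support of ρp restricted to S
  set MP : Option S → Option S → ℝ≥0∞ := perturbM M T sT ε with hMP
  have hsupf : ∀ v, ρp (some v) ≠ 0 → Stmt8.betaInf M T v = 0 := by
    intro v hv
    set Q : Option S → Prop := fun x => ∀ w, x = some w → Stmt8.betaInf M T w = 0 with hQ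
    have hstepQ : ∀ x y, Q x → MP x y ≠ 0 → Q y := by
      intro x y hx hxy w hyw
      subst hyw
      cases x with
      | none =>
        have hne : M sT w ≠ 0 := hxy
        exact hstep0 sT w (Stmt8.betaInf_of_mem M T sT hsTT) hne
      | some s =>
        have hbs : Stmt8.betaInf M T s = 0 := hx s rfl
        have hne : M s w ≠ 0 := by
          intro h0
          apply hxy
          show (if s ∈ T then (1 - ε) * M s w else M s w) = 0
          by_cases hsT' : s ∈ T <;> simp [hsT', h0]
        exact hstep0 s w hbs hne
    have hvR : some v ∈ ReachSet MP (fun x => Option.elim x 0 E.ρ0) := by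
      by_contra h
      exact hv (hρpsupp (some v) h)
    obtain ⟨t, hpos⟩ := hvR
    have hex : ¬ ∀ x₀, (Option.elim x₀ 0 E.ρ0) * stepProb MP t x₀ (some v) = 0 :=
      fun hall => hpos.ne' (ENNReal.tsum_eq_zero.mpr hall)
    push_neg at hex
    obtain ⟨x₀, hx₀⟩ := hex
    rw [mul_ne_zero_iff] at hx₀
    have hx₀Q : Q x₀ := by
      cases x₀ with
      | none => exact absurd rfl hx₀.1
      | some s₀ =>
        intro w hw
        have hw' : s₀ = w := by injection hw
        subst hw'
        exact Stmt8.betaInf_of_mem M T s₀ (hinitT s₀ hx₀.1)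
    exact Stmt8.reach_prop MP Q hstepQ t x₀ (some v) hx₀Q hx₀.2 v rfl
  -- abbreviations
  set f : S → ℝ≥0∞ := fun s => ρp (some s) with hf
  set c : ℝ≥0∞ := ρp none with hc
  have hhsum : c + ∑' s, f s = 1 := by
    rw [← Stmt8.tsum_option ρp]; exact hρp1
  have hcle : c ≤ 1 := le_add_right le_rfl |>.trans hhsum.le
  have hfs1 : (∑' s, f s) ≤ 1 := le_add_self.trans hhsum.le
  set cf : ℝ≥0∞ := ∑' s, if s ∈ T then f s else 0 with hcf
  set cρ : ℝ≥0∞ := ∑' s, if s ∈ T then ρ s else 0 with hcρ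
  have hcf_le : cf ≤ ∑' s, f s :=
    ENNReal.tsum_le_tsum fun s => by by_cases hs : s ∈ T <;> simp [hs]
  have hcf_ne_top : cf ≠ ⊤ := ne_top_of_le_ne_top ENNReal.one_ne_top (hcf_le.trans hfs1)
  -- c = ε * cf
  have hceq : c = ε * cf := by
    have h0 := hρp none
    rw [Stmt8.tsum_option (fun x => ρp x * MP x none)] at h0
    have h1 : MP none none = 0 := rfl
    rw [h1, mul_zero, zero_add] at h0
    calc c = ∑' s, ρp (some s) * MP (some s) none := h0
      _ = ∑' s, ε * (if s ∈ T then f s else 0) := by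
          refine tsum_congr fun s => ?_
          show ρp (some s) * (if s ∈ T then ε else 0) = _
          by_cases hs : s ∈ T <;> simp [hs, mul_comm, hf]
      _ = ε * cf := ENNReal.tsum_mul_left
  -- f is stationary for M
  have hkeycf : c + (1 - ε) * cf = cf := by
    have h1 : (1 - ε) * cf = cf - ε * cf := by
      rw [ENNReal.sub_mul (fun _ _ => hcf_ne_top), one_mul]
    rw [hceq, h1]
    exact add_tsub_cancel_of_le (mul_le_of_le_one_left zero_le hε1.le)
  have hstatf : ∀ s', f s' = ∑' s, f s * M s s' := by
    intro s'
    have h0 := hρp (some s')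
    rw [Stmt8.tsum_option (fun x => ρp x * MP x (some s'))] at h0
    have h1 : MP none (some s') = M sT s' := rfl
    rw [h1] at h0
    have e1 : (∑' s, ρp (some s) * MP (some s) (some s'))
        = (1 - ε) * cf * M sT s' + ∑' s, (if s ∈ T then 0 else f s * M s s') := by
      calc (∑' s, ρp (some s) * MP (some s) (some s'))
          = ∑' s, ((1 - ε) * M sT s' * (if s ∈ T then f s else 0)
              + (if s ∈ T then 0 else f s * M s s')) := by
            refine tsum_congr fun s => ?_
            show ρp (some s) * (if s ∈ T then (1 - ε) * M s s' else M s s') = _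
            by_cases hs : s ∈ T
            · simp only [hs, if_true, add_zero]
              rw [hrow s hs s']
              ring
            · simp [hs, hf]
        _ = (1 - ε) * cf * M sT s' + ∑' s, (if s ∈ T then 0 else f s * M s s') := by
            rw [ENNReal.tsum_add]
            congr 1
            rw [ENNReal.tsum_mul_left, mul_assoc, mul_comm (M sT s') cf, ← mul_assoc]
    have e2 : (∑' s, f s * M s s')
        = cf * M sT s' + ∑' s, (if s ∈ T then 0 else f s * M s s') := by
      calc (∑' s, f s * M s s')
          = ∑' s, (M sT s' * (if s ∈ T then f s else 0)
              + (if s ∈ T then 0 else f s * M s s')) := by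
            refine tsum_congr fun s => ?_
            by_cases hs : s ∈ T
            · simp only [hs, if_true, add_zero]
              rw [hrow s hs s']
              ring
            · simp [hs]
        _ = cf * M sT s' + ∑' s, (if s ∈ T then 0 else f s * M s s') := by
            rw [ENNReal.tsum_add]
            congr 1
            rw [ENNReal.tsum_mul_left, mul_comm]
    calc f s' = c * M sT s' + ∑' s, ρp (some s) * MP (some s) (some s') := h0
      _ = c * M sT s' + ((1 - ε) * cf * M sT s'
            + ∑' s, (if s ∈ T then 0 else f s * M s s')) := by rw [e1]
      _ = (c + (1 - ε) * cf) * M sT s'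
            + ∑' s, (if s ∈ T then 0 else f s * M s s') := by ring
      _ = cf * M sT s' + ∑' s, (if s ∈ T then 0 else f s * M s s') := by rw [hkeycf]
      _ = ∑' s, f s * M s s' := e2.symm
  -- proportionality to Lfun
  have heqρ : ∀ s', ρ s' = cρ * Stmt8.Lfun M T sT s' :=
    Stmt8.g_eq M T sT hM1 hrow ρ hρ hρ1.le hsupρ
  have heqf : ∀ s', f s' = cf * Stmt8.Lfun M T sT s' :=
    Stmt8.g_eq M T sT hM1 hrow f hstatf hfs1 hsupf
  set Ltot : ℝ≥0∞ := ∑' s', Stmt8.Lfun M T sT s' with hLtot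
  have h1 : cρ * Ltot = 1 := by
    rw [← hρ1]
    calc cρ * Ltot = ∑' s', cρ * Stmt8.Lfun M T sT s' := ENNReal.tsum_mul_left.symm
      _ = ∑' s', ρ s' := tsum_congr fun s' => (heqρ s').symm
  have hc_ne_top : c ≠ ⊤ := ne_top_of_le_ne_top ENNReal.one_ne_top hcle
  have hsumf_eq : (∑' s, f s) = 1 - c := by
    rw [← hhsum]
    rw [ENNReal.add_sub_cancel_left hc_ne_top]
  have h2 : cf * Ltot = 1 - c := by
    rw [← hsumf_eq]
    calc cf * Ltot = ∑' s', cf * Stmt8.Lfun M T sT s' := ENNReal.tsum_mul_left.symm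
      _ = ∑' s', f s' := tsum_congr fun s' => (heqf s').symm
  have hc1 : c < 1 := by
    rcases lt_or_eq_of_le hcle with h | h
    · exact h
    · exfalso
      have hf0 : (∑' s, f s) = 0 := by rw [hsumf_eq, ← h, tsub_self]
      have hcf0 : cf = 0 := le_antisymm (hcf_le.trans_eq hf0) zero_le
      rw [hcf0, mul_zero] at hceq
      rw [hceq] at h
      exact zero_ne_one (α := ℝ≥0∞) h
  have h1c0 : (1 : ℝ≥0∞) - c ≠ 0 := fun h => absurd (tsub_eq_zero_iff_le.mp h) (not_le.mpr hc1)
  have h1ct : (1 : ℝ≥0∞) - c ≠ ⊤ := ne_top_of_le_ne_top ENNReal.one_ne_top tsub_le_self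
  have hcρ0 : cρ ≠ 0 := by
    intro h
    rw [h, zero_mul] at h1
    exact zero_ne_one (α := ℝ≥0∞) h1
  have hL0 : Ltot ≠ 0 := by
    intro h
    rw [h, mul_zero] at h1
    exact zero_ne_one (α := ℝ≥0∞) h1
  have hLt : Ltot ≠ ⊤ := by
    intro h
    rw [h, ENNReal.mul_top hcρ0] at h1
    exact (ENNReal.top_ne_one) h1
  have hkey : (1 - c) * cρ = cf := by
    have hmul : ((1 - c) * cρ) * Ltot = cf * Ltot := by
      rw [mul_assoc, h1, mul_one, h2]
    calc (1 - c) * cρ = ((1 - c) * cρ) * Ltot * Ltot⁻¹ := by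
          rw [mul_assoc, ENNReal.mul_inv_cancel hL0 hLt, mul_one]
      _ = cf * Ltot * Ltot⁻¹ := by rw [hmul]
      _ = cf := by rw [mul_assoc, ENNReal.mul_inv_cancel hL0 hLt, mul_one]
  intro s
  rw [ENNReal.eq_div_iff h1c0 h1ct]
  calc (1 - ρp none) * ρ s = (1 - c) * (cρ * Stmt8.Lfun M T sT s) := by rw [← heqρ s, hc]
    _ = ((1 - c) * cρ) * Stmt8.Lfun M T sT s := by ring
    _ = cf * Stmt8.Lfun M T sT s := by rw [hkey]
    _ = f s := (heqf s).symm
    _ = ρp (some s) := rfl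
end
end

section
/- In an episodic learning process, for any policy π, the episode-wise performance equals the steady-state performance times the expected episode length: E_{ζ∼M_π}[∑_{t=1}^{T(ζ)} R(s_t)] = E_{s∼ρ_π}[R(s)] · E_{ζ∼M_π}[T(ζ)]. -/
open scoped ENNReal Classical
open Filter Topology

noncomputable section

/-! ### Auxiliary development -/

section EpiAux

variable {σ : Type} (M : σ → σ → ℝ≥0∞) (T : Set σ)

lemma epiStep_zero (s u : σ) : epiStep M T s 0 u = M s u := rfl

lemma epiStep_succ (s : σ) (n : ℕ) (u : σ) :
    epiStep M T s (n + 1) u = ∑' v, if v ∈ T then 0 else epiStep M T s n v * M v u := rfl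

/-- Probability of surviving (not having terminated) through the first `n+1` steps. -/
def survive (s : σ) (n : ℕ) : ℝ≥0∞ := ∑' u, epiStep M T s n u

lemma epiStep_le_survive (s : σ) (n : ℕ) (u : σ) :
    epiStep M T s n u ≤ survive M T s n := ENNReal.le_tsum u

lemma survive_zero (hM : ∀ v, ∑' u, M v u = 1) (s : σ) : survive M T s 0 = 1 := by
  unfold survive
  simp only [epiStep_zero]
  exact hM s

lemma survive_succ_add (hM : ∀ v, ∑' u, M v u = 1) (s : σ) (n : ℕ) :
    survive M T s (n + 1) + termHit M T s n = survive M T s n := by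
  have h1 : survive M T s (n + 1) = ∑' v, if v ∈ T then 0 else epiStep M T s n v := by
    unfold survive
    simp only [epiStep_succ]
    rw [ENNReal.tsum_comm]
    refine tsum_congr fun v => ?_
    split_ifs with h
    · simp
    · rw [ENNReal.tsum_mul_left, hM v, mul_one]
  rw [h1]
  unfold termHit survive
  rw [← ENNReal.tsum_add]
  refine tsum_congr fun v => ?_
  split_ifs with h <;> simp

lemma survive_succ_le (hM : ∀ v, ∑' u, M v u = 1) (s : σ) (n : ℕ) :
    survive M T s (n + 1) ≤ survive M T s n :=
  (le_add_right le_rfl).trans_eq (survive_succ_add M T hM s n)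

lemma survive_le_one (hM : ∀ v, ∑' u, M v u = 1) (s : σ) (n : ℕ) :
    survive M T s n ≤ 1 := by
  induction n with
  | zero => exact (survive_zero M T hM s).le
  | succ n ih => exact (survive_succ_le M T hM s n).trans ih

lemma epiStep_ne_top (hM : ∀ v, ∑' u, M v u = 1) (s : σ) (n : ℕ) (u : σ) :
    epiStep M T s n u ≠ ∞ :=
  ne_top_of_le_ne_top ENNReal.one_ne_top
    ((epiStep_le_survive M T s n u).trans (survive_le_one M T hM s n))

lemma survive_add_sum (hM : ∀ v, ∑' u, M v u = 1) (s : σ) (n : ℕ) :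
    survive M T s n + ∑ k ∈ Finset.range n, termHit M T s k = 1 := by
  induction n with
  | zero => simp [survive_zero M T hM s]
  | succ n ih =>
      rw [Finset.sum_range_succ]
      calc survive M T s (n + 1) + (∑ k ∈ Finset.range n, termHit M T s k + termHit M T s n)
          = (survive M T s (n + 1) + termHit M T s n) + ∑ k ∈ Finset.range n, termHit M T s k := by
            ring
        _ = survive M T s n + ∑ k ∈ Finset.range n, termHit M T s k := by
            rw [survive_succ_add M T hM s n]
        _ = 1 := ih

lemma sum_termHit_ne_top (hM : ∀ v, ∑' u, M v u = 1) (s : σ) (n : ℕ) :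
    (∑ k ∈ Finset.range n, termHit M T s k) ≠ ∞ := by
  refine ne_top_of_le_ne_top ENNReal.one_ne_top ?_
  rw [← survive_add_sum M T hM s n]
  exact le_add_self

lemma survive_eq_sub (hM : ∀ v, ∑' u, M v u = 1) (s : σ) (n : ℕ) :
    survive M T s n = 1 - ∑ k ∈ Finset.range n, termHit M T s k :=
  ENNReal.eq_sub_of_add_eq (sum_termHit_ne_top M T hM s n) (survive_add_sum M T hM s n)

lemma survive_eq_tail (hM : ∀ v, ∑' u, M v u = 1) (s : σ)
    (hterm : ∑' t, termHit M T s t = 1) (n : ℕ) :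
    survive M T s n = ∑' k, if n ≤ k then termHit M T s k else 0 := by
  have hsplit : (∑ k ∈ Finset.range n, termHit M T s k) +
      (∑' k, if n ≤ k then termHit M T s k else 0) = 1 := by
    rw [← hterm]
    have h1 : (∑ k ∈ Finset.range n, termHit M T s k)
        = ∑' k, if k < n then termHit M T s k else 0 := by
      rw [tsum_eq_sum (s := Finset.range n) (fun k hk => if_neg (by simpa using hk))]
      exact Finset.sum_congr rfl fun k hk => (if_pos (Finset.mem_range.mp hk)).symm
    rw [h1, ← ENNReal.tsum_add]
    refine tsum_congr fun k => ?_
    rcases lt_or_ge k n with h | h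
    · rw [if_pos h, if_neg (by omega), add_zero]
    · rw [if_neg (by omega), if_pos h, zero_add]
  rw [survive_eq_sub M T hM s n]
  exact (ENNReal.eq_sub_of_add_eq (sum_termHit_ne_top M T hM s n)
    (by rw [add_comm]; exact hsplit)).symm

lemma tendsto_survive_zero (hM : ∀ v, ∑' u, M v u = 1) (s : σ)
    (hterm : ∑' t, termHit M T s t = 1) :
    Tendsto (survive M T s) atTop (𝓝 0) := by
  have h : survive M T s = fun n => 1 - ∑ k ∈ Finset.range n, termHit M T s k :=
    funext fun n => survive_eq_sub M T hM s n
  rw [h]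
  have h2 := ENNReal.tendsto_nat_tsum (termHit M T s)
  rw [hterm] at h2
  have h3 := ENNReal.Tendsto.sub (tendsto_const_nhds (x := (1 : ℝ≥0∞))) h2
    (Or.inl ENNReal.one_ne_top)
  simpa using h3

lemma tsum_survive (hM : ∀ v, ∑' u, M v u = 1) (s : σ)
    (hterm : ∑' t, termHit M T s t = 1) :
    ∑' n, survive M T s n = meanEpiLen M T s := by
  calc ∑' n, survive M T s n
      = ∑' n, ∑' k, if n ≤ k then termHit M T s k else 0 :=
        tsum_congr fun n => survive_eq_tail M T hM s hterm n
    _ = ∑' k, ∑' n, if n ≤ k then termHit M T s k else 0 := ENNReal.tsum_comm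
    _ = ∑' k : ℕ, ((k : ℝ≥0∞) + 1) * termHit M T s k := by
        refine tsum_congr fun k => ?_
        rw [tsum_eq_sum (s := Finset.range (k + 1))
          (fun n hn => if_neg (by simp at hn; omega))]
        rw [Finset.sum_congr rfl (fun n hn => if_pos (by simp at hn; omega))]
        rw [Finset.sum_const, Finset.card_range, nsmul_eq_mul]
        push_cast
        ring
    _ = meanEpiLen M T s := rfl

lemma epiStep_congr {v s : σ} (h : M v = M s) :
    ∀ n, epiStep M T v n = epiStep M T s n
  | 0 => by funext u; rw [epiStep_zero, epiStep_zero, h]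
  | n + 1 => by
      funext u
      rw [epiStep_succ, epiStep_succ, epiStep_congr h n]

lemma epiStep_mul_le (s v : σ) (hv : v ∉ T) (k : ℕ) :
    ∀ m u, epiStep M T s k v * epiStep M T v m u ≤ epiStep M T s (k + 1 + m) u
  | 0, u => by
      have h : (if v ∈ T then 0 else epiStep M T s k v * M v u)
          ≤ ∑' w, if w ∈ T then 0 else epiStep M T s k w * M w u := ENNReal.le_tsum v
      rw [if_neg hv] at h
      exact h.trans_eq (epiStep_succ M T s k u).symm
  | m + 1, u => by
      have hrec : epiStep M T s (k + 1 + (m + 1)) u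
          = ∑' w, if w ∈ T then 0 else epiStep M T s (k + 1 + m) w * M w u := rfl
      rw [hrec, epiStep_succ, ← ENNReal.tsum_mul_left]
      refine ENNReal.tsum_le_tsum fun w => ?_
      split_ifs with h
      · simp
      · rw [← mul_assoc]
        exact mul_le_mul_left (epiStep_mul_le s v hv k m w) _

lemma survive_mul_le (s v : σ) (hv : v ∉ T) (k m : ℕ) :
    epiStep M T s k v * survive M T v m ≤ survive M T s (k + 1 + m) := by
  unfold survive
  rw [← ENNReal.tsum_mul_left]
  exact ENNReal.tsum_le_tsum fun u => epiStep_mul_le M T s v hv k m u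

lemma reach_cases (s0 : σ) (hker : ∀ w ∈ T, M w = M s0) {s' : σ} (hs' : s' ∈ T) :
    ∀ t v, stepProb M t s' v ≠ 0 → v ∈ T ∨ ∃ k, epiStep M T s0 k v ≠ 0
  | 0, v, h => by
      left
      have : s' = v := by
        by_contra hne
        exact h (if_neg hne)
      exact this ▸ hs'
  | t + 1, v, h => by
      have h' : ∑' w, stepProb M t s' w * M w v ≠ 0 := h
      obtain ⟨w, hw⟩ : ∃ w, stepProb M t s' w * M w v ≠ 0 := by
        by_contra hc
        push_neg at hc
        exact h' (ENNReal.tsum_eq_zero.mpr hc)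
      have hw1 : stepProb M t s' w ≠ 0 := fun h0 => hw (by rw [h0, zero_mul])
      have hw2 : M w v ≠ 0 := fun h0 => hw (by rw [h0, mul_zero])
      by_cases hwT : w ∈ T
      · right
        refine ⟨0, ?_⟩
        rw [epiStep_zero, ← hker w hwT]
        exact hw2
      · rcases reach_cases s0 hker hs' t w hw1 with h1 | ⟨k, hk⟩
        · exact absurd h1 hwT
        · right
          refine ⟨k + 1, ?_⟩
          have hle : (if w ∈ T then 0 else epiStep M T s0 k w * M w v)
              ≤ epiStep M T s0 (k + 1) v := by
            rw [epiStep_succ]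
            exact ENNReal.le_tsum w
          rw [if_neg hwT] at hle
          intro h0
          exact mul_ne_zero hk hw2 (le_antisymm (h0 ▸ hle) zero_le)

lemma tendsto_survive_of_reach (hM : ∀ v, ∑' u, M v u = 1) (s0 : σ)
    (hker : ∀ w ∈ T, M w = M s0) (hterm : ∑' t, termHit M T s0 t = 1)
    (v : σ) (h : v ∈ T ∨ ∃ k, epiStep M T s0 k v ≠ 0) :
    Tendsto (survive M T v) atTop (𝓝 0) := by
  have hbase := tendsto_survive_zero M T hM s0 hterm
  by_cases hvT : v ∈ T
  · have heq : survive M T v = survive M T s0 := funext fun n => by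
      unfold survive
      rw [epiStep_congr M T (hker v hvT) n]
    rw [heq]; exact hbase
  · rcases h with h | ⟨k, hk⟩
    · exact absurd h hvT
    set c := epiStep M T s0 k v with hc
    have hcne : c ≠ ∞ := epiStep_ne_top M T hM s0 k v
    have hupper : ∀ m, survive M T v m ≤ c⁻¹ * survive M T s0 (k + 1 + m) := fun m => by
      have h1 : c * survive M T v m ≤ survive M T s0 (k + 1 + m) :=
        survive_mul_le M T s0 v hvT k m
      calc survive M T v m = c⁻¹ * (c * survive M T v m) := by
            rw [← mul_assoc, ENNReal.inv_mul_cancel hk hcne, one_mul]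
        _ ≤ c⁻¹ * survive M T s0 (k + 1 + m) := mul_le_mul_right h1 _
    have hcomp : Tendsto (fun m => survive M T s0 (k + 1 + m)) atTop (𝓝 0) := by
      have h2 := hbase.comp (tendsto_add_atTop_nat (k + 1))
      simpa [Function.comp_def, add_comm] using h2
    have hmul : Tendsto (fun m => c⁻¹ * survive M T s0 (k + 1 + m)) atTop (𝓝 0) := by
      simpa using ENNReal.Tendsto.const_mul hcomp (Or.inr (ENNReal.inv_ne_top.mpr hk))
    exact tendsto_of_tendsto_of_tendsto_of_le_of_le tendsto_const_nhds hmul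
      (fun m => zero_le) hupper

/-- The part of the stationary law where the chain has not yet met the terminal set. -/
def rhoStep (ρ : σ → ℝ≥0∞) : ℕ → σ → ℝ≥0∞
  | 0 => ρ
  | n + 1 => fun u => ∑' v, if v ∈ T then 0 else rhoStep ρ n v * M v u

variable (ρ : σ → ℝ≥0∞)

lemma rhoStep_zero : rhoStep M T ρ 0 = ρ := rfl

lemma rhoStep_succ (n : ℕ) (u : σ) :
    rhoStep M T ρ (n + 1) u = ∑' v, if v ∈ T then 0 else rhoStep M T ρ n v * M v u := rfl

lemma rhoStep_decomp (s0 : σ) (hker : ∀ w ∈ T, M w = M s0)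
    (hρ : ∀ u, ρ u = ∑' v, ρ v * M v u) :
    ∀ n u, rhoStep M T ρ n u
      = (∑' v, if v ∈ T then ρ v else 0) * epiStep M T s0 n u + rhoStep M T ρ (n + 1) u := by
  set ρT := ∑' v, if v ∈ T then ρ v else 0 with hρT
  intro n
  induction n with
  | zero =>
      intro u
      rw [rhoStep_zero, rhoStep_succ, epiStep_zero, hρ u]
      have hpt : ∀ v, ρ v * M v u
          = (if v ∈ T then ρ v * M s0 u else 0) + (if v ∈ T then 0 else ρ v * M v u) := by
        intro v
        split_ifs with h
        · rw [hker v h, add_zero]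
        · rw [zero_add]
      rw [tsum_congr hpt, ENNReal.tsum_add]
      congr 1
      rw [hρT, ← ENNReal.tsum_mul_right]
      exact tsum_congr fun v => by split_ifs <;> simp
  | succ n ih =>
      intro u
      rw [rhoStep_succ, rhoStep_succ, epiStep_succ, ← ENNReal.tsum_mul_left,
        ← ENNReal.tsum_add]
      refine tsum_congr fun v => ?_
      split_ifs with h
      · simp
      · rw [ih v, add_mul, mul_assoc]

lemma rho_partial (s0 : σ) (hker : ∀ w ∈ T, M w = M s0)
    (hρ : ∀ u, ρ u = ∑' v, ρ v * M v u) :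
    ∀ n u, ρ u = (∑' v, if v ∈ T then ρ v else 0)
      * ∑ t ∈ Finset.range n, epiStep M T s0 t u + rhoStep M T ρ n u := by
  intro n
  induction n with
  | zero => intro u; simp [rhoStep_zero]
  | succ n ih =>
      intro u
      rw [ih u, rhoStep_decomp M T ρ s0 hker hρ n u, Finset.sum_range_succ, mul_add]
      ring

lemma rhoStep_eq : ∀ n u, rhoStep M T ρ (n + 1) u
    = ∑' v, if v ∈ T then 0 else ρ v * epiStep M T v n u
  | 0, u => by
      rw [rhoStep_succ]
      exact tsum_congr fun v => by rw [rhoStep_zero, epiStep_zero]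
  | n + 1, u => by
      rw [rhoStep_succ]
      calc ∑' w, (if w ∈ T then 0 else rhoStep M T ρ (n + 1) w * M w u)
          = ∑' w, ∑' v, (if w ∈ T then 0
              else (if v ∈ T then 0 else ρ v * epiStep M T v n w) * M w u) := by
            refine tsum_congr fun w => ?_
            split_ifs with h
            · simp
            · rw [rhoStep_eq n w, ENNReal.tsum_mul_right]
        _ = ∑' v, ∑' w, (if w ∈ T then 0
              else (if v ∈ T then 0 else ρ v * epiStep M T v n w) * M w u) :=
            ENNReal.tsum_comm
        _ = ∑' v, (if v ∈ T then 0 else ρ v * epiStep M T v (n + 1) u) := by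
            refine tsum_congr fun v => ?_
            by_cases hv : v ∈ T
            · simp [hv]
            · simp only [if_neg hv]
              rw [epiStep_succ, ← ENNReal.tsum_mul_left]
              refine tsum_congr fun w => ?_
              split_ifs with hw
              · simp
              · ring

lemma rhoStep_tendsto [Countable σ] (hM : ∀ v, ∑' u, M v u = 1) (s0 : σ)
    (hker : ∀ w ∈ T, M w = M s0) (hterm : ∑' t, termHit M T s0 t = 1)
    (hρ1 : ∑' v, ρ v = 1)
    (hsupp : ∀ v, ρ v ≠ 0 → (v ∈ T ∨ ∃ k, epiStep M T s0 k v ≠ 0)) (u : σ) :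
    Tendsto (fun n => rhoStep M T ρ (n + 1) u) atTop (𝓝 0) := by
  classical
  letI : MeasurableSpace σ := ⊤
  haveI : MeasurableSingletonClass σ := ⟨fun _ => trivial⟩
  set F : ℕ → σ → ℝ≥0∞ := fun n v => if v ∈ T then 0 else ρ v * epiStep M T v n u with hF
  have hrw : ∀ n, rhoStep M T ρ (n + 1) u = ∫⁻ v, F n v ∂(MeasureTheory.Measure.count) := by
    intro n
    rw [MeasureTheory.lintegral_count, rhoStep_eq M T ρ n u]
  have hbound : ∀ n, F n ≤ᵐ[MeasureTheory.Measure.count] ρ := by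
    intro n
    refine Filter.Eventually.of_forall fun v => ?_
    simp only [hF]
    split_ifs with h
    · exact zero_le
    · calc ρ v * epiStep M T v n u ≤ ρ v * 1 :=
          mul_le_mul_right ((epiStep_le_survive M T v n u).trans
            (survive_le_one M T hM v n)) _
        _ = ρ v := mul_one _
  have hfin : ∫⁻ v, ρ v ∂MeasureTheory.Measure.count ≠ ∞ := by
    rw [MeasureTheory.lintegral_count, hρ1]
    exact ENNReal.one_ne_top
  have hlim : ∀ᵐ v ∂MeasureTheory.Measure.count,
      Tendsto (fun n => F n v) atTop (𝓝 ((fun _ : σ => (0 : ℝ≥0∞)) v)) := by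
    refine Filter.Eventually.of_forall fun v => ?_
    simp only [hF]
    by_cases hv : v ∈ T
    · simp only [if_pos hv]; exact tendsto_const_nhds
    · simp only [if_neg hv]
      by_cases hv0 : ρ v = 0
      · simp only [hv0, zero_mul]; exact tendsto_const_nhds
      · have hs := tendsto_survive_of_reach M T hM s0 hker hterm v (hsupp v hv0)
        have hρvne : ρ v ≠ ∞ :=
          ne_top_of_le_ne_top ENNReal.one_ne_top ((ENNReal.le_tsum v).trans_eq hρ1)
        have hmul : Tendsto (fun n => ρ v * survive M T v n) atTop (𝓝 0) := by
          simpa using ENNReal.Tendsto.const_mul hs (Or.inr hρvne)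
        exact tendsto_of_tendsto_of_tendsto_of_le_of_le tendsto_const_nhds hmul
          (fun n => zero_le)
          (fun n => mul_le_mul_right (epiStep_le_survive M T v n u) _)
  have hDCT := MeasureTheory.tendsto_lintegral_of_dominated_convergence
    (μ := MeasureTheory.Measure.count) (F := F) (f := fun _ => 0) ρ
    (fun n => measurable_of_countable _) hbound hfin hlim
  simp only [MeasureTheory.lintegral_zero] at hDCT
  simpa [hrw] using hDCT

end EpiAux

/-- Episode-wise performance equals steady-state performance times the expected episode
length: E[∑_{t=1}^T R(s_t)] = E_ρ[R] · E[T]. -/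
theorem stmt_12 {S A : Type} [Countable S] [Countable A] (E : ELP S A)
    (π : S → A → ℝ≥0∞) (hπ : ∀ s, ∑' a, π s a = 1)
    (sT : S) (hsT : 0 < E.ρ0 sT)
    (hRb : ∃ C, ∀ s, |E.R s| ≤ C)
    (ρ : S → ℝ≥0∞) (hρ1 : ∑' s, ρ s = 1)
    (hρ : ∀ s', ρ s' = ∑' s, ρ s * chainOf E.P π s s')
    (hρsupp : ∀ s, s ∉ ReachSet (chainOf E.P π) E.ρ0 → ρ s = 0) :
    ∑' t : ℕ, ∑' u, (epiStep (chainOf E.P π) (TermSet E.P E.ρ0) sT t u).toReal * E.R u =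
      (∑' s, (ρ s).toReal * E.R s) *
        (meanEpiLen (chainOf E.P π) (TermSet E.P E.ρ0) sT).toReal := by
  classical
  obtain ⟨C, hC⟩ := hRb
  set M : S → S → ℝ≥0∞ := chainOf E.P π with hM_def
  set T : Set S := TermSet E.P E.ρ0 with hT_def
  -- A is nonempty
  have hA : Nonempty A := by
    by_contra h
    rw [not_nonempty_iff] at h
    have h1 := hπ sT
    rw [tsum_empty] at h1
    exact zero_ne_one h1
  obtain ⟨a₀⟩ := hA
  have hsT_mem : sT ∈ T := fun s₀ h a a' => E.homog sT s₀ hsT h a a'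
  -- rows of M sum to one
  have hMrow : ∀ v, ∑' u, M v u = 1 := by
    intro v
    rw [hM_def]
    unfold chainOf
    rw [ENNReal.tsum_comm]
    calc ∑' a, ∑' u, π v a * E.P v a u = ∑' a, π v a * ∑' u, E.P v a u :=
          tsum_congr fun a => ENNReal.tsum_mul_left
      _ = ∑' (a : A), π v a := by
          refine tsum_congr fun a => ?_
          rw [E.P_sum v a, mul_one]
      _ = 1 := hπ v
  -- all terminal states have the same kernel as sT
  have hker : ∀ w ∈ T, M w = M sT := by
    intro w hw
    funext u
    have hw' : ∀ a, E.P w a = E.P sT a₀ := fun a => hw sT hsT a a₀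
    have hsT' : ∀ a, E.P sT a = E.P sT a₀ := fun a => hsT_mem sT hsT a a₀
    calc M w u = ∑' a, π w a * E.P sT a₀ u :=
          tsum_congr fun a => by rw [congrFun (hw' a) u]
      _ = (∑' a, π w a) * E.P sT a₀ u := ENNReal.tsum_mul_right
      _ = E.P sT a₀ u := by rw [hπ w, one_mul]
      _ = (∑' a, π sT a) * E.P sT a₀ u := by rw [hπ sT, one_mul]
      _ = ∑' a, π sT a * E.P sT a₀ u := ENNReal.tsum_mul_right.symm
      _ = M sT u := tsum_congr fun a => by rw [congrFun (hsT' a) u]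
  obtain ⟨hterm, hLfin⟩ := E.epi_fin π hπ sT hsT_mem
  -- support of ρ consists of reachable states
  have hsupp' : ∀ v, ρ v ≠ 0 → (v ∈ T ∨ ∃ k, epiStep M T sT k v ≠ 0) := by
    intro v hv
    have hvR : v ∈ ReachSet M E.ρ0 := by
      by_contra h
      exact hv (hρsupp v h)
    obtain ⟨t, ht⟩ := hvR
    obtain ⟨s₀, hs₀⟩ : ∃ s₀, E.ρ0 s₀ * stepProb M t s₀ v ≠ 0 := by
      by_contra hc
      push_neg at hc
      rw [ENNReal.tsum_eq_zero.mpr hc] at ht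
      exact lt_irrefl 0 ht
    have h1 : E.ρ0 s₀ ≠ 0 := fun h0 => hs₀ (by rw [h0, zero_mul])
    have h2 : stepProb M t s₀ v ≠ 0 := fun h0 => hs₀ (by rw [h0, mul_zero])
    have hs₀T : s₀ ∈ T := fun s₀' h' a a' =>
      E.homog s₀ s₀' (pos_iff_ne_zero.mpr h1) h' a a'
    exact reach_cases M T sT hker hs₀T t v h2
  -- master identity : ρ = ρT • occupation measure
  set ρT := ∑' v, if v ∈ T then ρ v else 0 with hρT_def
  have hρT_le : ρT ≤ 1 := by
    rw [← hρ1]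
    exact ENNReal.tsum_le_tsum fun v => by split_ifs <;> simp
  have hρT_ne_top : ρT ≠ ∞ := ne_top_of_le_ne_top ENNReal.one_ne_top hρT_le
  have hmaster : ∀ u, ρ u = ρT * ∑' t, epiStep M T sT t u := by
    intro u
    have h3 := rho_partial M T ρ sT hker (fun u => hρ u)
    have hlim1 : Tendsto (fun n => ρT * ∑ t ∈ Finset.range (n + 1), epiStep M T sT t u
        + rhoStep M T ρ (n + 1) u) atTop (𝓝 (ρT * ∑' t, epiStep M T sT t u + 0)) := by
      refine Tendsto.add ?_
        (rhoStep_tendsto M T ρ hMrow sT hker hterm hρ1 hsupp' u)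
      refine ENNReal.Tendsto.const_mul ?_ (Or.inr hρT_ne_top)
      have h4 := (ENNReal.tendsto_nat_tsum (fun t => epiStep M T sT t u)).comp
        (tendsto_add_atTop_nat 1)
      simpa [Function.comp_def] using h4
    have hconst : Tendsto (fun _ : ℕ => ρ u) atTop (𝓝 (ρ u)) := tendsto_const_nhds
    rw [show (fun _ : ℕ => ρ u)
        = (fun n => ρT * ∑ t ∈ Finset.range (n + 1), epiStep M T sT t u
            + rhoStep M T ρ (n + 1) u) from funext fun n => h3 (n + 1) u] at hconst
    have h5 := tendsto_nhds_unique hconst hlim1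
    rw [h5, add_zero]
  -- total-mass identity : ρT * meanEpiLen = 1
  set L := meanEpiLen M T sT with hLdef
  have hL_ne_top : L ≠ ∞ := hLfin.ne
  have hmass : ρT * L = 1 := by
    calc ρT * L = ρT * ∑' n, survive M T sT n := by
          rw [tsum_survive M T hMrow sT hterm]
      _ = ρT * ∑' n, ∑' u, epiStep M T sT n u := rfl
      _ = ρT * ∑' u, ∑' n, epiStep M T sT n u := by rw [ENNReal.tsum_comm]
      _ = ∑' u, ρT * ∑' n, epiStep M T sT n u := ENNReal.tsum_mul_left.symm
      _ = ∑' u, ρ u := tsum_congr fun u => (hmaster u).symm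
      _ = 1 := hρ1
  -- occupation measure equals L • ρ
  have hmu : ∀ u, (∑' t, epiStep M T sT t u) = L * ρ u := by
    intro u
    calc (∑' t, epiStep M T sT t u) = 1 * ∑' t, epiStep M T sT t u := (one_mul _).symm
      _ = (L * ρT) * ∑' t, epiStep M T sT t u := by rw [mul_comm L ρT, hmass]
      _ = L * (ρT * ∑' t, epiStep M T sT t u) := mul_assoc _ _ _
      _ = L * ρ u := by rw [← hmaster u]
  -- real-valued assembly
  have hepi_ne_top : ∀ t u, epiStep M T sT t u ≠ ∞ := fun t u =>
    epiStep_ne_top M T hMrow sT t u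
  have hg : ∑' p : ℕ × S, epiStep M T sT p.1 p.2 = L := by
    rw [ENNReal.tsum_prod, hLdef, ← tsum_survive M T hMrow sT hterm]
    rfl
  have hgsum : Summable (fun p : ℕ × S => (epiStep M T sT p.1 p.2).toReal) :=
    ENNReal.summable_toReal (by rw [hg]; exact hL_ne_top)
  have hfsum : Summable (fun p : ℕ × S => (epiStep M T sT p.1 p.2).toReal * E.R p.2) := by
    apply Summable.of_abs
    refine Summable.of_nonneg_of_le (fun p => abs_nonneg _) (fun p => ?_)
      (hgsum.mul_right C)
    rw [abs_mul, abs_of_nonneg ENNReal.toReal_nonneg]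
    exact mul_le_mul_of_nonneg_left (hC p.2) ENNReal.toReal_nonneg
  have hswap := Summable.tsum_comm (f := fun (t : ℕ) (u : S) =>
    (epiStep M T sT t u).toReal * E.R u) hfsum
  rw [← hswap]
  calc ∑' u, ∑' t, (epiStep M T sT t u).toReal * E.R u
      = ∑' u, ((ρ u).toReal * E.R u) * L.toReal := by
        refine tsum_congr fun u => ?_
        rw [tsum_mul_right, ← ENNReal.tsum_toReal_eq (fun t => hepi_ne_top t u),
          hmu u, ENNReal.toReal_mul]
        ring
    _ = (∑' s, (ρ s).toReal * E.R s) * L.toReal := tsum_mul_right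
end
end
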